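/- arXiv:1908.04957 — 7 statements merged into one kernel-verified Lean document; each statement's English description precedes it below -/
import Mathlib

section
/- Let q ≥ 1 and p ≥ 1, and let A ∈ ℝ^{p×q} satisfy AAᵀ = Σ = Σ_{j=1}^q λ_j v_j v_jᵀ, where v₁,…,v_q ∈ ℝ^p are orthonormal and λ₁ ≥ λ₂ ≥ ⋯ ≥ λ_q > 0 (so A has rank q). Let g = (g₁,…,g_q) be a standard Gaussian vector in ℝ^q. Then the matrix K := E[ A g gᵀ Aᵀ / ‖Ag‖² ] is well defined (Ag ≠ 0 almost surely and the integrand is bounded) and K = Σ_{j=1}^q θ_j v_j v_jᵀ, where θ_j := E[ λ_j g_j² / (λ₁g₁² + ⋯ + λ_q g_q²) ]. -/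
open MeasureTheory ProbabilityTheory Matrix
open scoped ENNReal

/-- Law of a standard Gaussian vector in `ℝ^d`: i.i.d. `N(0,1)` coordinates. -/
noncomputable def stdGaussian (d : ℕ) : Measure (Fin d → ℝ) :=
  Measure.pi fun _ => gaussianReal 0 1

section Aux

lemma map_withDensity_aux {α β : Type*} [MeasurableSpace α] [MeasurableSpace β]
    (m : Measure α) (T : α → β) (hT : Measurable T) (f : β → ℝ≥0∞) (hf : Measurable f) :
    (m.withDensity (fun x => f (T x))).map T = (m.map T).withDensity f := by
  ext s hs
  rw [Measure.map_apply hT hs, withDensity_apply _ hs, withDensity_apply _ (hT hs),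
    Measure.restrict_map hT hs, lintegral_map hf hT]

lemma stdGaussian_eq_withDensity (q : ℕ) :
    stdGaussian q = (volume : Measure (Fin q → ℝ)).withDensity
      (fun x => ENNReal.ofReal (∏ j, gaussianPDFReal 0 1 (x j))) := by
  refine Measure.pi_eq fun s hs => ?_
  have hmb : MeasurableSet (Set.pi Set.univ s) := MeasurableSet.univ_pi hs
  rw [withDensity_apply _ hmb, ← lintegral_indicator hmb]
  have hind : ∀ x : Fin q → ℝ, (Set.pi Set.univ s).indicator
      (fun x => ENNReal.ofReal (∏ j, gaussianPDFReal 0 1 (x j))) x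
      = ENNReal.ofReal (∏ j, (s j).indicator (gaussianPDFReal 0 1) (x j)) := by
    intro x
    by_cases hx : x ∈ Set.pi Set.univ s
    · rw [Set.indicator_of_mem hx]
      congr 1
      exact Finset.prod_congr rfl fun j _ =>
        (Set.indicator_of_mem (hx j (Set.mem_univ j)) _).symm
    · rw [Set.indicator_of_notMem hx]
      have : ∃ j, x j ∉ s j := by simpa [Set.mem_pi] using hx
      obtain ⟨j, hj⟩ := this
      rw [Finset.prod_eq_zero (Finset.mem_univ j) (Set.indicator_of_notMem hj _),
        ENNReal.ofReal_zero]
  simp_rw [hind]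
  rw [volume_pi]
  have hint : ∀ j : Fin q, Integrable ((s j).indicator (gaussianPDFReal 0 1)) :=
    fun j => (integrable_gaussianPDFReal 0 1).indicator (hs j)
  rw [← ofReal_integral_eq_lintegral_ofReal (Integrable.fintype_prod hint)
    (ae_of_all _ fun x => Finset.prod_nonneg fun j _ =>
      Set.indicator_nonneg (fun y _ => gaussianPDFReal_nonneg 0 1 y) _),
    integral_fintype_prod_eq_prod
      (f := fun (j : Fin q) => (s j).indicator (gaussianPDFReal 0 1)),
    ENNReal.ofReal_prod_of_nonneg (fun j _ => integral_nonneg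
      (Set.indicator_nonneg (fun y _ => gaussianPDFReal_nonneg 0 1 y)))]
  refine Finset.prod_congr rfl fun j _ => ?_
  rw [MeasureTheory.integral_indicator (hs j),
    gaussianReal_apply_eq_integral 0 one_ne_zero (s j)]

lemma dot_self_mulVec {m n : Type*} [Fintype m] [Fintype n]
    (A : Matrix m n ℝ) (x : n → ℝ) :
    ∑ k, (A *ᵥ x) k ^ 2 = x ⬝ᵥ ((Aᵀ * A) *ᵥ x) := by
  rw [← Matrix.mulVec_mulVec, Matrix.dotProduct_mulVec x, Matrix.vecMul_transpose]
  simp [dotProduct, sq]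

lemma sum_sq_mulVec {q : ℕ} {M : Matrix (Fin q) (Fin q) ℝ} (hM : Mᵀ * M = 1)
    (x : Fin q → ℝ) : ∑ j, (M *ᵥ x) j ^ 2 = ∑ j, x j ^ 2 := by
  rw [dot_self_mulVec, hM, Matrix.one_mulVec]
  simp [dotProduct, sq]

lemma prod_gaussianPDFReal_eq {q : ℕ} (z : Fin q → ℝ) :
    ∏ j, gaussianPDFReal 0 1 (z j)
      = (Real.sqrt (2 * Real.pi))⁻¹ ^ q * Real.exp (-(∑ j, z j ^ 2) / 2) := by
  simp only [gaussianPDFReal, NNReal.coe_one, mul_one, sub_zero]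
  rw [Finset.prod_mul_distrib, Finset.prod_const, Finset.card_univ, Fintype.card_fin,
    ← Real.exp_sum]
  congr 1
  rw [← Finset.sum_div, Finset.sum_neg_distrib]

set_option maxHeartbeats 1000000 in
lemma stdGaussian_map_of_orthogonal {q : ℕ} {M : Matrix (Fin q) (Fin q) ℝ}
    (hM : Mᵀ * M = 1) :
    (stdGaussian q).map (fun x => M *ᵥ x) = stdGaussian q := by
  have hT : (fun x : Fin q → ℝ => M *ᵥ x) = ⇑(Matrix.toLin' M) :=
    funext fun x => (Matrix.toLin'_apply M x).symm
  have hmeas : Measurable (fun x : Fin q → ℝ => M *ᵥ x) := by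
    rw [hT]; exact (LinearMap.continuous_of_finiteDimensional _).measurable
  have hdet : M.det * M.det = 1 := by
    have := congrArg Matrix.det hM
    rwa [Matrix.det_mul, Matrix.det_transpose, Matrix.det_one] at this
  have habs : |(LinearMap.det (Matrix.toLin' M))⁻¹| = 1 := by
    rw [LinearMap.det_toLin']
    rcases mul_self_eq_one_iff.mp hdet with h | h <;> rw [h] <;> norm_num
  have hdetne : LinearMap.det (Matrix.toLin' M) ≠ 0 := by
    rw [LinearMap.det_toLin']
    rcases mul_self_eq_one_iff.mp hdet with h | h <;> rw [h] <;> norm_num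
  have hvol : Measure.map (fun x : Fin q → ℝ => M *ᵥ x) volume = volume := by
    rw [hT, Real.map_linearMap_volume_pi_eq_smul_volume_pi hdetne, habs]
    simp
  have hFmeas : Measurable (fun x : Fin q → ℝ =>
      ENNReal.ofReal (∏ j, gaussianPDFReal 0 1 (x j))) :=
    ENNReal.measurable_ofReal.comp <| Finset.measurable_prod _ fun j _ =>
      (measurable_gaussianPDFReal 0 1).comp (measurable_pi_apply j)
  have hFinv : ∀ x : Fin q → ℝ,
      ENNReal.ofReal (∏ j, gaussianPDFReal 0 1 ((M *ᵥ x) j))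
        = ENNReal.ofReal (∏ j, gaussianPDFReal 0 1 (x j)) := by
    intro x
    rw [prod_gaussianPDFReal_eq, prod_gaussianPDFReal_eq, sum_sq_mulVec hM]
  have key := map_withDensity_aux (volume : Measure (Fin q → ℝ)) (fun x => M *ᵥ x) hmeas
    (fun x => ENNReal.ofReal (∏ j, gaussianPDFReal 0 1 (x j))) hFmeas
  rw [hvol] at key
  rw [stdGaussian_eq_withDensity]
  refine Eq.trans ?_ key
  exact congrArg (Measure.map _) (congrArg _ (funext fun x => (hFinv x).symm))

lemma matrix_decomp (p q : ℕ)
    (A : Matrix (Fin p) (Fin q) ℝ)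
    (v : Fin q → Fin p → ℝ) (lam : Fin q → ℝ)
    (hortho : ∀ j k, (∑ i, v j i * v k i) = if j = k then (1 : ℝ) else 0)
    (hpos : ∀ j, 0 < lam j)
    (hspec : A * Aᵀ = ∑ j, lam j • Matrix.vecMulVec (v j) (v j)) :
    ∃ O : Matrix (Fin q) (Fin q) ℝ, Oᵀ * O = 1 ∧
      (∀ x : Fin q → ℝ, ∀ i, (A *ᵥ x) i = ∑ j, v j i * (Real.sqrt (lam j) * (O *ᵥ x) j)) ∧
      (∀ x : Fin q → ℝ, ∑ k, (A *ᵥ x) k ^ 2 = ∑ j, lam j * (O *ᵥ x) j ^ 2) ∧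
      (∀ x : Fin q → ℝ, A *ᵥ x = 0 → x = 0) := by
  classical
  let U : Matrix (Fin p) (Fin q) ℝ := Matrix.of (fun i j => v j i)
  let D : Matrix (Fin q) (Fin q) ℝ := Matrix.diagonal lam
  let sq : Matrix (Fin q) (Fin q) ℝ := Matrix.diagonal (fun j => Real.sqrt (lam j))
  let E : Matrix (Fin q) (Fin q) ℝ := Matrix.diagonal (fun j => (Real.sqrt (lam j))⁻¹)
  have hUtU : Uᵀ * U = 1 := by
    ext j k
    simp only [Matrix.mul_apply, Matrix.transpose_apply, Matrix.one_apply, U, Matrix.of_apply]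
    rw [← hortho j k]
  have hcanp : ∀ Z : Matrix (Fin q) (Fin p) ℝ, Uᵀ * (U * Z) = Z := fun Z => by
    rw [← Matrix.mul_assoc, hUtU, Matrix.one_mul]
  have hcanq : ∀ Z : Matrix (Fin q) (Fin q) ℝ, Uᵀ * (U * Z) = Z := fun Z => by
    rw [← Matrix.mul_assoc, hUtU, Matrix.one_mul]
  have hsne : ∀ j, Real.sqrt (lam j) ≠ 0 := fun j =>
    ne_of_gt (Real.sqrt_pos.mpr (hpos j))
  have hss : ∀ j, Real.sqrt (lam j) * Real.sqrt (lam j) = lam j := fun j =>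
    Real.mul_self_sqrt (hpos j).le
  have hDt : Dᵀ = D := Matrix.diagonal_transpose lam
  have hEt : Eᵀ = E := Matrix.diagonal_transpose _
  have hAAt : A * Aᵀ = U * (D * Uᵀ) := by
    rw [hspec]
    ext i i'
    rw [Matrix.mul_apply]
    simp only [Matrix.sum_apply, Matrix.smul_apply, Matrix.vecMulVec_apply, smul_eq_mul,
      D, Matrix.diagonal_mul, Matrix.of_apply, Matrix.transpose_apply, U]
    exact Finset.sum_congr rfl fun j _ => by ring
  have hC : U * (Uᵀ * A) = A := by
    have h1 : (U * (Uᵀ * A)) * Aᵀ = U * (D * Uᵀ) := by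
      calc (U * (Uᵀ * A)) * Aᵀ = U * (Uᵀ * (A * Aᵀ)) := by
            rw [Matrix.mul_assoc, Matrix.mul_assoc]
      _ = U * (Uᵀ * (U * (D * Uᵀ))) := by rw [hAAt]
      _ = U * (D * Uᵀ) := by rw [hcanp]
    have hCt : (U * (Uᵀ * A))ᵀ = Aᵀ * (U * Uᵀ) := by
      rw [Matrix.transpose_mul, Matrix.transpose_mul, Matrix.transpose_transpose,
        Matrix.mul_assoc]
    have habsorb : (U * (D * Uᵀ)) * (U * Uᵀ) = U * (D * Uᵀ) := by
      rw [Matrix.mul_assoc, Matrix.mul_assoc D, hcanp]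
    have h2 : A * (U * (Uᵀ * A))ᵀ = U * (D * Uᵀ) := by
      rw [hCt, ← Matrix.mul_assoc, hAAt, habsorb]
    have h3 : (U * (Uᵀ * A)) * (U * (Uᵀ * A))ᵀ = U * (D * Uᵀ) := by
      rw [hCt, ← Matrix.mul_assoc, h1, habsorb]
    have hsub : (U * (Uᵀ * A) - A) * (U * (Uᵀ * A) - A)ᵀ = 0 := by
      rw [Matrix.transpose_sub, Matrix.sub_mul, Matrix.mul_sub, Matrix.mul_sub,
        h3, h2, h1, hAAt]
      simp
    have hz : U * (Uᵀ * A) - A = 0 := by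
      rw [← Matrix.conjTranspose_eq_transpose_of_trivial] at hsub
      exact Matrix.self_mul_conjTranspose_eq_zero.mp hsub
    exact sub_eq_zero.mp hz
  have hBBt : (Uᵀ * A) * (Uᵀ * A)ᵀ = D := by
    rw [Matrix.transpose_mul, Matrix.transpose_transpose]
    calc (Uᵀ * A) * (Aᵀ * U) = Uᵀ * ((A * Aᵀ) * U) := by
          rw [Matrix.mul_assoc, ← Matrix.mul_assoc A]
    _ = Uᵀ * ((U * (D * Uᵀ)) * U) := by rw [hAAt]
    _ = Uᵀ * (U * ((D * Uᵀ) * U)) := by rw [Matrix.mul_assoc]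
    _ = (D * Uᵀ) * U := hcanq _
    _ = D := by rw [Matrix.mul_assoc, hUtU, Matrix.mul_one]
  have hOOt : (E * (Uᵀ * A)) * (E * (Uᵀ * A))ᵀ = 1 := by
    rw [Matrix.transpose_mul, hEt]
    calc (E * (Uᵀ * A)) * ((Uᵀ * A)ᵀ * E)
        = E * (((Uᵀ * A) * (Uᵀ * A)ᵀ) * E) := by
          rw [Matrix.mul_assoc, ← Matrix.mul_assoc (Uᵀ * A)]
    _ = E * (D * E) := by rw [hBBt]
    _ = 1 := by
        show Matrix.diagonal _ * (Matrix.diagonal lam * Matrix.diagonal _) = 1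
        rw [Matrix.diagonal_mul_diagonal, Matrix.diagonal_mul_diagonal,
          show (fun j => (Real.sqrt (lam j))⁻¹ * (lam j * (Real.sqrt (lam j))⁻¹))
            = fun _ => (1:ℝ) from funext fun j => by
            rw [show (Real.sqrt (lam j))⁻¹ * (lam j * (Real.sqrt (lam j))⁻¹)
                = lam j * (Real.sqrt (lam j) * Real.sqrt (lam j))⁻¹ from by
              rw [mul_inv]; ring, hss j, mul_inv_cancel₀ (ne_of_gt (hpos j))]]
        exact Matrix.diagonal_one
  have hOtO : (E * (Uᵀ * A))ᵀ * (E * (Uᵀ * A)) = 1 := mul_eq_one_comm.mp hOOt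
  have hsqE : sq * E = 1 := by
    show Matrix.diagonal _ * Matrix.diagonal _ = 1
    rw [Matrix.diagonal_mul_diagonal,
      show (fun j => Real.sqrt (lam j) * (Real.sqrt (lam j))⁻¹) = fun _ => (1:ℝ) from
        funext fun j => mul_inv_cancel₀ (hsne j)]
    exact Matrix.diagonal_one
  have hA : U * (sq * (E * (Uᵀ * A))) = A := by
    rw [← Matrix.mul_assoc sq, hsqE, Matrix.one_mul, hC]
  have hsqsq : sq * sq = D := by
    show Matrix.diagonal _ * Matrix.diagonal _ = Matrix.diagonal lam
    rw [Matrix.diagonal_mul_diagonal]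
    exact congrArg Matrix.diagonal (funext fun j => hss j)
  have hAtA : Aᵀ * A = (E * (Uᵀ * A))ᵀ * (D * (E * (Uᵀ * A))) := by
    conv_lhs => rw [← hA]
    rw [Matrix.transpose_mul]
    calc (sq * (E * (Uᵀ * A)))ᵀ * Uᵀ * (U * (sq * (E * (Uᵀ * A))))
        = (sq * (E * (Uᵀ * A)))ᵀ * (Uᵀ * (U * (sq * (E * (Uᵀ * A))))) := by
          rw [Matrix.mul_assoc]
    _ = (sq * (E * (Uᵀ * A)))ᵀ * (sq * (E * (Uᵀ * A))) := by rw [hcanq]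
    _ = (E * (Uᵀ * A))ᵀ * (D * (E * (Uᵀ * A))) := by
          rw [Matrix.transpose_mul, Matrix.diagonal_transpose, Matrix.mul_assoc,
            ← Matrix.mul_assoc sq sq, hsqsq]
  have hA' : (U * sq) * (E * (Uᵀ * A)) = A := by rw [Matrix.mul_assoc, hA]
  have hmv : ∀ x : Fin q → ℝ, A *ᵥ x = U *ᵥ (sq *ᵥ ((E * (Uᵀ * A)) *ᵥ x)) := by
    intro x
    rw [Matrix.mulVec_mulVec, Matrix.mulVec_mulVec, hA']
  refine ⟨E * (Uᵀ * A), hOtO, ?_, ?_, ?_⟩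
  · intro x i
    rw [hmv x]
    simp only [Matrix.mulVec, dotProduct, Matrix.of_apply, U]
    refine Finset.sum_congr rfl fun j _ => ?_
    congr 1
    show (sq *ᵥ ((E * (Uᵀ * A)) *ᵥ x)) j = _
    rw [show sq = Matrix.diagonal (fun j => Real.sqrt (lam j)) from rfl,
      Matrix.mulVec_diagonal]
    rfl
  · intro x
    rw [dot_self_mulVec, hAtA]
    conv_lhs => rw [← Matrix.mulVec_mulVec x (E * (Uᵀ * A))ᵀ
        (Matrix.diagonal lam * (E * (Uᵀ * A))),
      Matrix.dotProduct_mulVec, Matrix.vecMul_transpose,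
      ← Matrix.mulVec_mulVec x (Matrix.diagonal lam) (E * (Uᵀ * A))]
    show ((E * (Uᵀ * A)) *ᵥ x) ⬝ᵥ (Matrix.diagonal lam *ᵥ ((E * (Uᵀ * A)) *ᵥ x))
      = ∑ j, lam j * ((E * (Uᵀ * A)) *ᵥ x) j ^ 2
    simp only [dotProduct, Matrix.mulVec_diagonal]
    exact Finset.sum_congr rfl fun j _ => by ring
  · intro x hx
    have h0 : (E * (Uᵀ * A)) *ᵥ x = 0 := by
      rw [← Matrix.mulVec_mulVec, ← Matrix.mulVec_mulVec, hx, Matrix.mulVec_zero,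
        Matrix.mulVec_zero]
    calc x = (1 : Matrix (Fin q) (Fin q) ℝ) *ᵥ x := (Matrix.one_mulVec x).symm
    _ = ((E * (Uᵀ * A))ᵀ * (E * (Uᵀ * A))) *ᵥ x := by rw [hOtO]
    _ = (E * (Uᵀ * A))ᵀ *ᵥ ((E * (Uᵀ * A)) *ᵥ x) := by rw [← Matrix.mulVec_mulVec]
    _ = 0 := by rw [h0, Matrix.mulVec_zero]

lemma abs_mul_le_of_sq_le {a b S : ℝ} (ha : a ^ 2 ≤ S) (hb : b ^ 2 ≤ S) :
    |a * b| ≤ S := by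
  rw [abs_mul]
  nlinarith [sq_abs a, sq_abs b, sq_nonneg (|a| - |b|), abs_nonneg a, abs_nonneg b]

lemma bound_one {p : ℕ} (y : Fin p → ℝ) (i i' : Fin p) :
    |y i * y i' / ∑ k, y k ^ 2| ≤ 1 := by
  have hterm : ∀ k ∈ Finset.univ, (0:ℝ) ≤ y k ^ 2 := fun k _ => sq_nonneg _
  have hS : 0 ≤ ∑ k, y k ^ 2 := Finset.sum_nonneg hterm
  rcases eq_or_lt_of_le hS with h0 | h0
  · rw [← h0, div_zero, abs_zero]; exact zero_le_one
  · rw [abs_div, abs_of_pos h0, div_le_one h0]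
    exact abs_mul_le_of_sq_le (Finset.single_le_sum hterm (Finset.mem_univ i))
      (Finset.single_le_sum hterm (Finset.mem_univ i'))

lemma bound_weighted {q : ℕ} {lam : Fin q → ℝ} {c : ℝ} (hc : 0 < c)
    (hcle : ∀ m, c ≤ lam m) (y : Fin q → ℝ) (j k : Fin q) :
    |y j * y k / ∑ m, lam m * y m ^ 2| ≤ c⁻¹ := by
  have hterm : ∀ m ∈ Finset.univ, (0:ℝ) ≤ lam m * y m ^ 2 :=
    fun m _ => mul_nonneg (hc.le.trans (hcle m)) (sq_nonneg _)
  have hS : 0 ≤ ∑ m, lam m * y m ^ 2 := Finset.sum_nonneg hterm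
  rcases eq_or_lt_of_le hS with h0 | h0
  · rw [← h0, div_zero, abs_zero]; exact inv_nonneg.mpr hc.le
  · rw [abs_div, abs_of_pos h0, div_le_iff₀ h0]
    have hj : y j ^ 2 ≤ c⁻¹ * ∑ m, lam m * y m ^ 2 := by
      rw [show c⁻¹ * ∑ m, lam m * y m ^ 2 = (∑ m, lam m * y m ^ 2) / c from by ring,
        le_div_iff₀ hc, mul_comm]
      exact le_trans (mul_le_mul_of_nonneg_right (hcle j) (sq_nonneg _))
        (Finset.single_le_sum hterm (Finset.mem_univ j))
    have hk : y k ^ 2 ≤ c⁻¹ * ∑ m, lam m * y m ^ 2 := by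
      rw [show c⁻¹ * ∑ m, lam m * y m ^ 2 = (∑ m, lam m * y m ^ 2) / c from by ring,
        le_div_iff₀ hc, mul_comm]
      exact le_trans (mul_le_mul_of_nonneg_right (hcle k) (sq_nonneg _))
        (Finset.single_le_sum hterm (Finset.mem_univ k))
    calc |y j * y k| ≤ c⁻¹ * ∑ m, lam m * y m ^ 2 := abs_mul_le_of_sq_le hj hk
    _ = c⁻¹ * ∑ m, lam m * y m ^ 2 := rfl

lemma expand_aux {q : ℕ} (a b s w : Fin q → ℝ) (Qv : ℝ) :
    (∑ j, a j * (s j * w j)) * (∑ k, b k * (s k * w k)) / Qv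
      = ∑ j, ∑ k, (a j * s j * (b k * s k)) * (w j * w k / Qv) := by
  rw [Finset.sum_mul_sum, Finset.sum_div]
  refine Finset.sum_congr rfl fun j _ => ?_
  rw [Finset.sum_div]
  refine Finset.sum_congr rfl fun k _ => ?_
  ring

lemma measurable_psi {q : ℕ} (lam : Fin q → ℝ) (j k : Fin q) :
    Measurable fun y : Fin q → ℝ => y j * y k / ∑ m, lam m * y m ^ 2 :=
  ((measurable_pi_apply j).mul (measurable_pi_apply k)).div
    (Finset.measurable_sum _ fun m _ => (by fun_prop))

lemma integral_offdiag_zero {q : ℕ} (lam : Fin q → ℝ) {j k : Fin q} (hjk : j ≠ k) :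
    ∫ y, y j * y k / (∑ m, lam m * y m ^ 2) ∂(stdGaussian q) = 0 := by
  classical
  set S : Matrix (Fin q) (Fin q) ℝ :=
    Matrix.diagonal (fun m => if m = j then (-1:ℝ) else 1) with hSdef
  have hStS : Sᵀ * S = 1 := by
    rw [hSdef, Matrix.diagonal_transpose, Matrix.diagonal_mul_diagonal,
      show (fun m => (if m = j then (-1:ℝ) else 1) * (if m = j then (-1:ℝ) else 1))
        = fun _ => (1:ℝ) from funext fun m => by by_cases h : m = j <;> simp [h]]
    exact Matrix.diagonal_one
  have hSmap : (stdGaussian q).map (fun x => S *ᵥ x) = stdGaussian q :=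
    stdGaussian_map_of_orthogonal hStS
  have hSmeas : Measurable (fun x : Fin q → ℝ => S *ᵥ x) :=
    measurable_pi_lambda _ fun m => by
      rw [show (fun x : Fin q → ℝ => (S *ᵥ x) m)
          = fun x => (if m = j then (-1:ℝ) else 1) * x m from
        funext fun x => Matrix.mulVec_diagonal _ _ _]
      exact (measurable_pi_apply m).const_mul _
  have h1 : ∫ y, y j * y k / (∑ m, lam m * y m ^ 2) ∂(stdGaussian q)
      = ∫ y, (S *ᵥ y) j * (S *ᵥ y) k / (∑ m, lam m * (S *ᵥ y) m ^ 2) ∂(stdGaussian q) := by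
    conv_lhs => rw [← hSmap]
    rw [integral_map hSmeas.aemeasurable (measurable_psi lam j k).aestronglyMeasurable]
  have h2 : ∀ y : Fin q → ℝ,
      (S *ᵥ y) j * (S *ᵥ y) k / (∑ m, lam m * (S *ᵥ y) m ^ 2)
        = -(y j * y k / (∑ m, lam m * y m ^ 2)) := by
    intro y
    have hsv : ∀ m, (S *ᵥ y) m = (if m = j then (-1:ℝ) else 1) * y m :=
      fun m => Matrix.mulVec_diagonal _ _ _
    have hQS : ∑ m, lam m * (S *ᵥ y) m ^ 2 = ∑ m, lam m * y m ^ 2 :=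
      Finset.sum_congr rfl fun m _ => by
        rw [hsv m]; by_cases h : m = j <;> simp [h]
    rw [hQS, hsv j, hsv k, if_pos rfl, if_neg (Ne.symm hjk)]
    rw [show (-1 : ℝ) * y j * (1 * y k) = -(y j * y k) from by ring, neg_div]
  have key : ∫ y, y j * y k / (∑ m, lam m * y m ^ 2) ∂(stdGaussian q)
      = - ∫ y, y j * y k / (∑ m, lam m * y m ^ 2) ∂(stdGaussian q) := by
    conv_lhs => rw [h1]
    simp_rw [h2]
    exact integral_neg _
  linarith [key]

end Aux

/-- If `AAᵀ = Σ = ∑_j λ_j v_j v_jᵀ` with orthonormal `v_j` and `λ₁ ≥ ⋯ ≥ λ_q > 0`, and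
`g` is standard Gaussian in `ℝ^q`, then `K := E[AggᵀAᵀ/‖Ag‖²]` is well defined
(`Ag ≠ 0` a.s., the integrand is bounded by `1`, entrywise integrable) and
`K = ∑_j θ_j v_j v_jᵀ` with `θ_j = E[λ_j g_j²/(λ₁g₁²+⋯+λ_qg_q²)]`. -/
theorem stmt4 (p q : ℕ) (hq : 1 ≤ q) (hp : 1 ≤ p)
    {Ω : Type*} [MeasurableSpace Ω] (μ : Measure Ω) [IsProbabilityMeasure μ]
    (g : Ω → Fin q → ℝ) (hg : Measure.map g μ = stdGaussian q)
    (A : Matrix (Fin p) (Fin q) ℝ)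
    (v : Fin q → Fin p → ℝ) (lam : Fin q → ℝ)
    (hortho : ∀ j k, (∑ i, v j i * v k i) = if j = k then (1 : ℝ) else 0)
    (hdesc : Antitone lam) (hpos : ∀ j, 0 < lam j)
    (hspec : A * Aᵀ = ∑ j, lam j • Matrix.vecMulVec (v j) (v j)) :
    μ {ω | A.mulVec (g ω) = 0} = 0 ∧
    (∀ i i' : Fin p, ∀ᵐ ω ∂μ,
      |A.mulVec (g ω) i * A.mulVec (g ω) i' / (∑ k, A.mulVec (g ω) k ^ 2)| ≤ 1) ∧
    (∀ i i' : Fin p, Integrable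
      (fun ω => A.mulVec (g ω) i * A.mulVec (g ω) i' / (∑ k, A.mulVec (g ω) k ^ 2)) μ) ∧
    (Matrix.of (fun i i' : Fin p =>
        ∫ ω, A.mulVec (g ω) i * A.mulVec (g ω) i' / (∑ k, A.mulVec (g ω) k ^ 2) ∂μ)
      = ∑ j, (∫ ω, lam j * g ω j ^ 2 / (∑ k, lam k * g ω k ^ 2) ∂μ) •
          Matrix.vecMulVec (v j) (v j)) := by
  classical
  obtain ⟨O, hOtO, hAxi, hQx, hinj⟩ := matrix_decomp p q A v lam hortho hpos hspec
  haveI : IsProbabilityMeasure (stdGaussian q) := by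
    unfold _root_.stdGaussian; infer_instance
  have hgm : AEMeasurable g μ := by
    by_contra h
    rw [Measure.map_of_not_aemeasurable h] at hg
    have h1 : (0 : Measure (Fin q → ℝ)) Set.univ = stdGaussian q Set.univ := by rw [hg]
    simp [measure_univ] at h1
  -- measurability facts
  have hmeasA : Measurable (fun x : Fin q → ℝ => A *ᵥ x) := by
    rw [show (fun x : Fin q → ℝ => A *ᵥ x) = ⇑(Matrix.toLin' A) from
      funext fun x => (Matrix.toLin'_apply A x).symm]
    exact (LinearMap.continuous_of_finiteDimensional _).measurable
  have hmeasO : Measurable (fun x : Fin q → ℝ => O *ᵥ x) := by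
    rw [show (fun x : Fin q → ℝ => O *ᵥ x) = ⇑(Matrix.toLin' O) from
      funext fun x => (Matrix.toLin'_apply O x).symm]
    exact (LinearMap.continuous_of_finiteDimensional _).measurable
  have hΦmeas : ∀ i i' : Fin p, Measurable (fun x : Fin q → ℝ =>
      (A *ᵥ x) i * (A *ᵥ x) i' / ∑ k, (A *ᵥ x) k ^ 2) := by
    intro i i'
    exact (((measurable_pi_apply i).comp hmeasA).mul
        ((measurable_pi_apply i').comp hmeasA)).div
      (Finset.measurable_sum _ fun k _ =>
        ((measurable_pi_apply k).comp hmeasA).pow_const 2)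
  have hμν : ∀ (φ : (Fin q → ℝ) → ℝ), Measurable φ →
      ∫ ω, φ (g ω) ∂μ = ∫ x, φ x ∂(stdGaussian q) := by
    intro φ hφ
    rw [← hg, integral_map hgm hφ.aestronglyMeasurable]
  -- Part 1
  refine ⟨?_, ?_, ?_, ?_⟩
  · have hset : {ω | A *ᵥ (g ω) = 0} = g ⁻¹' {0} := by
      ext ω
      simp only [Set.mem_setOf_eq, Set.mem_preimage, Set.mem_singleton_iff]
      exact ⟨hinj _, fun h => by rw [h, Matrix.mulVec_zero]⟩
    rw [hset, ← Measure.map_apply_of_aemeasurable hgm (measurableSet_singleton _), hg]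
    have hsing : ({0} : Set (Fin q → ℝ)) = Set.pi Set.univ (fun _ => ({0} : Set ℝ)) := by
      ext x
      simp [Set.mem_pi, funext_iff]
    rw [hsing]
    show Measure.pi (fun _ : Fin q => gaussianReal 0 1) _ = 0
    rw [Measure.pi_pi]
    exact Finset.prod_eq_zero (Finset.mem_univ (⟨0, hq⟩ : Fin q))
      ((gaussianReal_absolutelyContinuous 0 one_ne_zero) (measure_singleton 0))
  · intro i i'
    exact Filter.Eventually.of_forall fun ω => bound_one (A *ᵥ g ω) i i'
  · intro i i'
    refine ⟨((hΦmeas i i').comp_aemeasurable hgm).aestronglyMeasurable,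
      HasFiniteIntegral.of_bounded (C := 1)
        (Filter.Eventually.of_forall fun ω => ?_)⟩
    rw [Real.norm_eq_abs]
    exact bound_one (A *ᵥ g ω) i i'
  -- Part 4
  · have hc : 0 < lam ⟨q - 1, by omega⟩ := hpos _
    have hcle : ∀ m, lam ⟨q - 1, by omega⟩ ≤ lam m := fun m =>
      hdesc (by rw [Fin.le_def]; simp; omega)
    have hψint : ∀ j k : Fin q, Integrable
        (fun y : Fin q → ℝ => y j * y k / ∑ m, lam m * y m ^ 2) (stdGaussian q) := by
      intro j k
      refine ⟨(measurable_psi lam j k).aestronglyMeasurable,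
        HasFiniteIntegral.of_bounded (C := (lam ⟨q - 1, by omega⟩)⁻¹)
          (Filter.Eventually.of_forall fun y => ?_)⟩
      rw [Real.norm_eq_abs]
      exact bound_weighted hc hcle y j k
    have hψOint : ∀ j k : Fin q, Integrable
        (fun x : Fin q → ℝ => (O *ᵥ x) j * (O *ᵥ x) k / ∑ m, lam m * (O *ᵥ x) m ^ 2)
        (stdGaussian q) := by
      intro j k
      refine ⟨((measurable_psi lam j k).comp hmeasO).aestronglyMeasurable,
        HasFiniteIntegral.of_bounded (C := (lam ⟨q - 1, by omega⟩)⁻¹)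
          (Filter.Eventually.of_forall fun y => ?_)⟩
      rw [Real.norm_eq_abs]
      exact bound_weighted hc hcle (O *ᵥ y) j k
    have hOmap : (stdGaussian q).map (fun x => O *ᵥ x) = stdGaussian q :=
      stdGaussian_map_of_orthogonal hOtO
    have hinvint : ∀ j k : Fin q,
        ∫ x, (O *ᵥ x) j * (O *ᵥ x) k / (∑ m, lam m * (O *ᵥ x) m ^ 2) ∂(stdGaussian q)
          = ∫ y, y j * y k / (∑ m, lam m * y m ^ 2) ∂(stdGaussian q) := by
      intro j k
      conv_rhs => rw [← hOmap]
      rw [integral_map hmeasO.aemeasurable (measurable_psi lam j k).aestronglyMeasurable]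
    -- the entrywise computation
    ext i i'
    rw [Matrix.of_apply]
    have hLHS : ∫ ω, (A *ᵥ g ω) i * (A *ᵥ g ω) i' / (∑ k, (A *ᵥ g ω) k ^ 2) ∂μ
        = ∫ x, (A *ᵥ x) i * (A *ᵥ x) i' / (∑ k, (A *ᵥ x) k ^ 2) ∂(stdGaussian q) :=
      hμν _ (hΦmeas i i')
    have hexp : ∀ x : Fin q → ℝ,
        (A *ᵥ x) i * (A *ᵥ x) i' / (∑ k, (A *ᵥ x) k ^ 2)
          = ∑ j, ∑ k, (v j i * Real.sqrt (lam j) * (v k i' * Real.sqrt (lam k))) *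
              ((O *ᵥ x) j * (O *ᵥ x) k / (∑ m, lam m * (O *ᵥ x) m ^ 2)) := by
      intro x
      rw [hQx x, hAxi x i, hAxi x i']
      exact expand_aux (fun j => v j i) (fun k => v k i')
        (fun j => Real.sqrt (lam j)) (fun j => (O *ᵥ x) j) _
    have hsum : ∫ x, (A *ᵥ x) i * (A *ᵥ x) i' / (∑ k, (A *ᵥ x) k ^ 2) ∂(stdGaussian q)
        = ∑ j, ∑ k, (v j i * Real.sqrt (lam j) * (v k i' * Real.sqrt (lam k))) *
            ∫ x, (O *ᵥ x) j * (O *ᵥ x) k / (∑ m, lam m * (O *ᵥ x) m ^ 2)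
              ∂(stdGaussian q) := by
      rw [integral_congr_ae (ae_of_all _ hexp)]
      rw [integral_finset_sum _ fun j _ => integrable_finset_sum _ fun k _ =>
        ((hψOint j k).const_mul _)]
      refine Finset.sum_congr rfl fun j _ => ?_
      rw [integral_finset_sum _ fun k _ => ((hψOint j k).const_mul _)]
      exact Finset.sum_congr rfl fun k _ => integral_const_mul _ _
    have hθ : ∀ j : Fin q, ∫ ω, lam j * g ω j ^ 2 / (∑ k, lam k * g ω k ^ 2) ∂μ
        = lam j * ∫ y, y j * y j / (∑ m, lam m * y m ^ 2) ∂(stdGaussian q) := by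
      intro j
      rw [hμν (fun x => lam j * x j ^ 2 / ∑ k, lam k * x k ^ 2)
        (by fun_prop)]
      rw [show (fun x : Fin q → ℝ => lam j * x j ^ 2 / ∑ k, lam k * x k ^ 2)
          = fun x => lam j * (x j * x j / ∑ m, lam m * x m ^ 2) from
        funext fun x => by rw [sq]; ring]
      exact integral_const_mul _ _
    rw [hLHS, hsum]
    have hRHS : (∑ j, (∫ ω, lam j * g ω j ^ 2 / (∑ k, lam k * g ω k ^ 2) ∂μ) •
        Matrix.vecMulVec (v j) (v j)) i i'
        = ∑ j, (lam j * ∫ y, y j * y j / (∑ m, lam m * y m ^ 2) ∂(stdGaussian q)) *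
            (v j i * v j i') := by
      rw [Matrix.sum_apply]
      refine Finset.sum_congr rfl fun j _ => ?_
      rw [Matrix.smul_apply, Matrix.vecMulVec_apply, smul_eq_mul, hθ j]
    rw [hRHS]
    refine Finset.sum_congr rfl fun j _ => ?_
    rw [Finset.sum_eq_single_of_mem j (Finset.mem_univ j) (fun k _ hkj => by
      rw [hinvint j k, integral_offdiag_zero lam (Ne.symm hkj), mul_zero])]
    rw [hinvint j j]
    rw [show v j i * Real.sqrt (lam j) * (v j i' * Real.sqrt (lam j))
        = (Real.sqrt (lam j) * Real.sqrt (lam j)) * (v j i * v j i') from by ring,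
      Real.mul_self_sqrt (hpos j).le]
    ring
end

section
/- Let q ≥ 2, let g = (g₁,…,g_q) be a standard Gaussian vector in ℝ^q, and let λ₁,…,λ_q > 0. If λ_i ≥ λ_j for indices i, j, then E[ λ_i g_i² / (λ₁g₁² + ⋯ + λ_q g_q²) ] ≥ E[ λ_j g_j² / (λ₁g₁² + ⋯ + λ_q g_q²) ]. Consequently the map j ↦ E[ λ_j g_j² / (λ₁g₁² + ⋯ + λ_q g_q²) ] is nonincreasing whenever λ₁ ≥ λ₂ ≥ ⋯ ≥ λ_q. -/
open MeasureTheory ProbabilityTheory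

instance stdGaussian_isProb (d : ℕ) : IsProbabilityMeasure (stdGaussian d) := by
  unfold _root_.stdGaussian; infer_instance

lemma key_ineq (li lj a b T : ℝ) (hlj : 0 < lj) (h : lj ≤ li) (ha : 0 ≤ a) (hb : 0 ≤ b)
    (hT : 0 ≤ T) :
    lj * b / (li * a + (lj * b + T)) + lj * a / (li * b + (lj * a + T)) ≤
      li * a / (li * a + (lj * b + T)) + li * b / (li * b + (lj * a + T)) := by
  have hli : 0 < li := lt_of_lt_of_le hlj h
  have hu0 : 0 ≤ li * a + (lj * b + T) := by positivity
  rcases hu0.eq_or_lt with hu | hu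
  · have ha0 : a = 0 := by nlinarith
    have hb0 : b = 0 := by nlinarith
    have hT0 : T = 0 := by nlinarith
    simp [ha0, hb0, hT0]
  · have h1 : lj * (li * a + (lj * b + T)) ≤ li * (li * b + (lj * a + T)) := by
      nlinarith [mul_nonneg hb (mul_nonneg (by positivity : (0:ℝ) ≤ li + lj) (sub_nonneg.2 h)),
        mul_nonneg hT (sub_nonneg.2 h)]
    have hv : 0 < li * b + (lj * a + T) := by nlinarith [mul_pos hlj hu, h1]
    rw [div_add_div _ _ hu.ne' hv.ne', div_add_div _ _ hu.ne' hv.ne',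
      div_le_div_iff_of_pos_right (by positivity)]
    nlinarith [mul_nonneg hT (mul_nonneg (sub_nonneg.2 h) (add_nonneg ha hb)),
      mul_nonneg (mul_nonneg ha hb) (mul_nonneg (by positivity : (0:ℝ) ≤ li + lj) (sub_nonneg.2 h))]

/-- For a standard Gaussian vector `g` in `ℝ^q` (`q ≥ 2`) and positive weights `λ`,
if `λ i ≥ λ j` then `E[λ_i g_i²/∑ λ_k g_k²] ≥ E[λ_j g_j²/∑ λ_k g_k²]`; consequently
`j ↦ E[λ_j g_j²/∑ λ_k g_k²]` is nonincreasing whenever `λ` is nonincreasing. -/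
theorem stmt9 (q : ℕ) (hq : 2 ≤ q)
    {Ω : Type*} [MeasurableSpace Ω] (μ : Measure Ω) [IsProbabilityMeasure μ]
    (g : Ω → Fin q → ℝ) (hg : Measure.map g μ = stdGaussian q)
    (lam : Fin q → ℝ) (hlam : ∀ k, 0 < lam k) :
    (∀ i j : Fin q, lam j ≤ lam i →
      ∫ ω, lam j * g ω j ^ 2 / (∑ k, lam k * g ω k ^ 2) ∂μ ≤
        ∫ ω, lam i * g ω i ^ 2 / (∑ k, lam k * g ω k ^ 2) ∂μ) ∧
    (Antitone lam →
      Antitone fun j => ∫ ω, lam j * g ω j ^ 2 / (∑ k, lam k * g ω k ^ 2) ∂μ) := by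
  set ν := stdGaussian q with hν
  -- g is a.e.-measurable
  have hgm : AEMeasurable g μ := by
    by_contra h
    have h0 : Measure.map g μ = 0 := Measure.map_of_not_aemeasurable h
    rw [hg] at h0
    exact (IsProbabilityMeasure.ne_zero ν) h0
  -- measurability of the basic fraction
  have hFmeas : ∀ m : Fin q,
      Measurable (fun x : Fin q → ℝ => lam m * x m ^ 2 / ∑ k, lam k * x k ^ 2) := by
    intro m
    exact (measurable_const.mul ((measurable_pi_apply m).pow measurable_const)).div
      (Finset.measurable_sum _ fun k _ =>
        measurable_const.mul ((measurable_pi_apply k).pow measurable_const))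
  -- the fraction is bounded by 1 in absolute value
  have hFb : ∀ (m : Fin q) (x : Fin q → ℝ),
      ‖lam m * x m ^ 2 / ∑ k, lam k * x k ^ 2‖ ≤ 1 := by
    intro m x
    have hS : 0 ≤ ∑ k, lam k * x k ^ 2 :=
      Finset.sum_nonneg fun k _ => by have := hlam k; positivity
    have hnum : 0 ≤ lam m * x m ^ 2 := by have := hlam m; positivity
    rw [Real.norm_eq_abs, abs_of_nonneg (div_nonneg hnum hS)]
    rcases hS.eq_or_lt with hz | hz
    · rw [← hz]; simp
    · exact div_le_one_of_le₀
        (Finset.single_le_sum (f := fun k => lam k * x k ^ 2) (fun k _ => by have := hlam k; positivity) (Finset.mem_univ m)) hS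
  -- integrability on ν
  have hFint : ∀ m : Fin q,
      Integrable (fun x : Fin q → ℝ => lam m * x m ^ 2 / ∑ k, lam k * x k ^ 2) ν :=
    fun m => (integrable_const (1 : ℝ)).mono' (hFmeas m).aestronglyMeasurable
      (ae_of_all _ (hFb m))
  -- transfer integrals to ν
  have hmap : ∀ m : Fin q,
      ∫ ω, lam m * g ω m ^ 2 / (∑ k, lam k * g ω k ^ 2) ∂μ =
        ∫ x, lam m * x m ^ 2 / (∑ k, lam k * x k ^ 2) ∂ν := by
    intro m
    rw [← hg, integral_map hgm (hFmeas m).aestronglyMeasurable]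
  have part1 : ∀ i j : Fin q, lam j ≤ lam i →
      ∫ ω, lam j * g ω j ^ 2 / (∑ k, lam k * g ω k ^ 2) ∂μ ≤
        ∫ ω, lam i * g ω i ^ 2 / (∑ k, lam k * g ω k ^ 2) ∂μ := by
    intro i j hij
    rcases eq_or_ne i j with rfl | hne
    · exact le_refl _
    rw [hmap i, hmap j]
    -- the swap
    set e : Fin q ≃ Fin q := Equiv.swap i j with he
    have hmp : MeasurePreserving (fun x : Fin q → ℝ => x ∘ e) ν ν := by
      have h1 := measurePreserving_piCongrLeft (fun _ : Fin q => gaussianReal (0:ℝ) 1) e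
      have h2 : ⇑(MeasurableEquiv.piCongrLeft (fun _ : Fin q => ℝ) e)
          = fun x : Fin q → ℝ => x ∘ e := by
        funext x
        funext b
        have h3 := Equiv.piCongrLeft_apply_apply (P := fun _ : Fin q => ℝ) e x (e.symm b)
        simp only [Equiv.apply_symm_apply] at h3
        have h4 : e.symm b = e b := by rw [he, Equiv.symm_swap]
        simpa [MeasurableEquiv.coe_piCongrLeft, h4] using h3
      rwa [h2] at h1
    -- composition with the swap leaves integrals unchanged
    have hcomp : ∀ m : Fin q,
        ∫ x, lam m * x m ^ 2 / (∑ k, lam k * x k ^ 2) ∂ν =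
          ∫ x, lam m * (x ∘ e) m ^ 2 / (∑ k, lam k * (x ∘ e) k ^ 2) ∂ν := by
      intro m
      conv_lhs => rw [← hmp.map_eq]
      rw [integral_map hmp.aemeasurable ((hFmeas m).aestronglyMeasurable)]
    -- pointwise inequality after symmetrization
    have hpt : ∀ x : Fin q → ℝ,
        lam j * x j ^ 2 / (∑ k, lam k * x k ^ 2)
          + lam j * (x ∘ e) j ^ 2 / (∑ k, lam k * (x ∘ e) k ^ 2) ≤
        lam i * x i ^ 2 / (∑ k, lam k * x k ^ 2)
          + lam i * (x ∘ e) i ^ 2 / (∑ k, lam k * (x ∘ e) k ^ 2) := by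
      intro x
      have hsplit : ∀ f : Fin q → ℝ,
          ∑ k, f k = f i + (f j + ∑ k ∈ (Finset.univ.erase i).erase j, f k) := by
        intro f
        rw [← Finset.sum_erase_add Finset.univ f (Finset.mem_univ i),
          ← Finset.sum_erase_add (Finset.univ.erase i) f
            (Finset.mem_erase.2 ⟨hne.symm, Finset.mem_univ j⟩)]
        ring
      have hrest : ∑ k ∈ (Finset.univ.erase i).erase j, lam k * (x ∘ e) k ^ 2
          = ∑ k ∈ (Finset.univ.erase i).erase j, lam k * x k ^ 2 := by
        refine Finset.sum_congr rfl fun k hk => ?_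
        rw [Finset.mem_erase, Finset.mem_erase] at hk
        have : e k = k := Equiv.swap_apply_of_ne_of_ne hk.2.1 hk.1
        simp [Function.comp, this]
      have hei : (x ∘ e) i = x j := by simp [he, Function.comp]
      have hej : (x ∘ e) j = x i := by simp [he, Function.comp]
      rw [hsplit (fun k => lam k * x k ^ 2), hsplit (fun k => lam k * (x ∘ e) k ^ 2),
        hrest, hei, hej]
      have hT : 0 ≤ ∑ k ∈ (Finset.univ.erase i).erase j, lam k * x k ^ 2 :=
        Finset.sum_nonneg fun k _ => by have := hlam k; positivity
      exact key_ineq (lam i) (lam j) (x i ^ 2) (x j ^ 2) _ (hlam j) hij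
        (by positivity) (by positivity) hT
    -- integrate
    have hintc : ∀ m : Fin q,
        Integrable (fun x : Fin q → ℝ =>
          lam m * (x ∘ e) m ^ 2 / (∑ k, lam k * (x ∘ e) k ^ 2)) ν := by
      intro m
      exact (integrable_const (1 : ℝ)).mono'
        ((hFmeas m).comp hmp.measurable).aestronglyMeasurable
        (ae_of_all _ fun x => hFb m (x ∘ e))
    have hle : ∫ x, (lam j * x j ^ 2 / (∑ k, lam k * x k ^ 2)
          + lam j * (x ∘ e) j ^ 2 / (∑ k, lam k * (x ∘ e) k ^ 2)) ∂ν ≤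
        ∫ x, (lam i * x i ^ 2 / (∑ k, lam k * x k ^ 2)
          + lam i * (x ∘ e) i ^ 2 / (∑ k, lam k * (x ∘ e) k ^ 2)) ∂ν :=
      integral_mono ((hFint j).add (hintc j)) ((hFint i).add (hintc i)) hpt
    rw [integral_add (hFint j) (hintc j), integral_add (hFint i) (hintc i)] at hle
    rw [← hcomp j, ← hcomp i] at hle
    linarith
  exact ⟨part1, fun hA j j' hjj' => part1 j j' (hA hjj')⟩
end

section
/- Let L ∈ ℝ^{p×m} have rank m and let Σ_ε ∈ ℝ^{p×p} be symmetric positive definite, and set Σ_y := LLᵀ + Σ_ε. Then the matrix I_m − Lᵀ Σ_y^{-1} L is symmetric positive semidefinite and its spectral (operator) norm satisfies ‖I_m − Lᵀ Σ_y^{-1} L‖ ≤ λ_max(Σ_ε) / (λ_max(Σ_ε) + λ_min(LᵀL)), where λ_max and λ_min denote the largest and smallest eigenvalues. -/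
open Matrix

set_option linter.unusedSectionVars false
set_option maxHeartbeats 1000000

section AuxHelpers

variable {n : Type*} [Fintype n] [DecidableEq n]

lemma dot_transpose {n' m' : Type*} [Fintype n'] [Fintype m'] (A : Matrix n' m' ℝ)
    (x : m' → ℝ) (y : n' → ℝ) : x ⬝ᵥ (Aᵀ *ᵥ y) = (A *ᵥ x) ⬝ᵥ y := by
  rw [dotProduct_mulVec, vecMul_transpose]

lemma dot_transpose' {n' m' : Type*} [Fintype n'] [Fintype m'] (A : Matrix n' m' ℝ)
    (x : n' → ℝ) (y : m' → ℝ) : x ⬝ᵥ (A *ᵥ y) = (Aᵀ *ᵥ x) ⬝ᵥ y := by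
  rw [dotProduct_mulVec, ← mulVec_transpose]

lemma symm_dot {N : Matrix n n ℝ} (hN : Nᵀ = N) (x y : n → ℝ) :
    x ⬝ᵥ (N *ᵥ y) = (N *ᵥ x) ⬝ᵥ y := by
  rw [dot_transpose' N x y, hN]

lemma dot_self_nonneg (x : n → ℝ) : 0 ≤ x ⬝ᵥ x :=
  Finset.sum_nonneg fun i _ => mul_self_nonneg (x i)

lemma smul_one_sub_psd {A : Matrix n n ℝ} (hA : A.IsHermitian) {c : ℝ}
    (hc : ∀ i, hA.eigenvalues i ≤ c) :
    (c • (1 : Matrix n n ℝ) - A).PosSemidef := by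
  have key : c • (1 : Matrix n n ℝ) - A
      = (hA.eigenvectorUnitary : Matrix n n ℝ) *
          diagonal (fun i => c - hA.eigenvalues i) *
          (hA.eigenvectorUnitary : Matrix n n ℝ)ᴴ := by
    have hU : (hA.eigenvectorUnitary : Matrix n n ℝ) *
        (star (hA.eigenvectorUnitary : Matrix n n ℝ)) = 1 :=
      (Matrix.mem_unitaryGroup_iff).mp (hA.eigenvectorUnitary).2
    have hd : (diagonal (fun i => c - hA.eigenvalues i) : Matrix n n ℝ)
        = c • 1 - diagonal (RCLike.ofReal ∘ hA.eigenvalues) := by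
      rw [smul_one_eq_diagonal, ← diagonal_sub]
      congr 1
    rw [hd, Matrix.mul_sub, Matrix.sub_mul, Matrix.mul_smul, Matrix.mul_one,
      Matrix.smul_mul, ← Matrix.star_eq_conjTranspose, hU]
    congr 1
    exact hA.spectral_theorem
  rw [key]
  exact (posSemidef_diagonal_iff.mpr fun i => sub_nonneg.2 (hc i)).mul_mul_conjTranspose_same _

lemma sub_smul_one_psd {A : Matrix n n ℝ} (hA : A.IsHermitian) {d : ℝ}
    (hd : ∀ i, d ≤ hA.eigenvalues i) :
    (A - d • (1 : Matrix n n ℝ)).PosSemidef := by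
  have key : A - d • (1 : Matrix n n ℝ)
      = (hA.eigenvectorUnitary : Matrix n n ℝ) *
          diagonal (fun i => hA.eigenvalues i - d) *
          (hA.eigenvectorUnitary : Matrix n n ℝ)ᴴ := by
    have hU : (hA.eigenvectorUnitary : Matrix n n ℝ) *
        (star (hA.eigenvectorUnitary : Matrix n n ℝ)) = 1 :=
      (Matrix.mem_unitaryGroup_iff).mp (hA.eigenvectorUnitary).2
    have hd' : (diagonal (fun i => hA.eigenvalues i - d) : Matrix n n ℝ)
        = diagonal (RCLike.ofReal ∘ hA.eigenvalues) - d • 1 := by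
      rw [smul_one_eq_diagonal, ← diagonal_sub]
      congr 1
    rw [hd', Matrix.mul_sub, Matrix.sub_mul, Matrix.mul_smul, Matrix.mul_one,
      Matrix.smul_mul, ← Matrix.star_eq_conjTranspose, hU]
    congr 1
    exact hA.spectral_theorem
  rw [key]
  exact (posSemidef_diagonal_iff.mpr fun i => sub_nonneg.2 (hd i)).mul_mul_conjTranspose_same _

lemma quad_le_of_eigen {A : Matrix n n ℝ} (hA : A.IsHermitian) {c : ℝ}
    (hc : ∀ i, hA.eigenvalues i ≤ c) (x : n → ℝ) :
    x ⬝ᵥ (A *ᵥ x) ≤ c * (x ⬝ᵥ x) := by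
  have h := (smul_one_sub_psd hA hc).dotProduct_mulVec_nonneg x
  simp only [star_trivial, sub_mulVec, smul_mulVec, one_mulVec, dotProduct_sub,
    dotProduct_smul, smul_eq_mul] at h
  linarith

open scoped MatrixOrder in
lemma psd_smul_sub_sq {A : Matrix n n ℝ} (hA : A.PosSemidef) {k : ℝ}
    (h : (k • (1 : Matrix n n ℝ) - A).PosSemidef) : (k • A - A * A).PosSemidef := by
  have h2 := h.mul_mul_conjTranspose_same (CFC.sqrt A)
  have e : CFC.sqrt A * (k • (1 : Matrix n n ℝ) - A) * (CFC.sqrt A)ᴴ = k • A - A * A := by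
    rw [(CFC.sqrt_nonneg A).posSemidef.1.eq]
    rw [Matrix.mul_sub, Matrix.sub_mul, Matrix.mul_smul, Matrix.mul_one, Matrix.smul_mul,
      CFC.sqrt_mul_sqrt_self A hA.nonneg]
    congr 1
    calc CFC.sqrt A * A * CFC.sqrt A = CFC.sqrt A * (CFC.sqrt A * CFC.sqrt A) * CFC.sqrt A := by
          rw [CFC.sqrt_mul_sqrt_self A hA.nonneg]
      _ = (CFC.sqrt A * CFC.sqrt A) * (CFC.sqrt A * CFC.sqrt A) := by
          simp only [mul_assoc]
      _ = A * A := by rw [CFC.sqrt_mul_sqrt_self A hA.nonneg]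
  rwa [e] at h2

open scoped MatrixOrder in
lemma psd_sq_sub_smul {A : Matrix n n ℝ} (hA : A.PosSemidef) {d : ℝ}
    (h : (A - d • (1 : Matrix n n ℝ)).PosSemidef) : (A * A - d • A).PosSemidef := by
  have h2 := h.mul_mul_conjTranspose_same (CFC.sqrt A)
  have e : CFC.sqrt A * (A - d • (1 : Matrix n n ℝ)) * (CFC.sqrt A)ᴴ = A * A - d • A := by
    rw [(CFC.sqrt_nonneg A).posSemidef.1.eq]
    rw [Matrix.mul_sub, Matrix.sub_mul, Matrix.mul_smul, Matrix.mul_one, Matrix.smul_mul,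
      CFC.sqrt_mul_sqrt_self A hA.nonneg]
    congr 1
    calc CFC.sqrt A * A * CFC.sqrt A = CFC.sqrt A * (CFC.sqrt A * CFC.sqrt A) * CFC.sqrt A := by
          rw [CFC.sqrt_mul_sqrt_self A hA.nonneg]
      _ = (CFC.sqrt A * CFC.sqrt A) * (CFC.sqrt A * CFC.sqrt A) := by
          simp only [mul_assoc]
      _ = A * A := by rw [CFC.sqrt_mul_sqrt_self A hA.nonneg]
  rwa [e] at h2

end AuxHelpers

/-- Spectral (operator) norm of a real matrix, as the norm of the induced linear map
between Euclidean spaces. -/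
noncomputable def specNorm {k l : ℕ} (M : Matrix (Fin k) (Fin l) ℝ) : ℝ :=
  ‖LinearMap.toContinuousLinearMap (Matrix.toEuclideanLin M)‖

/-- If `L ∈ ℝ^{p×m}` has rank `m` and `Σ_ε` is symmetric positive definite, then with
`Σ_y := LLᵀ + Σ_ε`, the matrix `I_m − LᵀΣ_y⁻¹L` is symmetric positive semidefinite and
its spectral norm is at most `λ_max(Σ_ε)/(λ_max(Σ_ε) + λ_min(LᵀL))`. -/
theorem stmt11 (p m : ℕ) (hm : 1 ≤ m) (hp : 1 ≤ p)
    (L : Matrix (Fin p) (Fin m) ℝ) (hrank : L.rank = m)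
    (Se : Matrix (Fin p) (Fin p) ℝ) (hSe : Se.PosDef)
    (hLL : (Lᵀ * L).IsHermitian) :
    ((1 : Matrix (Fin m) (Fin m) ℝ) - Lᵀ * (L * Lᵀ + Se)⁻¹ * L).PosSemidef ∧
    specNorm ((1 : Matrix (Fin m) (Fin m) ℝ) - Lᵀ * (L * Lᵀ + Se)⁻¹ * L) ≤
      (⨆ i, hSe.1.eigenvalues i) / ((⨆ i, hSe.1.eigenvalues i) + ⨅ i, hLL.eigenvalues i) := by
  haveI : Nonempty (Fin m) := ⟨⟨0, hm⟩⟩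
  haveI : Nonempty (Fin p) := ⟨⟨0, hp⟩⟩
  set c := ⨆ i, hSe.1.eigenvalues i with hc_def
  set lam := ⨅ i, hLL.eigenvalues i with hlam_def
  -- L has trivial kernel
  have hker : LinearMap.ker L.mulVecLin = ⊥ := by
    have h1 := LinearMap.finrank_range_add_finrank_ker L.mulVecLin
    have h2 : Module.finrank ℝ (LinearMap.range L.mulVecLin) = m := hrank
    rw [h2, Module.finrank_fin_fun] at h1
    exact Submodule.finrank_eq_zero.mp (by omega)
  have hLinj : ∀ x : Fin m → ℝ, L *ᵥ x = 0 → x = 0 := by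
    intro x hx
    have := LinearMap.ker_eq_bot.mp hker
    exact this (by simpa [Matrix.mulVecLin_apply] using hx)
  -- G := Lᵀ * L is positive definite
  have hG : (Lᵀ * L).PosDef := by
    refine PosDef.of_dotProduct_mulVec_pos hLL fun x hx => ?_
    have e : star x ⬝ᵥ ((Lᵀ * L) *ᵥ x) = (L *ᵥ x) ⬝ᵥ (L *ᵥ x) := by
      rw [star_trivial, ← mulVec_mulVec, dot_transpose]
    rw [e]
    have hne : L *ᵥ x ≠ 0 := fun h => hx (hLinj x h)
    rcases lt_or_eq_of_le (dot_self_nonneg (L *ᵥ x)) with h | h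
    · exact h
    · exact absurd (dotProduct_self_eq_zero.mp h.symm) hne
  have hGT : (Lᵀ * L)ᵀ = Lᵀ * L := by
    rw [← conjTranspose_eq_transpose_of_trivial]; exact hLL.eq
  have hGdet : IsUnit (Lᵀ * L).det := hG.det_pos.ne'.isUnit
  have hGmul : (Lᵀ * L) * (Lᵀ * L)⁻¹ = 1 := mul_nonsing_inv _ hGdet
  have hGinv : ((Lᵀ * L)⁻¹).PosDef := hG.inv
  -- Sy := L * Lᵀ + Se is positive definite
  have hLLt : (L * Lᵀ).PosSemidef := by
    have := posSemidef_self_mul_conjTranspose L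
    rwa [conjTranspose_eq_transpose_of_trivial] at this
  have hSy : (L * Lᵀ + Se).PosDef := Matrix.PosDef.posSemidef_add hLLt hSe
  have hSyT : (L * Lᵀ + Se)ᵀ = L * Lᵀ + Se := by
    rw [← conjTranspose_eq_transpose_of_trivial]; exact hSy.1.eq
  have hSydet : IsUnit (L * Lᵀ + Se).det := hSy.det_pos.ne'.isUnit
  have hSymul : (L * Lᵀ + Se) * (L * Lᵀ + Se)⁻¹ = 1 := mul_nonsing_inv _ hSydet
  have hSyinv : ((L * Lᵀ + Se)⁻¹).PosDef := hSy.inv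
  -- eigenvalue facts
  have hcub : ∀ y : Fin p → ℝ, y ⬝ᵥ (Se *ᵥ y) ≤ c * (y ⬝ᵥ y) :=
    quad_le_of_eigen hSe.1 fun i => le_ciSup (Finite.bddAbove_range _) i
  have hlamlb : ∀ i, lam ≤ hLL.eigenvalues i := fun i => ciInf_le (Finite.bddBelow_range _) i
  have hcpos : 0 < c := by
    obtain ⟨i0, hi0⟩ := exists_eq_ciSup_of_finite (f := hSe.1.eigenvalues)
    rw [hc_def, ← hi0]
    exact hSe.eigenvalues_pos i0
  have hlampos : 0 < lam := by
    obtain ⟨i0, hi0⟩ := exists_eq_ciInf_of_finite (f := hLL.eigenvalues)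
    rw [hlam_def, ← hi0]
    exact hG.eigenvalues_pos i0
  have hd : (0:ℝ) < lam + c := by linarith
  -- inverse quadratic bound : lam * (y ⬝ᵥ G⁻¹ y) ≤ y ⬝ᵥ y
  have hGinvub : ∀ y : Fin m → ℝ, lam * (y ⬝ᵥ ((Lᵀ * L)⁻¹ *ᵥ y)) ≤ y ⬝ᵥ y := by
    have hs := psd_sq_sub_smul hG.posSemidef (sub_smul_one_psd hLL hlamlb)
    intro y
    have hz : (Lᵀ * L) *ᵥ ((Lᵀ * L)⁻¹ *ᵥ y) = y := by
      rw [mulVec_mulVec, hGmul, one_mulVec]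
    have h := hs.dotProduct_mulVec_nonneg ((Lᵀ * L)⁻¹ *ᵥ y)
    simp only [star_trivial, sub_mulVec, dotProduct_sub, smul_mulVec, dotProduct_smul,
      smul_eq_mul] at h
    have e1 : ((Lᵀ * L)⁻¹ *ᵥ y) ⬝ᵥ (((Lᵀ * L) * (Lᵀ * L)) *ᵥ ((Lᵀ * L)⁻¹ *ᵥ y)) = y ⬝ᵥ y := by
      rw [← mulVec_mulVec, hz, symm_dot hGT, hz]
    have e2 : ((Lᵀ * L)⁻¹ *ᵥ y) ⬝ᵥ ((Lᵀ * L) *ᵥ ((Lᵀ * L)⁻¹ *ᵥ y)) = y ⬝ᵥ ((Lᵀ * L)⁻¹ *ᵥ y) := by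
      rw [symm_dot hGT, hz]
    rw [e1, e2] at h
    linarith
  -- the key per-vector bounds
  have key : ∀ x : Fin m → ℝ,
      lam * (x ⬝ᵥ x) ≤ (lam + c) * (x ⬝ᵥ ((Lᵀ * (L * Lᵀ + Se)⁻¹ * L) *ᵥ x)) ∧
      x ⬝ᵥ ((Lᵀ * (L * Lᵀ + Se)⁻¹ * L) *ᵥ x) ≤ x ⬝ᵥ x := by
    intro x
    have hq : x ⬝ᵥ ((Lᵀ * (L * Lᵀ + Se)⁻¹ * L) *ᵥ x)
        = (L *ᵥ x) ⬝ᵥ ((L * Lᵀ + Se)⁻¹ *ᵥ (L *ᵥ x)) := by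
      rw [Matrix.mul_assoc, ← mulVec_mulVec, ← mulVec_mulVec, dot_transpose]
    have hSyw : (L * Lᵀ + Se) *ᵥ ((L * Lᵀ + Se)⁻¹ *ᵥ (L *ᵥ x)) = L *ᵥ x := by
      rw [mulVec_mulVec, hSymul, one_mulVec]
    have hn0 : 0 ≤ x ⬝ᵥ x := dot_self_nonneg x
    -- upper bound
    have hub : (L *ᵥ x) ⬝ᵥ ((L * Lᵀ + Se)⁻¹ *ᵥ (L *ᵥ x)) ≤ x ⬝ᵥ x := by
      have eAA : ((L * Lᵀ + Se)⁻¹ *ᵥ (L *ᵥ x)) ⬝ᵥ ((L * Lᵀ + Se) *ᵥ ((L * Lᵀ + Se)⁻¹ *ᵥ (L *ᵥ x)))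
          = (Lᵀ *ᵥ ((L * Lᵀ + Se)⁻¹ *ᵥ (L *ᵥ x))) ⬝ᵥ (Lᵀ *ᵥ ((L * Lᵀ + Se)⁻¹ *ᵥ (L *ᵥ x)))
            + ((L * Lᵀ + Se)⁻¹ *ᵥ (L *ᵥ x)) ⬝ᵥ (Se *ᵥ ((L * Lᵀ + Se)⁻¹ *ᵥ (L *ᵥ x))) := by
        rw [add_mulVec, dotProduct_add, ← mulVec_mulVec, dot_transpose' L]
      rw [hSyw] at eAA
      have hq2 : ((L * Lᵀ + Se)⁻¹ *ᵥ (L *ᵥ x)) ⬝ᵥ (L *ᵥ x)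
          = (Lᵀ *ᵥ ((L * Lᵀ + Se)⁻¹ *ᵥ (L *ᵥ x))) ⬝ᵥ x := dot_transpose' L _ x
      have hCS : ((Lᵀ *ᵥ ((L * Lᵀ + Se)⁻¹ *ᵥ (L *ᵥ x))) ⬝ᵥ x)^2
          ≤ ((Lᵀ *ᵥ ((L * Lᵀ + Se)⁻¹ *ᵥ (L *ᵥ x))) ⬝ᵥ (Lᵀ *ᵥ ((L * Lᵀ + Se)⁻¹ *ᵥ (L *ᵥ x))))
            * (x ⬝ᵥ x) := by
        simpa [dotProduct, sq] using
          Finset.sum_mul_sq_le_sq_mul_sq Finset.univ (Lᵀ *ᵥ ((L * Lᵀ + Se)⁻¹ *ᵥ (L *ᵥ x))) x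
      have hq0 : 0 ≤ (L *ᵥ x) ⬝ᵥ ((L * Lᵀ + Se)⁻¹ *ᵥ (L *ᵥ x)) := by
        simpa using hSyinv.posSemidef.dotProduct_mulVec_nonneg (L *ᵥ x)
      have hS5 : 0 ≤ ((L * Lᵀ + Se)⁻¹ *ᵥ (L *ᵥ x)) ⬝ᵥ (Se *ᵥ ((L * Lᵀ + Se)⁻¹ *ᵥ (L *ᵥ x))) := by
        simpa using hSe.posSemidef.dotProduct_mulVec_nonneg ((L * Lᵀ + Se)⁻¹ *ᵥ (L *ᵥ x))
      have hcomm : (L *ᵥ x) ⬝ᵥ ((L * Lᵀ + Se)⁻¹ *ᵥ (L *ᵥ x))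
          = ((L * Lᵀ + Se)⁻¹ *ᵥ (L *ᵥ x)) ⬝ᵥ (L *ᵥ x) := dotProduct_comm _ _
      nlinarith [eAA, hq2, hCS, hq0, hS5, hcomm, hn0]
    -- lower bound
    have hlb : lam * (x ⬝ᵥ x)
        ≤ (lam + c) * ((L *ᵥ x) ⬝ᵥ ((L * Lᵀ + Se)⁻¹ *ᵥ (L *ᵥ x))) := by
      have hLv : Lᵀ *ᵥ (L *ᵥ ((Lᵀ * L)⁻¹ *ᵥ x)) = x := by
        rw [mulVec_mulVec, mulVec_mulVec, hGmul, one_mulVec]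
      have hvu : (L *ᵥ ((Lᵀ * L)⁻¹ *ᵥ x)) ⬝ᵥ (L *ᵥ x) = x ⬝ᵥ x := by
        rw [dot_transpose' L, hLv]
      have hvv : (L *ᵥ ((Lᵀ * L)⁻¹ *ᵥ x)) ⬝ᵥ (L *ᵥ ((Lᵀ * L)⁻¹ *ᵥ x))
          = x ⬝ᵥ ((Lᵀ * L)⁻¹ *ᵥ x) := by
        rw [dot_transpose' L, hLv]
      have hsv : (L *ᵥ ((Lᵀ * L)⁻¹ *ᵥ x)) ⬝ᵥ (Se *ᵥ (L *ᵥ ((Lᵀ * L)⁻¹ *ᵥ x)))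
          ≤ c * (x ⬝ᵥ ((Lᵀ * L)⁻¹ *ᵥ x)) := by
        have := hcub (L *ᵥ ((Lᵀ * L)⁻¹ *ᵥ x))
        rwa [hvv] at this
      have hr : lam * (x ⬝ᵥ ((Lᵀ * L)⁻¹ *ᵥ x)) ≤ x ⬝ᵥ x := hGinvub x
      have hr0 : 0 ≤ x ⬝ᵥ ((Lᵀ * L)⁻¹ *ᵥ x) := by
        rw [← hvv]; exact dot_self_nonneg _
      have eqww : ((L * Lᵀ + Se)⁻¹ *ᵥ (L *ᵥ x)) ⬝ᵥ ((L * Lᵀ + Se) *ᵥ ((L * Lᵀ + Se)⁻¹ *ᵥ (L *ᵥ x)))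
          = ((L * Lᵀ + Se)⁻¹ *ᵥ (L *ᵥ x)) ⬝ᵥ (L *ᵥ x) := by rw [hSyw]
      have eqvw : (L *ᵥ ((Lᵀ * L)⁻¹ *ᵥ x)) ⬝ᵥ ((L * Lᵀ + Se) *ᵥ ((L * Lᵀ + Se)⁻¹ *ᵥ (L *ᵥ x)))
          = x ⬝ᵥ x := by rw [hSyw, hvu]
      have eqwv : ((L * Lᵀ + Se)⁻¹ *ᵥ (L *ᵥ x)) ⬝ᵥ ((L * Lᵀ + Se) *ᵥ (L *ᵥ ((Lᵀ * L)⁻¹ *ᵥ x)))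
          = x ⬝ᵥ x := by
        rw [symm_dot hSyT, hSyw, dotProduct_comm, hvu]
      have eqvv : (L *ᵥ ((Lᵀ * L)⁻¹ *ᵥ x)) ⬝ᵥ ((L * Lᵀ + Se) *ᵥ (L *ᵥ ((Lᵀ * L)⁻¹ *ᵥ x)))
          = x ⬝ᵥ x + (L *ᵥ ((Lᵀ * L)⁻¹ *ᵥ x)) ⬝ᵥ (Se *ᵥ (L *ᵥ ((Lᵀ * L)⁻¹ *ᵥ x))) := by
        rw [add_mulVec, dotProduct_add, ← mulVec_mulVec, hLv, dot_transpose' L, hLv]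
      have hbase : ∀ t : ℝ,
          0 ≤ ((L * Lᵀ + Se)⁻¹ *ᵥ (L *ᵥ x)) ⬝ᵥ (L *ᵥ x) - 2*t*(x ⬝ᵥ x)
            + t^2*((x ⬝ᵥ x) + (L *ᵥ ((Lᵀ * L)⁻¹ *ᵥ x)) ⬝ᵥ (Se *ᵥ (L *ᵥ ((Lᵀ * L)⁻¹ *ᵥ x)))) := by
        intro t
        have h := hSy.posSemidef.dotProduct_mulVec_nonneg
          (((L * Lᵀ + Se)⁻¹ *ᵥ (L *ᵥ x)) - t • (L *ᵥ ((Lᵀ * L)⁻¹ *ᵥ x)))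
        simp only [star_trivial, mulVec_sub, mulVec_smul, dotProduct_sub, sub_dotProduct,
          dotProduct_smul, smul_dotProduct, smul_eq_mul] at h
        rw [eqww, eqvw, eqwv, eqvv] at h
        nlinarith [h]
      have h := hbase (lam/(lam+c))
      have hcomm : (L *ᵥ x) ⬝ᵥ ((L * Lᵀ + Se)⁻¹ *ᵥ (L *ᵥ x))
          = ((L * Lᵀ + Se)⁻¹ *ᵥ (L *ᵥ x)) ⬝ᵥ (L *ᵥ x) := dotProduct_comm _ _
      rw [hcomm]
      have hdne : lam + c ≠ 0 := ne_of_gt hd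
      set q := ((L * Lᵀ + Se)⁻¹ *ᵥ (L *ᵥ x)) ⬝ᵥ (L *ᵥ x) with hqdef
      set nn := x ⬝ᵥ x with hnndef
      set sv := (L *ᵥ ((Lᵀ * L)⁻¹ *ᵥ x)) ⬝ᵥ (Se *ᵥ (L *ᵥ ((Lᵀ * L)⁻¹ *ᵥ x))) with hsvdef
      set rr := x ⬝ᵥ ((Lᵀ * L)⁻¹ *ᵥ x) with hrrdef
      have h2 : 0 ≤ q*(lam+c)^2 - 2*lam*(lam+c)*nn + lam^2*(nn+sv) := by
        have e : q*(lam+c)^2 - 2*lam*(lam+c)*nn + lam^2*(nn+sv)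
            = (lam+c)^2 * (q - 2*(lam/(lam+c))*nn + (lam/(lam+c))^2*(nn+sv)) := by
          field_simp
        rw [e]
        exact mul_nonneg (by positivity) h
      have hstep : (lam + c) * (lam * nn) ≤ (lam + c) * ((lam + c) * q) := by
        nlinarith [h2, mul_le_mul_of_nonneg_left hsv (sq_nonneg lam),
          mul_le_mul_of_nonneg_left hr (le_of_lt (mul_pos hlampos hcpos)),
          hn0, hr0, hcpos, hlampos]
      exact le_of_mul_le_mul_left hstep hd
    exact ⟨by rw [hq]; exact hlb, by rw [hq]; exact hub⟩
  -- hermitian structure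
  have hKherm : (Lᵀ * (L * Lᵀ + Se)⁻¹ * L).IsHermitian := by
    show _ᴴ = _
    rw [conjTranspose_mul, conjTranspose_mul, hSyinv.1.eq,
      conjTranspose_eq_transpose_of_trivial L, conjTranspose_eq_transpose_of_trivial Lᵀ,
      transpose_transpose, Matrix.mul_assoc]
  have hMherm : ((1 : Matrix (Fin m) (Fin m) ℝ) - Lᵀ * (L * Lᵀ + Se)⁻¹ * L).IsHermitian :=
    Matrix.isHermitian_one.sub hKherm
  have hMpsd : ((1 : Matrix (Fin m) (Fin m) ℝ) - Lᵀ * (L * Lᵀ + Se)⁻¹ * L).PosSemidef := by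
    refine .of_dotProduct_mulVec_nonneg hMherm fun x => ?_
    have h := (key x).2
    simp only [star_trivial, sub_mulVec, one_mulVec, dotProduct_sub]
    linarith
  refine ⟨hMpsd, ?_⟩
  have hMub : ((c/(lam+c)) • (1 : Matrix (Fin m) (Fin m) ℝ)
      - ((1 : Matrix (Fin m) (Fin m) ℝ) - Lᵀ * (L * Lᵀ + Se)⁻¹ * L)).PosSemidef := by
    refine .of_dotProduct_mulVec_nonneg ?_ ?_
    · have h1 : ((c/(lam+c)) • (1 : Matrix (Fin m) (Fin m) ℝ)).IsHermitian := by
        rw [smul_one_eq_diagonal]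
        exact isHermitian_diagonal _
      exact h1.sub hMherm
    · intro x
      have h1 := (key x).1
      simp only [star_trivial, sub_mulVec, one_mulVec, dotProduct_sub, smul_mulVec,
        dotProduct_smul, smul_eq_mul]
      have hKge : lam/(lam+c) * (x ⬝ᵥ x) ≤ x ⬝ᵥ ((Lᵀ * (L * Lᵀ + Se)⁻¹ * L) *ᵥ x) := by
        rw [div_mul_eq_mul_div, div_le_iff₀ hd]
        linarith [h1]
      have hsum : c/(lam+c) * (x ⬝ᵥ x) + lam/(lam+c) * (x ⬝ᵥ x) = x ⬝ᵥ x := by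
        rw [← add_mul]
        have : c/(lam+c) + lam/(lam+c) = 1 := by
          field_simp
          ring
        rw [this, one_mul]
      linarith
  have hsq := psd_smul_sub_sq hMpsd hMub
  have hMT : ((1 : Matrix (Fin m) (Fin m) ℝ) - Lᵀ * (L * Lᵀ + Se)⁻¹ * L)ᵀ
      = (1 : Matrix (Fin m) (Fin m) ℝ) - Lᵀ * (L * Lᵀ + Se)⁻¹ * L := by
    rw [← conjTranspose_eq_transpose_of_trivial]
    exact hMherm.eq
  have hk0 : (0:ℝ) ≤ c/(lam+c) := le_of_lt (div_pos hcpos hd)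
  have hRHS : c / (c + lam) = c / (lam + c) := by rw [add_comm]
  rw [hRHS]
  set M := (1 : Matrix (Fin m) (Fin m) ℝ) - Lᵀ * (L * Lᵀ + Se)⁻¹ * L with hMdef
  show specNorm M ≤ c / (lam + c)
  unfold specNorm
  refine ContinuousLinearMap.opNorm_le_bound _ hk0 (fun v => ?_)
  have hns : ∀ z : EuclideanSpace ℝ (Fin m),
      ‖z‖^2 = (WithLp.equiv 2 (Fin m → ℝ) z) ⬝ᵥ (WithLp.equiv 2 (Fin m → ℝ) z) := by
    intro z
    rw [← real_inner_self_eq_norm_sq]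
    simp [PiLp.inner_apply, RCLike.inner_apply, dotProduct]
    rw [EuclideanSpace.norm_eq, Real.sq_sqrt (by positivity)]
    simp [sq]
  have happ : (LinearMap.toContinuousLinearMap (toEuclideanLin M)) v = toEuclideanLin M v := rfl
  rw [happ]
  have hEq : WithLp.equiv 2 (Fin m → ℝ) (toEuclideanLin M v)
      = M *ᵥ (WithLp.equiv 2 (Fin m → ℝ) v) := rfl
  have h1 : ‖toEuclideanLin M v‖^2
      = (M *ᵥ (WithLp.equiv 2 (Fin m → ℝ) v)) ⬝ᵥ (M *ᵥ (WithLp.equiv 2 (Fin m → ℝ) v)) := by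
    rw [hns, hEq]
  have h2 : (M *ᵥ (WithLp.equiv 2 (Fin m → ℝ) v)) ⬝ᵥ (M *ᵥ (WithLp.equiv 2 (Fin m → ℝ) v))
      = (WithLp.equiv 2 (Fin m → ℝ) v) ⬝ᵥ ((M * M) *ᵥ (WithLp.equiv 2 (Fin m → ℝ) v)) := by
    have h := dot_transpose M (WithLp.equiv 2 (Fin m → ℝ) v)
      (M *ᵥ (WithLp.equiv 2 (Fin m → ℝ) v))
    rw [hMT, mulVec_mulVec] at h
    exact h.symm
  have h3 : (WithLp.equiv 2 (Fin m → ℝ) v) ⬝ᵥ ((M * M) *ᵥ (WithLp.equiv 2 (Fin m → ℝ) v))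
      ≤ (c/(lam+c)) * ((WithLp.equiv 2 (Fin m → ℝ) v) ⬝ᵥ (M *ᵥ (WithLp.equiv 2 (Fin m → ℝ) v))) := by
    have h := hsq.dotProduct_mulVec_nonneg (WithLp.equiv 2 (Fin m → ℝ) v)
    simp only [star_trivial, sub_mulVec, dotProduct_sub, smul_mulVec, dotProduct_smul,
      smul_eq_mul] at h
    linarith
  have h4 : (WithLp.equiv 2 (Fin m → ℝ) v) ⬝ᵥ (M *ᵥ (WithLp.equiv 2 (Fin m → ℝ) v))
      ≤ (c/(lam+c)) * ((WithLp.equiv 2 (Fin m → ℝ) v) ⬝ᵥ (WithLp.equiv 2 (Fin m → ℝ) v)) := by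
    have h := hMub.dotProduct_mulVec_nonneg (WithLp.equiv 2 (Fin m → ℝ) v)
    simp only [star_trivial, sub_mulVec, one_mulVec, dotProduct_sub, smul_mulVec,
      dotProduct_smul, smul_eq_mul] at h
    linarith
  have h5 : 0 ≤ (WithLp.equiv 2 (Fin m → ℝ) v) ⬝ᵥ (M *ᵥ (WithLp.equiv 2 (Fin m → ℝ) v)) := by
    simpa using hMpsd.dotProduct_mulVec_nonneg (WithLp.equiv 2 (Fin m → ℝ) v)
  have h6 : ‖toEuclideanLin M v‖^2 ≤ (c/(lam+c))^2 * ‖v‖^2 := by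
    rw [h1, h2, hns v]
    nlinarith [h3, h4, h5, hk0]
  nlinarith [h6, norm_nonneg (toEuclideanLin M v), norm_nonneg v, hk0,
    mul_nonneg hk0 (norm_nonneg v), sq_nonneg (‖toEuclideanLin M v‖ - c/(lam+c) * ‖v‖),
    sq_nonneg (‖toEuclideanLin M v‖ + c/(lam+c) * ‖v‖)]
end

section
/- Fix m ≥ 1 and constants c₁ ≥ c₂ > 0. For each p ≥ m, let L_p ∈ ℝ^{p×m} and let Σ_{ε,p} ∈ ℝ^{p×p} be symmetric with c₂ ≤ λ_min(Σ_{ε,p}) ≤ λ_max(Σ_{ε,p}) ≤ c₁ (Assumption C), and assume L_pᵀL_p/p → V as p → ∞ for some positive definite V ∈ ℝ^{m×m} with c₂ ≤ λ_m(V) ≤ λ₁(V) ≤ c₁ (Assumption B). Set Σ_{y,p} := L_pL_pᵀ + Σ_{ε,p}. Then both ‖I_m − L_pᵀ Σ_{y,p}^{-1} L_p‖_F² = O(p^{-2}) and ‖L_pᵀ Σ_{y,p}^{-2} L_p‖_F² = O(p^{-2}) as p → ∞; that is, there exist C > 0 and p₀ such that for all p ≥ p₀, ‖I_m − L_pᵀ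 Σ_{y,p}^{-1} L_p‖_F² ≤ C/p² and ‖L_pᵀ Σ_{y,p}^{-2} L_p‖_F² ≤ C/p². -/
open Matrix Filter Topology

/-- Squared Frobenius norm of a real matrix. -/
def frobSq {a b : ℕ} (M : Matrix (Fin a) (Fin b) ℝ) : ℝ := ∑ i, ∑ j, M i j ^ 2


noncomputable def sqn {n : ℕ} (x : Fin n → ℝ) : ℝ := ∑ i, x i ^ 2

lemma sqn_eq_dot {n : ℕ} (x : Fin n → ℝ) : sqn x = x ⬝ᵥ x := by
  simp [sqn, dotProduct, sq]
lemma sqn_nonneg {n : ℕ} (x : Fin n → ℝ) : 0 ≤ sqn x :=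
  Finset.sum_nonneg fun i _ => sq_nonneg _
lemma sqn_eq_zero {n : ℕ} {x : Fin n → ℝ} (h : sqn x ≤ 0) : x = 0 := by
  have := Finset.sum_eq_zero_iff_of_nonneg (fun i (_ : i ∈ Finset.univ) => sq_nonneg (x i))
    |>.mp (le_antisymm h (sqn_nonneg x))
  funext i
  simpa [pow_eq_zero_iff] using this i (Finset.mem_univ i)
lemma dot_sq_le {n : ℕ} (x y : Fin n → ℝ) : (x ⬝ᵥ y) ^ 2 ≤ sqn x * sqn y := by
  simpa [sqn, dotProduct] using Finset.sum_mul_sq_le_sq_mul_sq Finset.univ x y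

lemma inv_bound {n : ℕ} {A : Matrix (Fin n) (Fin n) ℝ} {a : ℝ} (ha : 0 < a)
    (h : ∀ x, a * sqn x ≤ x ⬝ᵥ A.mulVec x) :
    IsUnit A ∧ ∀ y, sqn (A⁻¹.mulVec y) ≤ (1 / a) ^ 2 * sqn y := by
  have hinj : Function.Injective A.mulVec := by
    intro u v huv
    have hx : A.mulVec (u - v) = 0 := by
      rw [Matrix.mulVec_sub, huv, sub_self]
    have h1 := h (u - v)
    rw [hx] at h1
    simp only [dotProduct_zero] at h1
    have : sqn (u - v) ≤ 0 := by nlinarith [sqn_nonneg (u - v)]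
    have := sqn_eq_zero this
    exact sub_eq_zero.mp this
  have hU : IsUnit A := Matrix.mulVec_injective_iff_isUnit.mp hinj
  refine ⟨hU, fun y => ?_⟩
  set x := A⁻¹.mulVec y with hxdef
  have hAx : A.mulVec x = y := by
    rw [hxdef, Matrix.mulVec_mulVec, Matrix.mul_nonsing_inv _ ((Matrix.isUnit_iff_isUnit_det A).mp hU), Matrix.one_mulVec]
  have h1 : a * sqn x ≤ x ⬝ᵥ y := by rw [← hAx]; exact h x
  have h2 : (x ⬝ᵥ y) ^ 2 ≤ sqn x * sqn y := dot_sq_le x y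
  rcases eq_or_lt_of_le (sqn_nonneg x) with hx0 | hx0
  · rw [← hx0]
    have := sqn_nonneg y
    positivity
  · have h3 : (a * sqn x) ^ 2 ≤ sqn x * sqn y := by
      refine le_trans (pow_le_pow_left₀ (by positivity) h1 2) h2
    have h4 : a ^ 2 * sqn x ≤ sqn y := by nlinarith
    rw [div_pow, one_pow, one_div, inv_mul_eq_div, le_div_iff₀ (by positivity : (0:ℝ) < a ^ 2)]
    linarith

lemma dot_symm_form {n : ℕ} {S : Matrix (Fin n) (Fin n) ℝ} (hS : Sᵀ = S)
    (x y : Fin n → ℝ) : y ⬝ᵥ S.mulVec x = x ⬝ᵥ S.mulVec y := by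
  have h1 : y ᵥ* S = S *ᵥ y := by
    conv_lhs => rw [← hS, Matrix.vecMul_transpose]
  rw [Matrix.dotProduct_mulVec, h1, dotProduct_comm]

lemma bilin_cs {n : ℕ} {S : Matrix (Fin n) (Fin n) ℝ} (hS : Sᵀ = S)
    (hpsd : ∀ x, 0 ≤ x ⬝ᵥ S.mulVec x) (x y : Fin n → ℝ) :
    (x ⬝ᵥ S.mulVec y) ^ 2 ≤ (x ⬝ᵥ S.mulVec x) * (y ⬝ᵥ S.mulVec y) := by
  have key : ∀ t : ℝ, 0 ≤ (y ⬝ᵥ S.mulVec y) * (t * t) + (2 * (x ⬝ᵥ S.mulVec y)) * t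
      + (x ⬝ᵥ S.mulVec x) := by
    intro t
    have h0 := hpsd (x + t • y)
    rw [Matrix.mulVec_add, Matrix.mulVec_smul, add_dotProduct, smul_dotProduct,
      dotProduct_add, dotProduct_add, dotProduct_smul, dotProduct_smul,
      dot_symm_form hS x y] at h0
    simp only [smul_eq_mul] at h0
    nlinarith [h0]
  have hd := discrim_le_zero key
  rw [discrim] at hd
  nlinarith [hd]

lemma inv_form_lower {n : ℕ} {S : Matrix (Fin n) (Fin n) ℝ} (hS : Sᵀ = S) {c₁ c₂ : ℝ}
    (hc₂ : 0 < c₂) (hc₁ : 0 < c₁)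
    (hlow : ∀ x, c₂ * sqn x ≤ x ⬝ᵥ S.mulVec x) (hhigh : ∀ x, x ⬝ᵥ S.mulVec x ≤ c₁ * sqn x)
    (z : Fin n → ℝ) : (1 / c₁) * sqn z ≤ z ⬝ᵥ S⁻¹.mulVec z := by
  obtain ⟨hU, -⟩ := inv_bound hc₂ hlow
  set y := S⁻¹.mulVec z with hydef
  have hSy : S.mulVec y = z := by
    rw [hydef, Matrix.mulVec_mulVec, Matrix.mul_nonsing_inv _ ((Matrix.isUnit_iff_isUnit_det S).mp hU), Matrix.one_mulVec]
  have hpsd : ∀ x, 0 ≤ x ⬝ᵥ S.mulVec x := fun x =>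
    le_trans (by have := sqn_nonneg x; positivity) (hlow x)
  have hcs := bilin_cs hS hpsd z y
  have hyy : y ⬝ᵥ S.mulVec y = z ⬝ᵥ S⁻¹.mulVec z := by
    rw [hSy, ← hydef, dotProduct_comm]
  have hzy : z ⬝ᵥ S.mulVec y = sqn z := by rw [hSy, sqn_eq_dot]
  rw [hzy, hyy] at hcs
  have hzz : z ⬝ᵥ S.mulVec z ≤ c₁ * sqn z := hhigh z
  have ht : 0 ≤ z ⬝ᵥ S⁻¹.mulVec z := by
    rw [← hyy]; exact hpsd y
  rcases eq_or_lt_of_le (sqn_nonneg z) with hz0 | hz0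
  · rw [← hz0]; nlinarith
  · have h5 : sqn z ^ 2 ≤ c₁ * sqn z * (z ⬝ᵥ S⁻¹.mulVec z) := by
      calc sqn z ^ 2 ≤ (z ⬝ᵥ S.mulVec z) * (z ⬝ᵥ S⁻¹.mulVec z) := hcs
        _ ≤ c₁ * sqn z * (z ⬝ᵥ S⁻¹.mulVec z) := by
            exact mul_le_mul_of_nonneg_right hzz ht
    rw [div_mul_eq_mul_div, one_mul, div_le_iff₀ hc₁]
    nlinarith

lemma sub_smul_one_posSemidef {n : ℕ} {A : Matrix (Fin n) (Fin n) ℝ}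
    (hA : A.IsHermitian) {a : ℝ} (h : ∀ i, a ≤ hA.eigenvalues i) :
    (A - a • 1).PosSemidef := by
  set U : Matrix (Fin n) (Fin n) ℝ := (hA.eigenvectorUnitary : Matrix (Fin n) (Fin n) ℝ)
  have hUU : U * star U = 1 := (Matrix.mem_unitaryGroup_iff).mp hA.eigenvectorUnitary.2
  have key : A - a • 1 = U * Matrix.diagonal (fun i => hA.eigenvalues i - a) * star U := by
    have hsp := hA.spectral_theorem
    have h1 : a • (1 : Matrix (Fin n) (Fin n) ℝ) = U * (a • 1) * star U := by
      rw [Matrix.mul_smul, Matrix.smul_mul, mul_one, hUU]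
    conv_lhs => rw [hsp, h1]
    rw [Unitary.conjStarAlgAut_apply, ← Matrix.sub_mul, ← Matrix.mul_sub]
    congr 1
    congr 1
    ext i j
    by_cases hij : i = j <;>
      simp [Matrix.diagonal, hij, Matrix.one_apply, RCLike.ofReal]
  rw [key]
  have hd : (Matrix.diagonal (fun i => hA.eigenvalues i - a)).PosSemidef :=
    Matrix.posSemidef_diagonal_iff.mpr fun i => sub_nonneg.mpr (h i)
  have := hd.mul_mul_conjTranspose_same U
  rwa [Matrix.star_eq_conjTranspose]

lemma smul_one_sub_posSemidef {n : ℕ} {A : Matrix (Fin n) (Fin n) ℝ}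
    (hA : A.IsHermitian) {b : ℝ} (h : ∀ i, hA.eigenvalues i ≤ b) :
    (b • 1 - A).PosSemidef := by
  set U : Matrix (Fin n) (Fin n) ℝ := (hA.eigenvectorUnitary : Matrix (Fin n) (Fin n) ℝ)
  have hUU : U * star U = 1 := (Matrix.mem_unitaryGroup_iff).mp hA.eigenvectorUnitary.2
  have key : b • 1 - A = U * Matrix.diagonal (fun i => b - hA.eigenvalues i) * star U := by
    have hsp := hA.spectral_theorem
    have h1 : b • (1 : Matrix (Fin n) (Fin n) ℝ) = U * (b • 1) * star U := by
      rw [Matrix.mul_smul, Matrix.smul_mul, mul_one, hUU]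
    conv_lhs => rw [hsp, h1]
    rw [Unitary.conjStarAlgAut_apply, ← Matrix.sub_mul, ← Matrix.mul_sub]
    congr 1
    congr 1
    ext i j
    by_cases hij : i = j <;>
      simp [Matrix.diagonal, hij, Matrix.one_apply, RCLike.ofReal]
  rw [key]
  have hd : (Matrix.diagonal (fun i => b - hA.eigenvalues i)).PosSemidef :=
    Matrix.posSemidef_diagonal_iff.mpr fun i => sub_nonneg.mpr (h i)
  have := hd.mul_mul_conjTranspose_same U
  rwa [Matrix.star_eq_conjTranspose]

lemma eig_form_bounds {n : ℕ} {A : Matrix (Fin n) (Fin n) ℝ} (hA : A.IsHermitian)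
    {a b : ℝ} (h1 : ∀ i, a ≤ hA.eigenvalues i) (h2 : ∀ i, hA.eigenvalues i ≤ b)
    (x : Fin n → ℝ) : a * sqn x ≤ x ⬝ᵥ A.mulVec x ∧ x ⬝ᵥ A.mulVec x ≤ b * sqn x := by
  have hl := (sub_smul_one_posSemidef hA h1).dotProduct_mulVec_nonneg x
  have hu := (smul_one_sub_posSemidef hA h2).dotProduct_mulVec_nonneg x
  have hsx : star x = x := by funext i; simp
  rw [hsx, Matrix.sub_mulVec, Matrix.smul_mulVec, Matrix.one_mulVec,
    dotProduct_sub, dotProduct_smul, smul_eq_mul, ← sqn_eq_dot, sub_nonneg] at hl hu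
  exact ⟨hl, hu⟩


lemma frobSq_eq {a b : ℕ} (M : Matrix (Fin a) (Fin b) ℝ) :
    frobSq M = ∑ j, sqn (fun i => M i j) := by
  rw [frobSq]; exact Finset.sum_comm

lemma col_eq_mulVec {a b : ℕ} (M : Matrix (Fin a) (Fin b) ℝ) (j : Fin b) :
    (fun i => M i j) = M.mulVec (Pi.single j 1) := by
  funext i
  simp [Matrix.mulVec, dotProduct, Pi.single_apply]

lemma sqn_single {n : ℕ} (j : Fin n) : sqn (Pi.single j (1:ℝ)) = 1 := by
  simp [sqn, Pi.single_apply]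

lemma dot_mul_self {p q : ℕ} (M : Matrix (Fin p) (Fin q) ℝ) (x : Fin p → ℝ) :
    x ⬝ᵥ (M * Mᵀ).mulVec x = sqn (Mᵀ.mulVec x) := by
  rw [← Matrix.mulVec_mulVec, Matrix.dotProduct_mulVec, ← Matrix.mulVec_transpose,
    sqn_eq_dot]

lemma sqn_mulVec {p q : ℕ} (M : Matrix (Fin p) (Fin q) ℝ) (x : Fin q → ℝ) :
    sqn (M.mulVec x) = x ⬝ᵥ (Mᵀ * M).mulVec x := by
  rw [sqn_eq_dot, ← Matrix.mulVec_mulVec, Matrix.dotProduct_mulVec x Mᵀ (M.mulVec x),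
    Matrix.vecMul_transpose]

lemma quad_sandwich {p q : ℕ} (M : Matrix (Fin p) (Fin q) ℝ) (S : Matrix (Fin p) (Fin p) ℝ)
    (x : Fin q → ℝ) :
    x ⬝ᵥ (Mᵀ * S * M).mulVec x = (M.mulVec x) ⬝ᵥ S.mulVec (M.mulVec x) := by
  rw [← Matrix.mulVec_mulVec, ← Matrix.mulVec_mulVec, Matrix.dotProduct_mulVec,
    Matrix.vecMul_transpose]

lemma quad_expand {n : ℕ} (M : Matrix (Fin n) (Fin n) ℝ) (x : Fin n → ℝ) :
    x ⬝ᵥ M.mulVec x = ∑ i, ∑ j, x i * M i j * x j := by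
  simp [dotProduct, Matrix.mulVec, Finset.mul_sum, mul_assoc]

lemma quad_close {n : ℕ} {M N : Matrix (Fin n) (Fin n) ℝ} {ε : ℝ} (hε : 0 ≤ ε)
    (h : ∀ i j, |M i j - N i j| ≤ ε) (x : Fin n → ℝ) :
    |x ⬝ᵥ M.mulVec x - x ⬝ᵥ N.mulVec x| ≤ ε * n * sqn x := by
  rw [quad_expand, quad_expand, ← Finset.sum_sub_distrib]
  simp_rw [← Finset.sum_sub_distrib]
  have step1 : |∑ i, ∑ j, (x i * M i j * x j - x i * N i j * x j)|
      ≤ ∑ i : Fin n, ∑ j : Fin n, ε * (|x i| * |x j|) := by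
    refine le_trans (Finset.abs_sum_le_sum_abs _ _) (Finset.sum_le_sum fun i _ => ?_)
    refine le_trans (Finset.abs_sum_le_sum_abs _ _) (Finset.sum_le_sum fun j _ => ?_)
    have : x i * M i j * x j - x i * N i j * x j = (M i j - N i j) * (x i * x j) := by ring
    rw [this, abs_mul, abs_mul]
    exact mul_le_mul_of_nonneg_right (h i j) (by positivity)
  refine le_trans step1 ?_
  have : ∑ i : Fin n, ∑ j : Fin n, ε * (|x i| * |x j|)
      = ε * (∑ i, |x i|) ^ 2 := by
    rw [sq, Finset.sum_mul_sum, Finset.mul_sum]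
    congr 1; funext i
    rw [Finset.mul_sum]
  rw [this]
  have h2 : (∑ i, |x i|) ^ 2 ≤ (n : ℝ) * sqn x := by
    have := sq_sum_le_card_mul_sum_sq (s := Finset.univ) (f := fun i : Fin n => |x i|)
    simpa [sqn, sq_abs] using this
  calc ε * (∑ i, |x i|) ^ 2 ≤ ε * ((n : ℝ) * sqn x) := by
        exact mul_le_mul_of_nonneg_left h2 hε
    _ = ε * n * sqn x := by ring

lemma core {m p : ℕ} {c₁ c₂ : ℝ} (hc₂ : 0 < c₂) (hc₁₂ : c₂ ≤ c₁) (hp : 1 ≤ p)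
    (Lp : Matrix (Fin p) (Fin m) ℝ) (Sp : Matrix (Fin p) (Fin p) ℝ)
    (hSpT : Spᵀ = Sp)
    (hClow : ∀ x, c₂ * sqn x ≤ x ⬝ᵥ Sp.mulVec x)
    (hChigh : ∀ x, x ⬝ᵥ Sp.mulVec x ≤ c₁ * sqn x)
    (hApLow : ∀ x, (c₂ / 2) * p * sqn x ≤ x ⬝ᵥ (Lpᵀ * Lp).mulVec x)
    (hApHigh : ∀ x, x ⬝ᵥ (Lpᵀ * Lp).mulVec x ≤ (c₁ + c₂ / 2) * p * sqn x) :
    frobSq (1 - Lpᵀ * (Lp * Lpᵀ + Sp)⁻¹ * Lp) ≤ (m * (4 * c₁ ^ 2 / c₂ ^ 2)) / p ^ 2 ∧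
    frobSq (Lpᵀ * ((Lp * Lpᵀ + Sp)⁻¹ * (Lp * Lpᵀ + Sp)⁻¹) * Lp) ≤
      (m ^ 2 * (16 * c₁ ^ 4 * (c₁ + c₂ / 2) ^ 2 / c₂ ^ 8)) / p ^ 2 := by
  have hc₁ : 0 < c₁ := lt_of_lt_of_le hc₂ hc₁₂
  have hppos : (0:ℝ) < p := by exact_mod_cast hp
  obtain ⟨hSU, hSinv⟩ := inv_bound hc₂ hClow
  have hSd : IsUnit Sp.det := (Matrix.isUnit_iff_isUnit_det Sp).mp hSU
  have hSinvLow := inv_form_lower hSpT hc₂ hc₁ hClow hChigh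
  set β : ℝ := c₂ * p / (2 * c₁) with hβdef
  have hβ : 0 < β := by positivity
  set B : Matrix (Fin m) (Fin m) ℝ := Lpᵀ * Sp⁻¹ * Lp with hBdef
  have hBlow : ∀ x, (1 + β) * sqn x ≤ x ⬝ᵥ (1 + B).mulVec x := by
    intro x
    have e : x ⬝ᵥ (1 + B).mulVec x = sqn x + x ⬝ᵥ B.mulVec x := by
      rw [Matrix.add_mulVec, Matrix.one_mulVec, dotProduct_add, sqn_eq_dot]
    rw [e]
    have h1 : x ⬝ᵥ B.mulVec x = (Lp.mulVec x) ⬝ᵥ Sp⁻¹.mulVec (Lp.mulVec x) :=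
      quad_sandwich Lp Sp⁻¹ x
    have h2 : (1 / c₁) * sqn (Lp.mulVec x) ≤ (Lp.mulVec x) ⬝ᵥ Sp⁻¹.mulVec (Lp.mulVec x) :=
      hSinvLow _
    have h3 : (c₂ / 2) * p * sqn x ≤ sqn (Lp.mulVec x) := by
      rw [sqn_mulVec]; exact hApLow x
    have h4 : β * sqn x ≤ (1 / c₁) * sqn (Lp.mulVec x) := by
      have e4 : β * sqn x = (1 / c₁) * ((c₂ / 2) * p * sqn x) := by
        rw [hβdef]; ring
      rw [e4]
      exact mul_le_mul_of_nonneg_left h3 (by positivity)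
    rw [h1]
    nlinarith [h4, h2]
  obtain ⟨hBU, hBinv⟩ := inv_bound (a := 1 + β) (by linarith) hBlow
  have hBd : IsUnit (1 + B).det := (Matrix.isUnit_iff_isUnit_det _).mp hBU
  set Sg : Matrix (Fin p) (Fin p) ℝ := Lp * Lpᵀ + Sp with hSgdef
  have hSglow : ∀ x, c₂ * sqn x ≤ x ⬝ᵥ Sg.mulVec x := by
    intro x
    have e : x ⬝ᵥ Sg.mulVec x = sqn (Lpᵀ.mulVec x) + x ⬝ᵥ Sp.mulVec x := by
      rw [hSgdef, Matrix.add_mulVec, dotProduct_add, dot_mul_self]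
    rw [e]
    have := hClow x
    nlinarith [sqn_nonneg (Lpᵀ.mulVec x)]
  obtain ⟨hSgU, -⟩ := inv_bound hc₂ hSglow
  have hSgd : IsUnit Sg.det := (Matrix.isUnit_iff_isUnit_det _).mp hSgU
  set X : Matrix (Fin p) (Fin m) ℝ := Sp⁻¹ * (Lp * (1 + B)⁻¹) with hXdef
  have h1 : Sp * Sp⁻¹ = 1 := Matrix.mul_nonsing_inv _ hSd
  have h2 : (1 + B) * (1 + B)⁻¹ = 1 := Matrix.mul_nonsing_inv _ hBd
  have hBinvsum : B * (1 + B)⁻¹ + (1 + B)⁻¹ = 1 := by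
    have e : B * (1 + B)⁻¹ + (1 + B)⁻¹ = (B + 1) * (1 + B)⁻¹ := by
      rw [Matrix.add_mul, Matrix.one_mul]
    rw [e, add_comm B 1, h2]
  have e2 : Lpᵀ * (Sp⁻¹ * (Lp * (1 + B)⁻¹)) = B * (1 + B)⁻¹ := by
    simp only [hBdef, Matrix.mul_assoc]
  have hSX : Sg * X = Lp := by
    have e1 : Sg * X = Lp * (Lpᵀ * (Sp⁻¹ * (Lp * (1 + B)⁻¹)))
        + Sp * Sp⁻¹ * (Lp * (1 + B)⁻¹) := by
      simp only [hSgdef, hXdef, Matrix.add_mul, Matrix.mul_assoc]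
    rw [e1, h1, Matrix.one_mul, e2, ← Matrix.mul_add, hBinvsum, Matrix.mul_one]
  have hXL : Sg⁻¹ * Lp = X := by
    rw [← hSX, ← Matrix.mul_assoc, Matrix.nonsing_inv_mul _ hSgd, Matrix.one_mul]
  have hfirst : 1 - Lpᵀ * Sg⁻¹ * Lp = (1 + B)⁻¹ := by
    rw [Matrix.mul_assoc, hXL, hXdef, e2]
    exact sub_eq_of_eq_add' hBinvsum.symm
  constructor
  · rw [hfirst, frobSq_eq]
    have hcol : ∀ j : Fin m, sqn (fun i => (1 + B)⁻¹ i j) ≤ (1 / (1 + β)) ^ 2 := by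
      intro j
      rw [col_eq_mulVec]
      calc sqn ((1 + B)⁻¹.mulVec (Pi.single j 1))
          ≤ (1 / (1 + β)) ^ 2 * sqn (Pi.single j (1:ℝ)) := hBinv _
        _ = (1 / (1 + β)) ^ 2 := by rw [sqn_single, mul_one]
    calc (∑ j : Fin m, sqn fun i => (1 + B)⁻¹ i j) ≤ ∑ j : Fin m, (1 / (1 + β)) ^ 2 :=
          Finset.sum_le_sum fun j _ => hcol j
      _ = m * (1 / (1 + β)) ^ 2 := by rw [Finset.sum_const]; simp [mul_comm]
      _ ≤ m * (1 / β) ^ 2 := by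
          have : (1 / (1 + β)) ^ 2 ≤ (1 / β) ^ 2 := by
            apply pow_le_pow_left₀ (by positivity)
            apply div_le_div_of_nonneg_left one_pos.le hβ (by linarith)
          exact mul_le_mul_of_nonneg_left this (by positivity)
      _ = (m * (4 * c₁ ^ 2 / c₂ ^ 2)) / p ^ 2 := by
          rw [hβdef]; field_simp; ring
  · have hSgT : Sgᵀ = Sg := by
      rw [hSgdef, Matrix.transpose_add, Matrix.transpose_mul, Matrix.transpose_transpose, hSpT]
    have hSginvT : (Sg⁻¹)ᵀ = Sg⁻¹ := by
      rw [Matrix.transpose_nonsing_inv, hSgT]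
    have hM2 : Lpᵀ * (Sg⁻¹ * Sg⁻¹) * Lp = (Sg⁻¹ * Lp)ᵀ * (Sg⁻¹ * Lp) := by
      rw [Matrix.transpose_mul, hSginvT]
      simp only [Matrix.mul_assoc]
    rw [hM2, hXL]
    set γ : ℝ := (1 / c₂) ^ 2 * ((c₁ + c₂ / 2) * p) * (1 / (1 + β)) ^ 2 with hγdef
    have hγ0 : 0 ≤ γ := by positivity
    have hcol : ∀ j : Fin m, sqn (fun k => X k j) ≤ γ := by
      intro j
      rw [col_eq_mulVec]
      set u : Fin m → ℝ := (1 + B)⁻¹.mulVec (Pi.single j 1) with hudef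
      have hXsplit : X.mulVec (Pi.single j 1) = Sp⁻¹.mulVec (Lp.mulVec u) := by
        rw [hXdef, ← Matrix.mulVec_mulVec, ← Matrix.mulVec_mulVec]
      rw [hXsplit]
      have s1 : sqn (Sp⁻¹.mulVec (Lp.mulVec u)) ≤ (1 / c₂) ^ 2 * sqn (Lp.mulVec u) :=
        hSinv _
      have s2 : sqn (Lp.mulVec u) ≤ (c₁ + c₂ / 2) * p * sqn u := by
        rw [sqn_mulVec]; exact hApHigh u
      have s3 : sqn u ≤ (1 / (1 + β)) ^ 2 := by
        rw [hudef]
        calc sqn ((1 + B)⁻¹.mulVec (Pi.single j 1))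
            ≤ (1 / (1 + β)) ^ 2 * sqn (Pi.single j (1:ℝ)) := hBinv _
          _ = (1 / (1 + β)) ^ 2 := by rw [sqn_single, mul_one]
      calc sqn (Sp⁻¹.mulVec (Lp.mulVec u)) ≤ (1 / c₂) ^ 2 * sqn (Lp.mulVec u) := s1
        _ ≤ (1 / c₂) ^ 2 * ((c₁ + c₂ / 2) * p * sqn u) := by
            exact mul_le_mul_of_nonneg_left s2 (by positivity)
        _ ≤ (1 / c₂) ^ 2 * ((c₁ + c₂ / 2) * p * ((1 / (1 + β)) ^ 2)) := by
            have : (c₁ + c₂ / 2) * p * sqn u ≤ (c₁ + c₂ / 2) * p * ((1 / (1 + β)) ^ 2) :=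
              mul_le_mul_of_nonneg_left s3 (by positivity)
            exact mul_le_mul_of_nonneg_left this (by positivity)
        _ = γ := by rw [hγdef]; ring
    have hentry : frobSq (Xᵀ * X) ≤ ∑ i : Fin m, ∑ j : Fin m, γ ^ 2 := by
      rw [frobSq]
      refine Finset.sum_le_sum fun i _ => Finset.sum_le_sum fun j _ => ?_
      have he : (Xᵀ * X) i j = (fun k => X k i) ⬝ᵥ (fun k => X k j) := by
        simp [Matrix.mul_apply, dotProduct]
      rw [he]
      calc ((fun k => X k i) ⬝ᵥ (fun k => X k j)) ^ 2
          ≤ sqn (fun k => X k i) * sqn (fun k => X k j) := dot_sq_le _ _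
        _ ≤ γ * γ := by
            exact mul_le_mul (hcol i) (hcol j) (sqn_nonneg _) hγ0
        _ = γ ^ 2 := (sq γ).symm
    refine le_trans hentry ?_
    rw [Finset.sum_const, Finset.sum_const]
    simp only [Finset.card_univ, Fintype.card_fin, nsmul_eq_mul]
    have hγle : γ ≤ 4 * c₁ ^ 2 * (c₁ + c₂ / 2) / (c₂ ^ 4 * p) := by
      rw [hγdef]
      have h5 : (1 / (1 + β)) ^ 2 ≤ (1 / β) ^ 2 := by
        apply pow_le_pow_left₀ (by positivity)
        apply div_le_div_of_nonneg_left one_pos.le hβ (by linarith)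
      calc (1 / c₂) ^ 2 * ((c₁ + c₂ / 2) * p) * (1 / (1 + β)) ^ 2
          ≤ (1 / c₂) ^ 2 * ((c₁ + c₂ / 2) * p) * (1 / β) ^ 2 := by
            exact mul_le_mul_of_nonneg_left h5 (by positivity)
        _ = 4 * c₁ ^ 2 * (c₁ + c₂ / 2) / (c₂ ^ 4 * p) := by
            rw [hβdef]; field_simp; ring
    have : γ ^ 2 ≤ (4 * c₁ ^ 2 * (c₁ + c₂ / 2) / (c₂ ^ 4 * p)) ^ 2 :=
      pow_le_pow_left₀ hγ0 hγle 2
    calc (m : ℝ) * ((m : ℝ) * γ ^ 2) ≤ (m : ℝ) * ((m : ℝ) * (4 * c₁ ^ 2 * (c₁ + c₂ / 2) / (c₂ ^ 4 * p)) ^ 2) := by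
          have hm0 : (0:ℝ) ≤ m := Nat.cast_nonneg m
          exact mul_le_mul_of_nonneg_left (mul_le_mul_of_nonneg_left this hm0) hm0
      _ = (m ^ 2 * (16 * c₁ ^ 4 * (c₁ + c₂ / 2) ^ 2 / c₂ ^ 8)) / p ^ 2 := by
          field_simp; ring

set_option maxHeartbeats 1000000

/-- Lemma S1: under Assumptions B and C, `‖I_m − LᵀΣ_y⁻¹L‖_F² = O(p⁻²)` and
`‖LᵀΣ_y⁻²L‖_F² = O(p⁻²)`, where `Σ_y = LLᵀ + Σ_ε`.  The eigenvalue bounds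
`c₂ ≤ λ_min(Σ_ε) ≤ λ_max(Σ_ε) ≤ c₁` are expressed through the quadratic form. -/
theorem stmt12 (m : ℕ) (hm : 1 ≤ m) (c₁ c₂ : ℝ) (hc₂ : 0 < c₂) (hc₁₂ : c₂ ≤ c₁)
    (L : ∀ p : ℕ, Matrix (Fin p) (Fin m) ℝ)
    (Se : ∀ p : ℕ, Matrix (Fin p) (Fin p) ℝ)
    (hSym : ∀ p, (Se p).IsHermitian)
    (hC : ∀ p, ∀ x : Fin p → ℝ,
      c₂ * (∑ i, x i ^ 2) ≤ x ⬝ᵥ (Se p).mulVec x ∧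
        x ⬝ᵥ (Se p).mulVec x ≤ c₁ * (∑ i, x i ^ 2))
    (V : Matrix (Fin m) (Fin m) ℝ) (hVpos : V.PosDef)
    (hVeig : ∀ i, c₂ ≤ hVpos.1.eigenvalues i ∧ hVpos.1.eigenvalues i ≤ c₁)
    (hB : ∀ i j, Tendsto (fun p : ℕ => ((L p)ᵀ * L p) i j / (p : ℝ)) atTop (𝓝 (V i j))) :
    ∃ C : ℝ, 0 < C ∧ ∃ p₀ : ℕ, ∀ p, p₀ ≤ p →
      frobSq ((1 : Matrix (Fin m) (Fin m) ℝ) -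
          (L p)ᵀ * (L p * (L p)ᵀ + Se p)⁻¹ * L p) ≤ C / (p : ℝ) ^ 2 ∧
      frobSq ((L p)ᵀ * ((L p * (L p)ᵀ + Se p)⁻¹ * (L p * (L p)ᵀ + Se p)⁻¹) * L p) ≤
        C / (p : ℝ) ^ 2 := by
  have hc₁ : 0 < c₁ := lt_of_lt_of_le hc₂ hc₁₂
  have hm' : (0:ℝ) < m := by exact_mod_cast hm
  have hm1 : (1:ℝ) ≤ m := by exact_mod_cast hm
  set δ : ℝ := c₂ / (2 * (m:ℝ) ^ 2) with hδdef
  have hδ : 0 < δ := by positivity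
  have hVform := eig_form_bounds hVpos.1 (fun i => (hVeig i).1) (fun i => (hVeig i).2)
  have hEv : ∀ᶠ p : ℕ in atTop, ∀ i j, |((L p)ᵀ * L p) i j / (p:ℝ) - V i j| ≤ δ := by
    rw [eventually_all]; intro i
    rw [eventually_all]; intro j
    have h2 := Metric.tendsto_nhds.mp (hB i j) δ hδ
    filter_upwards [h2] with p hp
    rw [Real.dist_eq] at hp; exact hp.le
  obtain ⟨p₀, hp₀⟩ := eventually_atTop.mp (hEv.and (eventually_ge_atTop 1))
  set C₁ : ℝ := m * (4 * c₁ ^ 2 / c₂ ^ 2) with hC₁def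
  set C₂ : ℝ := m ^ 2 * (16 * c₁ ^ 4 * (c₁ + c₂ / 2) ^ 2 / c₂ ^ 8) with hC₂def
  have hC₁pos : 0 < C₁ := by rw [hC₁def]; positivity
  have hC₂pos : 0 < C₂ := by rw [hC₂def]; positivity
  refine ⟨C₁ + C₂, by positivity, p₀, fun p hp => ?_⟩
  obtain ⟨hE, hp1⟩ := hp₀ p hp
  have hppos : (0:ℝ) < p := by exact_mod_cast hp1
  -- derive quadratic form bounds for Ap := Lᵀ L
  have hApLow : ∀ x : Fin m → ℝ,
      (c₂ / 2) * p * sqn x ≤ x ⬝ᵥ ((L p)ᵀ * L p).mulVec x := by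
    intro x
    have hMij : ∀ i j, |((p:ℝ)⁻¹ • ((L p)ᵀ * L p)) i j - V i j| ≤ δ := by
      intro i j
      have := hE i j
      rwa [div_eq_inv_mul] at this
    have hq := quad_close hδ.le hMij x
    have he : x ⬝ᵥ ((p:ℝ)⁻¹ • ((L p)ᵀ * L p)).mulVec x
        = (p:ℝ)⁻¹ * (x ⬝ᵥ ((L p)ᵀ * L p).mulVec x) := by
      rw [Matrix.smul_mulVec, dotProduct_smul, smul_eq_mul]
    rw [he] at hq
    have hδm : δ * m ≤ c₂ / 2 := by
      rw [hδdef, div_mul_eq_mul_div, div_le_div_iff₀ (by positivity) two_pos]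
      have hmm : (m:ℝ) ≤ (m:ℝ) ^ 2 := by nlinarith
      nlinarith [mul_le_mul_of_nonneg_left hmm hc₂.le]
    have habs := abs_sub_le_iff.mp hq
    have hV1 := (hVform x).1
    have hs := sqn_nonneg x
    have key : c₂ / 2 * sqn x ≤ (p:ℝ)⁻¹ * (x ⬝ᵥ ((L p)ᵀ * L p).mulVec x) := by
      nlinarith [habs.2, hδm]
    have hpinv : (p:ℝ) * (p:ℝ)⁻¹ = 1 := mul_inv_cancel₀ (ne_of_gt hppos)
    calc (c₂ / 2) * p * sqn x = (p:ℝ) * (c₂ / 2 * sqn x) := by ring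
      _ ≤ (p:ℝ) * ((p:ℝ)⁻¹ * (x ⬝ᵥ ((L p)ᵀ * L p).mulVec x)) :=
          mul_le_mul_of_nonneg_left key hppos.le
      _ = ((p:ℝ) * (p:ℝ)⁻¹) * (x ⬝ᵥ ((L p)ᵀ * L p).mulVec x) := by ring
      _ = x ⬝ᵥ ((L p)ᵀ * L p).mulVec x := by rw [hpinv, one_mul]
  have hApHigh : ∀ x : Fin m → ℝ,
      x ⬝ᵥ ((L p)ᵀ * L p).mulVec x ≤ (c₁ + c₂ / 2) * p * sqn x := by
    intro x
    have hMij : ∀ i j, |((p:ℝ)⁻¹ • ((L p)ᵀ * L p)) i j - V i j| ≤ δ := by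
      intro i j
      have := hE i j
      rwa [div_eq_inv_mul] at this
    have hq := quad_close hδ.le hMij x
    have he : x ⬝ᵥ ((p:ℝ)⁻¹ • ((L p)ᵀ * L p)).mulVec x
        = (p:ℝ)⁻¹ * (x ⬝ᵥ ((L p)ᵀ * L p).mulVec x) := by
      rw [Matrix.smul_mulVec, dotProduct_smul, smul_eq_mul]
    rw [he] at hq
    have hδm : δ * m ≤ c₂ / 2 := by
      rw [hδdef, div_mul_eq_mul_div, div_le_div_iff₀ (by positivity) two_pos]
      have hmm : (m:ℝ) ≤ (m:ℝ) ^ 2 := by nlinarith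
      nlinarith [mul_le_mul_of_nonneg_left hmm hc₂.le]
    have habs := abs_sub_le_iff.mp hq
    have hV2 := (hVform x).2
    have hs := sqn_nonneg x
    have key : (p:ℝ)⁻¹ * (x ⬝ᵥ ((L p)ᵀ * L p).mulVec x) ≤ (c₁ + c₂ / 2) * sqn x := by
      nlinarith [habs.1, hδm]
    have hpinv : (p:ℝ) * (p:ℝ)⁻¹ = 1 := mul_inv_cancel₀ (ne_of_gt hppos)
    calc x ⬝ᵥ ((L p)ᵀ * L p).mulVec x
        = ((p:ℝ) * (p:ℝ)⁻¹) * (x ⬝ᵥ ((L p)ᵀ * L p).mulVec x) := by rw [hpinv, one_mul]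
      _ = (p:ℝ) * ((p:ℝ)⁻¹ * (x ⬝ᵥ ((L p)ᵀ * L p).mulVec x)) := by ring
      _ ≤ (p:ℝ) * ((c₁ + c₂ / 2) * sqn x) := mul_le_mul_of_nonneg_left key hppos.le
      _ = (c₁ + c₂ / 2) * p * sqn x := by ring
  have hSpT : (Se p)ᵀ = Se p := by
    rw [← Matrix.conjTranspose_eq_transpose_of_trivial]; exact hSym p
  obtain ⟨r1, r2⟩ := core hc₂ hc₁₂ hp1 (L p) (Se p) hSpT
    (fun x => (hC p x).1) (fun x => (hC p x).2) hApLow hApHigh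
  have hp2 : (0:ℝ) < (p:ℝ) ^ 2 := by positivity
  constructor
  · calc frobSq (1 - (L p)ᵀ * (L p * (L p)ᵀ + Se p)⁻¹ * L p) ≤ C₁ / (p:ℝ) ^ 2 := r1
      _ ≤ (C₁ + C₂) / (p:ℝ) ^ 2 := by
          gcongr
          linarith
  · calc frobSq ((L p)ᵀ * ((L p * (L p)ᵀ + Se p)⁻¹ * (L p * (L p)ᵀ + Se p)⁻¹) * L p)
        ≤ C₂ / (p:ℝ) ^ 2 := r2
      _ ≤ (C₁ + C₂) / (p:ℝ) ^ 2 := by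
          gcongr
          linarith
end

section
/- Fix m ≥ 1 and constants c₁ ≥ c₂ > 0. For each p ≥ m, let L_p ∈ ℝ^{p×m} and let Σ_{ε,p} ∈ ℝ^{p×p} be symmetric with c₂ ≤ λ_min(Σ_{ε,p}) ≤ λ_max(Σ_{ε,p}) ≤ c₁ (Assumption C), and assume L_pᵀL_p/p → V as p → ∞ for some positive definite V ∈ ℝ^{m×m} with c₂ ≤ λ_m(V) ≤ λ₁(V) ≤ c₁ (Assumption B). Set Σ_{y,p} := L_pL_pᵀ + Σ_{ε,p}. Then the eigenvalues of Σ_{y,p} have a spiked structure: there exist c > 0 and p₀ such that for all p ≥ p₀, λ_j(Σ_{y,p}) ≥ c·p for every 1 ≤ j ≤ m, while c₂ ≤ λ_j(Σ_{y,p}) ≤ c₁ for every m < j ≤ p, where λ_j denotes the j-th largest eigenvalue. -/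
open Matrix Filter Topology

section helpers
variable {k : ℕ}

lemma dm_sum (M : Matrix (Fin k) (Fin k) ℝ) (w : Fin k → ℝ) :
    w ⬝ᵥ M *ᵥ w = ∑ i, ∑ j, M i j * (w i * w j) := by
  simp only [dotProduct, mulVec, Finset.mul_sum]
  exact Finset.sum_congr rfl fun i _ => Finset.sum_congr rfl fun j _ => by ring

lemma quadLL {p m : ℕ} (L : Matrix (Fin p) (Fin m) ℝ) (x : Fin p → ℝ) :
    x ⬝ᵥ (L * Lᵀ) *ᵥ x = ∑ j, ((Lᵀ *ᵥ x) j)^2 := by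
  rw [← mulVec_mulVec, dotProduct_mulVec, ← mulVec_transpose]
  simp [dotProduct, pow_two]

noncomputable def coords {M : Matrix (Fin k) (Fin k) ℝ} (hM : M.IsHermitian) (x : Fin k → ℝ) :
    Fin k → ℝ :=
  ((hM.eigenvectorUnitary : unitaryGroup (Fin k) ℝ) : Matrix (Fin k) (Fin k) ℝ)ᵀ *ᵥ x

lemma quad_eq {M : Matrix (Fin k) (Fin k) ℝ} (hM : M.IsHermitian) (x : Fin k → ℝ) :
    x ⬝ᵥ M *ᵥ x = ∑ i, hM.eigenvalues i * (coords hM x i)^2 := by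
  set U : Matrix (Fin k) (Fin k) ℝ := ((hM.eigenvectorUnitary : unitaryGroup (Fin k) ℝ) : Matrix (Fin k) (Fin k) ℝ) with hU
  have hst : star ((hM.eigenvectorUnitary : unitaryGroup (Fin k) ℝ) : Matrix (Fin k) (Fin k) ℝ) = Uᵀ := by
    simp [Matrix.star_eq_conjTranspose, hU]
  conv_lhs => rw [hM.spectral_theorem, Unitary.conjStarAlgAut_apply]
  rw [hst, ← mulVec_mulVec, ← mulVec_mulVec, dotProduct_mulVec, ← mulVec_transpose]
  simp only [coords, dotProduct, mulVec_diagonal, Function.comp, RCLike.ofReal_real_eq_id, id_eq]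
  exact Finset.sum_congr rfl (fun i _ => by ring)

lemma norm_coords {M : Matrix (Fin k) (Fin k) ℝ} (hM : M.IsHermitian) (x : Fin k → ℝ) :
    ∑ i, x i ^ 2 = ∑ i, (coords hM x i)^2 := by
  set U : Matrix (Fin k) (Fin k) ℝ := ((hM.eigenvectorUnitary : unitaryGroup (Fin k) ℝ) : Matrix (Fin k) (Fin k) ℝ) with hU
  have h1 : U * Uᵀ = 1 := by
    have := (hM.eigenvectorUnitary).2
    rw [Matrix.mem_unitaryGroup_iff] at this
    simpa [Matrix.star_eq_conjTranspose] using this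
  have : (Uᵀ *ᵥ x) ⬝ᵥ (Uᵀ *ᵥ x) = x ⬝ᵥ x := by
    rw [dotProduct_mulVec, ← mulVec_transpose, transpose_transpose, mulVec_mulVec, h1, one_mulVec]
  simpa [coords, dotProduct, pow_two] using this.symm

lemma coords_mulVec {M : Matrix (Fin k) (Fin k) ℝ} (hM : M.IsHermitian) (y : Fin k → ℝ) :
    coords hM (((hM.eigenvectorUnitary : unitaryGroup (Fin k) ℝ) : Matrix (Fin k) (Fin k) ℝ) *ᵥ y) = y := by
  set U : Matrix (Fin k) (Fin k) ℝ := ((hM.eigenvectorUnitary : unitaryGroup (Fin k) ℝ) : Matrix (Fin k) (Fin k) ℝ) with hU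
  have h1 : Uᵀ * U = 1 := by
    have := (hM.eigenvectorUnitary).2
    rw [Matrix.mem_unitaryGroup_iff'] at this
    simpa [Matrix.star_eq_conjTranspose] using this
  rw [coords, mulVec_mulVec, h1, one_mulVec]

lemma countA {p : ℕ} (g : Fin p → ℝ) (hg : Monotone g) (t : ℝ) (kk : ℕ)
    (hk : kk ≤ (Finset.univ.filter (fun i => t ≤ g i)).card) :
    ∀ j : Fin p, (j : ℕ) < kk → t ≤ g j.rev := by
  intro j hj
  by_contra h
  push_neg at h
  have hsub : Finset.univ.filter (fun i => t ≤ g i) ⊆ Finset.Ioi j.rev := by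
    intro i hi
    simp only [Finset.mem_filter] at hi
    rcases lt_or_ge j.rev i with h' | h'
    · exact Finset.mem_Ioi.2 h'
    · exact absurd (hi.2.trans (hg h')) (not_le.2 h)
  have hc := Finset.card_le_card hsub
  rw [Fin.card_Ioi] at hc
  have hr : (j.rev : ℕ) = p - 1 - (j : ℕ) := by rw [Fin.val_rev]; omega
  have hjp : (j : ℕ) < p := j.isLt
  omega

lemma countB {p : ℕ} (g : Fin p → ℝ) (hg : Monotone g) (t : ℝ) (kk : ℕ)
    (hk : (Finset.univ.filter (fun i => t < g i)).card ≤ kk) :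
    ∀ j : Fin p, kk ≤ (j : ℕ) → g j.rev ≤ t := by
  intro j hj
  by_contra h
  push_neg at h
  have hsub : Finset.Ici j.rev ⊆ Finset.univ.filter (fun i => t < g i) := by
    intro i hi
    simp only [Finset.mem_filter]
    exact ⟨Finset.mem_univ _, lt_of_lt_of_le h (hg (Finset.mem_Ici.1 hi))⟩
  have hc := Finset.card_le_card hsub
  rw [Fin.card_Ici] at hc
  have hr : (j.rev : ℕ) = p - 1 - (j : ℕ) := by rw [Fin.val_rev]; omega
  have hjp : (j : ℕ) < p := j.isLt
  omega

lemma card_filter_perm {p : ℕ} (σ : Equiv.Perm (Fin p)) (P : Fin p → Prop) [DecidablePred P] :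
    (Finset.univ.filter (fun i => P (σ i))).card = (Finset.univ.filter P).card := by
  apply Finset.card_bij (fun i _ => σ i)
  · intro a ha
    simp only [Finset.mem_filter] at *
    exact ⟨Finset.mem_univ _, ha.2⟩
  · intro a _ b _ hab
    exact σ.injective hab
  · intro b hb
    refine ⟨σ.symm b, ?_, by simp⟩
    simp only [Finset.mem_filter] at *
    simpa using hb.2

lemma sum_sq_pos_of_ne_zero {k : ℕ} {u : Fin k → ℝ} (hu : u ≠ 0) :
    0 < ∑ i, u i ^ 2 := by
  obtain ⟨i₀, hi₀⟩ := Function.ne_iff.1 hu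
  have h0 : u i₀ ≠ 0 := by simpa using hi₀
  exact Finset.sum_pos' (fun i _ => sq_nonneg _)
    ⟨i₀, Finset.mem_univ _, lt_of_le_of_ne (sq_nonneg _) (Ne.symm (pow_ne_zero 2 h0))⟩

end helpers

/-- The `j`-th largest eigenvalue (descending order, counted with multiplicity)
of a Hermitian real matrix. -/
noncomputable def eigDesc {k : ℕ} {M : Matrix (Fin k) (Fin k) ℝ} (hM : M.IsHermitian)
    (j : Fin k) : ℝ :=
  (hM.eigenvalues ∘ Tuple.sort hM.eigenvalues) j.rev

/-- Under Assumptions B and C, the eigenvalues of `Σ_y = LLᵀ + Σ_ε` are spiked: the `m`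
leading eigenvalues grow at rate `p`, while the remaining ones stay in `[c₂, c₁]`. -/
theorem stmt13 (m : ℕ) (hm : 1 ≤ m) (c₁ c₂ : ℝ) (hc₂ : 0 < c₂) (hc₁₂ : c₂ ≤ c₁)
    (L : ∀ p : ℕ, Matrix (Fin p) (Fin m) ℝ)
    (Se : ∀ p : ℕ, Matrix (Fin p) (Fin p) ℝ)
    (hSym : ∀ p, (Se p).IsHermitian)
    (hC : ∀ p, ∀ x : Fin p → ℝ,
      c₂ * (∑ i, x i ^ 2) ≤ x ⬝ᵥ (Se p).mulVec x ∧
        x ⬝ᵥ (Se p).mulVec x ≤ c₁ * (∑ i, x i ^ 2))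
    (V : Matrix (Fin m) (Fin m) ℝ) (hVpos : V.PosDef)
    (hVeig : ∀ i, c₂ ≤ hVpos.1.eigenvalues i ∧ hVpos.1.eigenvalues i ≤ c₁)
    (hB : ∀ i j, Tendsto (fun p : ℕ => ((L p)ᵀ * L p) i j / (p : ℝ)) atTop (𝓝 (V i j))) :
    ∃ c : ℝ, 0 < c ∧ ∃ p₀ : ℕ, ∀ p, p₀ ≤ p →
      ∀ hY : (L p * (L p)ᵀ + Se p).IsHermitian,
        (∀ j : Fin p, (j : ℕ) < m → c * p ≤ eigDesc hY j) ∧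
        (∀ j : Fin p, m ≤ (j : ℕ) → c₂ ≤ eigDesc hY j ∧ eigDesc hY j ≤ c₁) := by
  have hm' : (0:ℝ) < m := by exact_mod_cast hm
  have hδ : 0 < c₂ / (2*m) := by positivity
  -- uniform entrywise approximation eventually
  have hev : ∀ᶠ p : ℕ in atTop, ∀ i j, |((L p)ᵀ * L p) i j / (p:ℝ) - V i j| < c₂/(2*m) := by
    rw [eventually_all]
    intro i
    rw [eventually_all]
    intro j
    have := Metric.tendsto_atTop.1 (hB i j) (c₂/(2*m)) hδ
    obtain ⟨N, hN⟩ := this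
    exact eventually_atTop.2 ⟨N, fun p hp => by simpa [Real.dist_eq] using hN p hp⟩
  obtain ⟨N, hN⟩ := eventually_atTop.1 hev
  -- quadratic lower bound for V
  have hVq : ∀ w : Fin m → ℝ, c₂ * (∑ i, w i^2) ≤ w ⬝ᵥ V *ᵥ w := by
    intro w
    rw [quad_eq hVpos.1 w, norm_coords hVpos.1 w, Finset.mul_sum]
    exact Finset.sum_le_sum fun i _ => mul_le_mul_of_nonneg_right (hVeig i).1 (sq_nonneg _)
  refine ⟨c₂/2, by positivity, max N 1, ?_⟩
  intro p hp hY
  have hp1 : 1 ≤ p := le_trans (le_max_right _ _) hp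
  have hpN : N ≤ p := le_trans (le_max_left _ _) hp
  have hpr : (0:ℝ) < p := by exact_mod_cast hp1
  set U : Matrix (Fin p) (Fin p) ℝ :=
    ((hY.eigenvectorUnitary : unitaryGroup (Fin p) ℝ) : Matrix (Fin p) (Fin p) ℝ) with hUdef
  -- expansion of the quadratic form of M
  have hexp : ∀ x : Fin p → ℝ, x ⬝ᵥ (L p * (L p)ᵀ + Se p) *ᵥ x
      = (∑ j, (((L p)ᵀ *ᵥ x) j)^2) + x ⬝ᵥ Se p *ᵥ x := by
    intro x
    rw [add_mulVec, dotProduct_add, quadLL]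
  -- Fact 1 : every eigenvalue is ≥ c₂
  have fact1 : ∀ i, c₂ ≤ hY.eigenvalues i := by
    intro i
    set x := U *ᵥ Pi.single i 1 with hx
    have hco : coords hY x = Pi.single i 1 := coords_mulVec hY _
    have hq := quad_eq hY x
    have hnorm := norm_coords hY x
    rw [hco] at hq hnorm
    have hsum1 : ∑ j, (Pi.single i 1 : Fin p → ℝ) j ^2 = 1 := by
      simp [Pi.single_apply, sq]
    have hsum2 : ∑ j, hY.eigenvalues j * (Pi.single i 1 : Fin p → ℝ) j ^2
        = hY.eigenvalues i := by
      simp [Pi.single_apply, sq, mul_ite]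
    rw [hsum2] at hq
    rw [hsum1] at hnorm
    have hSe := (hC p x).1
    have hLL : 0 ≤ ∑ j, (((L p)ᵀ *ᵥ x) j)^2 :=
      Finset.sum_nonneg fun j _ => sq_nonneg _
    have := hexp x
    rw [hq] at this
    rw [hnorm] at hSe
    linarith
  -- Fact 2 : at most m eigenvalues exceed c₁
  have fact2 : (Finset.univ.filter (fun i => c₁ < hY.eigenvalues i)).card ≤ m := by
    by_contra hcon
    push_neg at hcon
    set S := Finset.univ.filter (fun i => c₁ < hY.eigenvalues i) with hS
    set B : Matrix (Fin m) {i // i ∈ S} ℝ := fun a b => ((L p)ᵀ * U) a b.1 with hBdef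
    have hker : LinearMap.ker B.mulVecLin ≠ ⊥ := by
      apply LinearMap.ker_ne_bot_of_finrank_lt
      rw [Module.finrank_fintype_fun_eq_card, Module.finrank_fintype_fun_eq_card,
        Fintype.card_coe, Fintype.card_fin]
      exact hcon
    obtain ⟨cvec, hcker, hcne⟩ := (Submodule.ne_bot_iff _).1 hker
    have hBc : B *ᵥ cvec = 0 := hcker
    set y : Fin p → ℝ := fun i => if h : i ∈ S then cvec ⟨i, h⟩ else 0 with hy
    set x := U *ᵥ y with hx
    have hco : coords hY x = y := coords_mulVec hY y
    have hLy : (L p)ᵀ *ᵥ x = 0 := by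
      rw [hx, mulVec_mulVec]
      funext a
      have h1 : (((L p)ᵀ * U) *ᵥ y) a = (B *ᵥ cvec) a := by
        simp only [mulVec, dotProduct]
        rw [← Finset.sum_subset (Finset.subset_univ S)
          (fun i _ hiS => by simp [hy, dif_neg hiS])]
        rw [← Finset.sum_attach S (fun i => ((L p)ᵀ * U) a i * y i)]
        rw [Finset.univ_eq_attach]
        refine Finset.sum_congr rfl fun b _ => ?_
        simp [hy, hBdef, dif_pos b.2]
      rw [h1, hBc]
    obtain ⟨b₀, hb₀⟩ := Function.ne_iff.1 hcne
    have hyb₀ : y b₀.1 ≠ 0 := by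
      simpa [hy, dif_pos b₀.2] using hb₀
    have hq := quad_eq hY x
    have hnorm := norm_coords hY x
    rw [hco] at hq hnorm
    have hstrict : c₁ * ∑ i, y i ^ 2 < ∑ i, hY.eigenvalues i * y i ^2 := by
      rw [Finset.mul_sum]
      refine Finset.sum_lt_sum (fun i _ => ?_) ⟨b₀.1, Finset.mem_univ _, ?_⟩
      · by_cases hiS : i ∈ S
        · have : c₁ < hY.eigenvalues i := (Finset.mem_filter.1 hiS).2
          exact mul_le_mul_of_nonneg_right this.le (sq_nonneg _)
        · simp [hy, dif_neg hiS]
      · have hiS : (b₀ : Fin p) ∈ S := b₀.2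
        have hlt : c₁ < hY.eigenvalues b₀.1 := (Finset.mem_filter.1 hiS).2
        have : (0:ℝ) < y b₀.1 ^ 2 := lt_of_le_of_ne (sq_nonneg _) (Ne.symm (pow_ne_zero 2 hyb₀))
        exact mul_lt_mul_of_pos_right hlt this
    have hSe := (hC p x).2
    have hME := hexp x
    rw [hq] at hME
    rw [hLy] at hME
    simp only [Pi.zero_apply, ne_eq, OfNat.ofNat_ne_zero, not_false_eq_true, zero_pow,
      Finset.sum_const_zero, zero_add] at hME
    rw [hnorm] at hSe
    linarith
  -- quantitative lower bound for LᵀL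
  have hAq : ∀ w : Fin m → ℝ, (p:ℝ) * (c₂/2) * (∑ i, w i^2) ≤ w ⬝ᵥ ((L p)ᵀ * L p) *ᵥ w := by
    intro w
    set A := (L p)ᵀ * L p with hA
    have habs : ∀ i j, |A i j - p * V i j| ≤ p * (c₂/(2*m)) := by
      intro i j
      have h1 := (hN p hpN i j).le
      have h2 : A i j - p * V i j = p * (A i j / p - V i j) := by field_simp
      rw [h2, abs_mul, abs_of_pos hpr]
      exact mul_le_mul_of_nonneg_left h1 hpr.le
    have e1 : ∑ i, ∑ j, (A i j - p * V i j) * (w i * w j)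
        = w ⬝ᵥ A *ᵥ w - (p:ℝ) * (w ⬝ᵥ V *ᵥ w) := by
      rw [dm_sum, dm_sum, Finset.mul_sum, ← Finset.sum_sub_distrib]
      refine Finset.sum_congr rfl fun i _ => ?_
      rw [Finset.mul_sum, ← Finset.sum_sub_distrib]
      exact Finset.sum_congr rfl fun j _ => by ring
    have e2 : |∑ i, ∑ j, (A i j - p * V i j) * (w i * w j)| ≤ p * (c₂/2) * ∑ i, w i ^2 := by
      have step1 : |∑ i, ∑ j, (A i j - p * V i j) * (w i * w j)|
          ≤ ∑ i, ∑ j, (p * (c₂/(2*m))) * (|w i| * |w j|) := by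
        refine (Finset.abs_sum_le_sum_abs _ _).trans (Finset.sum_le_sum fun i _ => ?_)
        refine (Finset.abs_sum_le_sum_abs _ _).trans (Finset.sum_le_sum fun j _ => ?_)
        rw [abs_mul, abs_mul]
        exact mul_le_mul_of_nonneg_right (habs i j) (by positivity)
      have step2 : ∑ i, ∑ j, (p * (c₂/(2*m))) * (|w i| * |w j|)
          = (p * (c₂/(2*m))) * ((∑ i, |w i|) * (∑ j, |w j|)) := by
        rw [Finset.sum_mul_sum, Finset.mul_sum]
        refine Finset.sum_congr rfl fun i _ => ?_
        rw [Finset.mul_sum]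
      have step3 : (∑ i, |w i|) * (∑ j, |w j|) ≤ (m : ℝ) * ∑ i, w i ^2 := by
        have h4 := sq_sum_le_card_mul_sum_sq (s := (Finset.univ : Finset (Fin m)))
          (f := fun i => |w i|)
        simp only [Finset.card_univ, Fintype.card_fin, sq_abs] at h4
        calc (∑ i, |w i|) * (∑ j, |w j|) = (∑ i, |w i|)^2 := (sq _).symm
          _ ≤ (m : ℝ) * ∑ i, w i ^2 := h4
      calc |∑ i, ∑ j, (A i j - p * V i j) * (w i * w j)|
          ≤ (p * (c₂/(2*m))) * ((∑ i, |w i|) * (∑ j, |w j|)) := step1.trans_eq step2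
        _ ≤ (p * (c₂/(2*m))) * ((m:ℝ) * ∑ i, w i ^2) := by
            refine mul_le_mul_of_nonneg_left step3 (by positivity)
        _ = p * (c₂/2) * ∑ i, w i ^2 := by field_simp
    have h3 := hVq w
    have h4 : (p:ℝ) * (c₂ * ∑ i, w i^2) ≤ p * (w ⬝ᵥ V *ᵥ w) :=
      mul_le_mul_of_nonneg_left h3 hpr.le
    have h5 := (abs_le.1 e2).1
    rw [e1] at h5
    nlinarith [Finset.sum_nonneg (fun i (_ : i ∈ Finset.univ) => sq_nonneg (w i))]
  -- Fact 3 : at least m eigenvalues are ≥ (c₂/2) p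
  have fact3 : m ≤ (Finset.univ.filter (fun i => c₂/2 * p ≤ hY.eigenvalues i)).card := by
    by_contra hcon
    push_neg at hcon
    set S := Finset.univ.filter (fun i => c₂/2 * p ≤ hY.eigenvalues i) with hS
    set B : Matrix {i // i ∈ S} (Fin m) ℝ := fun b a => (Uᵀ * L p) b.1 a with hBdef
    have hker : LinearMap.ker B.mulVecLin ≠ ⊥ := by
      apply LinearMap.ker_ne_bot_of_finrank_lt
      rw [Module.finrank_fintype_fun_eq_card, Module.finrank_fintype_fun_eq_card,
        Fintype.card_coe, Fintype.card_fin]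
      exact hcon
    obtain ⟨u, huker, hune⟩ := (Submodule.ne_bot_iff _).1 hker
    have hBu : B *ᵥ u = 0 := huker
    set x := L p *ᵥ u with hx
    set y := coords hY x with hyd
    have hyS : ∀ i, i ∈ S → y i = 0 := by
      intro i hiS
      have h1 : y i = (B *ᵥ u) ⟨i, hiS⟩ := by
        simp only [hyd, coords, hx, mulVec_mulVec]
        simp [mulVec, dotProduct, hBdef, hUdef]
      rw [h1, hBu]
      rfl
    -- basic quadratic identities
    have hxx : ∑ i, x i ^2 = u ⬝ᵥ ((L p)ᵀ * L p) *ᵥ u := by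
      have : u ⬝ᵥ ((L p)ᵀ * L p) *ᵥ u = (L p *ᵥ u) ⬝ᵥ (L p *ᵥ u) := by
        rw [← mulVec_mulVec, dotProduct_mulVec, ← mulVec_transpose, transpose_transpose]
      rw [this, hx]
      simp [dotProduct, pow_two]
    set q := u ⬝ᵥ ((L p)ᵀ * L p) *ᵥ u with hqd
    have hus : 0 < ∑ i, u i ^2 := sum_sq_pos_of_ne_zero hune
    have hq1 : (p:ℝ) * (c₂/2) * (∑ i, u i^2) ≤ q := hAq u
    have hqpos : 0 < q := lt_of_lt_of_le (by positivity) hq1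
    have hLtx : (L p)ᵀ *ᵥ x = ((L p)ᵀ * L p) *ᵥ u := by
      rw [hx, mulVec_mulVec]
    -- Cauchy–Schwarz : q² ≤ (∑ u²)(∑ (Au)²)
    have hCS : q^2 ≤ (∑ i, u i ^2) * (∑ i, ((((L p)ᵀ * L p) *ᵥ u) i)^2) := by
      have : q = ∑ i, u i * (((L p)ᵀ * L p) *ᵥ u) i := by
        simp [hqd, dotProduct]
      rw [this]
      exact Finset.sum_mul_sq_le_sq_mul_sq _ _ _
    have hT : (p:ℝ) * (c₂/2) * q ≤ ∑ i, ((((L p)ᵀ * L p) *ᵥ u) i)^2 := by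
      nlinarith [hq1, hCS, hus, hqpos]
    -- lower bound on the quadratic form of M at x
    have hME := hexp x
    have hSe := (hC p x).1
    have hlow : (p:ℝ) * (c₂/2) * (∑ i, x i ^2) ≤ x ⬝ᵥ (L p * (L p)ᵀ + Se p) *ᵥ x := by
      rw [hME, hLtx, hxx]
      nlinarith [hT, hSe, hus, hxx, Finset.sum_nonneg (fun i (_ : i ∈ Finset.univ) => sq_nonneg (x i))]
    -- upper bound via eigen-coordinates
    have hq2 := quad_eq hY x
    have hnorm := norm_coords hY x
    have hysum : 0 < ∑ i, y i ^2 := by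
      rw [hyd, ← norm_coords hY x, hxx]
      exact hqpos
    have hyne : ∃ i₀, y i₀ ≠ 0 := by
      by_contra hall
      push_neg at hall
      simp only [hall] at hysum
      simp at hysum
    obtain ⟨i₀, hi₀⟩ := hyne
    have hi₀S : i₀ ∉ S := fun h => hi₀ (hyS i₀ h)
    have hstrict : ∑ i, hY.eigenvalues i * y i ^2 < (c₂/2 * p) * ∑ i, y i ^2 := by
      rw [Finset.mul_sum]
      refine Finset.sum_lt_sum (fun i _ => ?_) ⟨i₀, Finset.mem_univ _, ?_⟩
      · by_cases hiS : i ∈ S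
        · rw [hyS i hiS]
          simp
        · have : hY.eigenvalues i < c₂/2 * p := by
            have := Finset.mem_filter.not.1 hiS
            push_neg at this
            exact this (Finset.mem_univ _)
          exact mul_le_mul_of_nonneg_right this.le (sq_nonneg _)
      · have hlt : hY.eigenvalues i₀ < c₂/2 * p := by
          have := Finset.mem_filter.not.1 hi₀S
          push_neg at this
          exact this (Finset.mem_univ _)
        have : (0:ℝ) < y i₀ ^ 2 := lt_of_le_of_ne (sq_nonneg _) (Ne.symm (pow_ne_zero 2 hi₀))
        exact mul_lt_mul_of_pos_right hlt this
    rw [← hyd] at hq2 hnorm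
    rw [hq2] at hlow
    rw [hnorm] at hlow
    have heq : (p:ℝ) * (c₂/2) * (∑ i, y i^2) = (c₂/2 * p) * (∑ i, y i^2) := by ring
    linarith [hlow, hstrict, heq]
  -- assemble
  have hmono : Monotone (fun i => hY.eigenvalues (Tuple.sort hY.eigenvalues i)) :=
    Tuple.monotone_sort hY.eigenvalues
  have h2 := card_filter_perm (Tuple.sort hY.eigenvalues)
    (fun i => c₂/2 * (p:ℝ) ≤ hY.eigenvalues i)
  have h3 := card_filter_perm (Tuple.sort hY.eigenvalues)
    (fun i => c₁ < hY.eigenvalues i)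
  have h4 := card_filter_perm (Tuple.sort hY.eigenvalues)
    (fun i => c₂ ≤ hY.eigenvalues i)
  constructor
  · intro j hj
    refine countA (fun i => hY.eigenvalues (Tuple.sort hY.eigenvalues i)) hmono
      (c₂/2 * p) m ?_ j hj
    rw [h2]
    exact fact3
  · intro j hj
    constructor
    · refine countA (fun i => hY.eigenvalues (Tuple.sort hY.eigenvalues i)) hmono
        c₂ p ?_ j j.isLt
      rw [h4]
      have hall : (Finset.univ.filter fun i => c₂ ≤ hY.eigenvalues i) = Finset.univ :=
        Finset.filter_true_of_mem fun i _ => fact1 _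
      rw [hall, Finset.card_univ, Fintype.card_fin]
    · refine countB (fun i => hY.eigenvalues (Tuple.sort hY.eigenvalues i)) hmono
        c₁ m ?_ j hj
      rw [h3]
      exact fact2
end

section
/- Let p ≥ 1, let Σ ∈ ℝ^{p×p} be symmetric positive definite with smallest eigenvalue λ_min(Σ), and let g be a standard Gaussian vector in ℝ^p, so that u := Σ^{1/2} g is a centered Gaussian vector with covariance Σ. Then the matrix E[ u uᵀ / ‖u‖² ] is well defined and the Loewner ordering E[ u uᵀ / ‖u‖² ] ≼ Σ / (p · λ_min(Σ)) holds, i.e. Σ/(p·λ_min(Σ)) − E[ u uᵀ / ‖u‖² ] is positive semidefinite. -/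
open MeasureTheory ProbabilityTheory Matrix

noncomputable def Matrix.PosSemidef.sqrt {n 𝕜 : Type*} [Fintype n] [RCLike 𝕜] [PartialOrder 𝕜]
    [DecidableEq n] {A : Matrix n n 𝕜} (hA : A.PosSemidef) : Matrix n n 𝕜 :=
  (hA.1.eigenvectorUnitary : Matrix n n 𝕜) * diagonal ((↑) ∘ (√·) ∘ hA.1.eigenvalues) *
    (star hA.1.eigenvectorUnitary : Matrix n n 𝕜)

lemma my_sqrt_herm {n : ℕ} {S : Matrix (Fin n) (Fin n) ℝ} (hS : S.PosSemidef) :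
    hS.sqrt.IsHermitian := by
  unfold Matrix.PosSemidef.sqrt
  rw [IsHermitian, conjTranspose_mul, conjTranspose_mul, diagonal_conjTranspose,
    star_eq_conjTranspose, conjTranspose_conjTranspose, mul_assoc]
  congr 3

lemma my_sqrt_mul_self {n : ℕ} {S : Matrix (Fin n) (Fin n) ℝ} (hS : S.PosSemidef) :
    hS.sqrt * hS.sqrt = S := by
  unfold Matrix.PosSemidef.sqrt
  have hUU : (star hS.1.eigenvectorUnitary : Matrix (Fin n) (Fin n) ℝ) * hS.1.eigenvectorUnitary = 1 :=
    Unitary.coe_star_mul_self _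
  conv_rhs => rw [hS.1.spectral_theorem, Unitary.conjStarAlgAut_apply]
  simp only [mul_assoc]
  rw [← mul_assoc (star _ : Matrix (Fin n) (Fin n) ℝ), hUU, one_mul, ← mul_assoc (diagonal _),
    diagonal_mul_diagonal]
  congr 3
  funext i
  simp [Real.mul_self_sqrt (hS.eigenvalues_nonneg i)]

instance (d : ℕ) : IsProbabilityMeasure (stdGaussian d) := by
  unfold _root_.stdGaussian; infer_instance

/-- bounded a.e.-strongly-measurable functions are integrable on probability measures -/
lemma my_int_of_bdd {Ω : Type*} [MeasurableSpace Ω] {μ : Measure Ω} [IsProbabilityMeasure μ]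
    {f : Ω → ℝ} (hf : AEStronglyMeasurable f μ) {C : ℝ} (h : ∀ ω, |f ω| ≤ C) :
    Integrable f μ :=
  (integrable_const C).mono' hf (ae_of_all _ (by simpa [Real.norm_eq_abs] using h))

lemma my_key_bound {n : ℕ} (w : Fin n → ℝ) (i j : Fin n) :
    |w i * w j / ∑ k, w k ^ 2| ≤ 1 := by
  set s := ∑ k, w k ^ 2 with hs
  have hs0 : 0 ≤ s := Finset.sum_nonneg fun k _ => sq_nonneg _
  rcases eq_or_lt_of_le hs0 with h | h
  · have : ∀ k ∈ Finset.univ, (w k ^ 2 : ℝ) = 0 :=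
      (Finset.sum_eq_zero_iff_of_nonneg (fun k _ => sq_nonneg _)).1 h.symm
    have hwi : w i = 0 := by
      have := this i (Finset.mem_univ i); exact pow_eq_zero_iff (by norm_num) |>.1 this
    simp [hwi]
  · rw [abs_div, abs_of_pos h, div_le_one h, abs_mul]
    have hb : ∀ k, |w k| ≤ Real.sqrt s := by
      intro k
      rw [← Real.sqrt_sq_eq_abs]
      exact Real.sqrt_le_sqrt (Finset.single_le_sum (fun k _ => sq_nonneg (w k))
        (Finset.mem_univ k))
    calc |w i| * |w j| ≤ Real.sqrt s * Real.sqrt s :=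
          mul_le_mul (hb i) (hb j) (abs_nonneg _) (Real.sqrt_nonneg _)
      _ = s := Real.mul_self_sqrt hs0

lemma my_cs_bound {n : ℕ} (v w : Fin n → ℝ) :
    (∑ i, v i * w i) ^ 2 / (∑ k, w k ^ 2) ≤ ∑ i, v i ^ 2 := by
  set s := ∑ k, w k ^ 2 with hs
  have hs0 : 0 ≤ s := Finset.sum_nonneg fun k _ => sq_nonneg _
  rcases eq_or_lt_of_le hs0 with h | h
  · rw [← h, div_zero]
    exact Finset.sum_nonneg fun i _ => sq_nonneg _
  · rw [div_le_iff₀ h]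
    exact Finset.sum_mul_sq_le_sq_mul_sq _ _ _

/-- Spectral lower bound for a real symmetric quadratic form -/
lemma my_eig_bound {n : ℕ} {S : Matrix (Fin n) (Fin n) ℝ} (hS : S.IsHermitian)
    (x : Fin n → ℝ) :
    (⨅ i, hS.eigenvalues i) * (x ⬝ᵥ x) ≤ x ⬝ᵥ S *ᵥ x := by
  rcases Nat.eq_zero_or_pos n with rfl | hn
  · simp [dotProduct]
  have : Nonempty (Fin n) := ⟨⟨0, hn⟩⟩
  set U : Matrix (Fin n) (Fin n) ℝ := (hS.eigenvectorUnitary : Matrix (Fin n) (Fin n) ℝ) with hU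
  have hUU : U * star U = 1 := (Matrix.mem_unitaryGroup_iff).mp hS.eigenvectorUnitary.2
  have hsU : star U = Uᵀ := by
    rw [Matrix.star_eq_conjTranspose, Matrix.conjTranspose_eq_transpose_of_trivial]
  set y : Fin n → ℝ := star U *ᵥ x with hy
  have hyv : y = x ᵥ* U := by rw [hy, hsU, Matrix.mulVec_transpose]
  have hyy : y ⬝ᵥ y = x ⬝ᵥ x := by
    conv_lhs => rw [hy, Matrix.dotProduct_mulVec, hsU, Matrix.vecMul_transpose, ← hsU,
      Matrix.mulVec_mulVec, hUU, Matrix.one_mulVec]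
  have hquad : x ⬝ᵥ S *ᵥ x = ∑ i, hS.eigenvalues i * y i ^ 2 := by
    conv_lhs => rw [hS.spectral_theorem, Unitary.conjStarAlgAut_apply, ← Matrix.mulVec_mulVec, ← Matrix.mulVec_mulVec,
      Matrix.dotProduct_mulVec, ← hyv, ← hy]
    simp [Matrix.mulVec_diagonal, dotProduct]
    exact Finset.sum_congr rfl fun i _ => by ring
  rw [hquad, ← hyy, dotProduct, Finset.mul_sum]
  refine Finset.sum_le_sum fun i _ => ?_
  have h1 : (⨅ j, hS.eigenvalues j) ≤ hS.eigenvalues i :=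
    ciInf_le (Set.Finite.bddBelow (Set.finite_range _)) i
  have := mul_le_mul_of_nonneg_right h1 (sq_nonneg (y i))
  calc (⨅ j, hS.eigenvalues j) * (y i * y i) = (⨅ j, hS.eigenvalues j) * y i ^ 2 := by ring
    _ ≤ hS.eigenvalues i * y i ^ 2 := this

lemma my_fij_meas {p : ℕ} (i j : Fin p) :
    Measurable (fun y : Fin p → ℝ => y i * y j / ∑ k, y k ^ 2) :=
  ((measurable_pi_apply i).mul (measurable_pi_apply j)).div
    (Finset.measurable_sum _ fun k _ => (measurable_pi_apply k).pow_const 2)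

lemma my_fij_int {p : ℕ} (i j : Fin p) :
    Integrable (fun y : Fin p → ℝ => y i * y j / ∑ k, y k ^ 2) (stdGaussian p) :=
  my_int_of_bdd (my_fij_meas i j).aestronglyMeasurable (fun y => my_key_bound y i j)

lemma my_neg_mp : MeasurePreserving (fun x : ℝ => -x) (gaussianReal 0 1) (gaussianReal 0 1) := by
  refine ⟨measurable_neg, ?_⟩
  have h := gaussianReal_map_const_mul (μ := 0) (v := 1) (-1)
  simp only [neg_one_mul] at h
  convert h using 2
  · norm_num
  · ext; norm_num

lemma my_offdiag {p : ℕ} (i j : Fin p) (hij : i ≠ j) :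
    ∫ y, y i * y j / ∑ k, y k ^ 2 ∂(stdGaussian p) = 0 := by
  classical
  set F : (Fin p → ℝ) → ℝ := fun y => y i * y j / ∑ k, y k ^ 2 with hF
  set f : Fin p → ℝ → ℝ := fun k => if k = i then (fun x => -x) else id with hf
  have hcomp : ∀ k, MeasurePreserving (f k) (gaussianReal 0 1) (gaussianReal 0 1) := by
    intro k
    by_cases h : k = i <;> simp [hf, h, my_neg_mp, MeasurePreserving.id]
  have hT := measurePreserving_pi (fun _ : Fin p => gaussianReal 0 1)
    (fun _ : Fin p => gaussianReal 0 1) hcomp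
  have hint : ∫ y, F y ∂(stdGaussian p) = ∫ a, F (fun k => f k (a k)) ∂(stdGaussian p) := by
    conv_lhs => rw [show (stdGaussian p) = Measure.map _ (stdGaussian p) from hT.map_eq.symm]
    rw [integral_map hT.measurable.aemeasurable]
    exact (my_fij_meas i j).aestronglyMeasurable
  have hFT : ∀ a : Fin p → ℝ, F (fun k => f k (a k)) = - F a := by
    intro a
    have h1 : f i (a i) = -a i := by simp [hf]
    have h2 : f j (a j) = a j := by simp [hf, hij.symm]
    have h3 : ∀ k, (f k (a k)) ^ 2 = a k ^ 2 := by
      intro k; by_cases h : k = i <;> simp [hf, h]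
    simp only [hF, h1, h2]
    rw [Finset.sum_congr rfl fun k _ => h3 k]
    ring_nf
  rw [show (fun a => F (fun k => f k (a k))) = fun a => -F a from funext hFT] at hint
  rw [integral_neg] at hint
  linarith

lemma my_ae_ne_zero {p : ℕ} (hp : 1 ≤ p) :
    ∀ᵐ y ∂(stdGaussian p), (∑ k, y k ^ 2) ≠ 0 := by
  set i0 : Fin p := ⟨0, hp⟩
  have hsub : {y : Fin p → ℝ | ¬ (∑ k, y k ^ 2) ≠ 0} ⊆
      Set.univ.pi (fun k => if k = i0 then ({0} : Set ℝ) else Set.univ) := by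
    intro y hy
    simp only [Set.mem_setOf_eq, not_not] at hy
    intro k _
    by_cases h : k = i0
    · have : ∀ m ∈ Finset.univ, (y m ^ 2 : ℝ) = 0 :=
        (Finset.sum_eq_zero_iff_of_nonneg (fun m _ => sq_nonneg _)).1 hy
      have := this k (Finset.mem_univ k)
      have : y k = 0 := pow_eq_zero_iff (by norm_num) |>.1 this
      simp [← h, this]
    · simp [h]
  refine measure_mono_null hsub ?_
  rw [_root_.stdGaussian, Measure.pi_pi]
  refine Finset.prod_eq_zero (Finset.mem_univ i0) ?_
  simp only [if_pos rfl]
  exact gaussianReal_absolutelyContinuous 0 one_ne_zero (by simp)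

lemma my_diag {p : ℕ} (hp : 1 ≤ p) (i : Fin p) :
    ∫ y, y i ^ 2 / ∑ k, y k ^ 2 ∂(stdGaussian p) = 1 / p := by
  classical
  have heq : ∀ i' : Fin p, (∫ y, y i' ^ 2 / ∑ k, y k ^ 2 ∂(stdGaussian p)) =
      ∫ y, y i ^ 2 / ∑ k, y k ^ 2 ∂(stdGaussian p) := by
    intro i'
    set e : Fin p ≃ Fin p := Equiv.swap i i'
    have hT : MeasurePreserving (MeasurableEquiv.arrowCongr' e (MeasurableEquiv.refl ℝ))
        (stdGaussian p) (stdGaussian p) :=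
      measurePreserving_arrowCongr' (fun _ => gaussianReal 0 1) (fun _ => gaussianReal 0 1)
        e (MeasurableEquiv.refl ℝ) (fun _ => MeasurePreserving.id _)
    have := hT.integral_comp' (fun y : Fin p → ℝ => y i ^ 2 / ∑ k, y k ^ 2)
    rw [← this]
    congr 1
    funext a
    have happ : ∀ m, (MeasurableEquiv.arrowCongr' e (MeasurableEquiv.refl ℝ)) a m
        = a (e.symm m) := by
      intro m
      simp [MeasurableEquiv.arrowCongr', Equiv.arrowCongr', Equiv.arrowCongr]
    simp only [happ]
    rw [show (∑ k, a (e.symm k) ^ 2) = ∑ k, a k ^ 2 from Equiv.sum_comp e.symm (fun k => a k ^ 2)]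
    congr 2
    simp [e, Equiv.symm_swap, Equiv.swap_apply_left]
  have hsum : (∑ i' : Fin p, ∫ y, y i' ^ 2 / ∑ k, y k ^ 2 ∂(stdGaussian p)) = 1 := by
    rw [← integral_finset_sum _ (fun i' _ => by
      simpa [pow_two] using my_fij_int i' i')]
    have hone : ∀ᵐ y ∂(stdGaussian p), (∑ i' : Fin p, y i' ^ 2 / ∑ k, y k ^ 2) = 1 := by
      filter_upwards [my_ae_ne_zero hp] with y hy
      rw [← Finset.sum_div, div_self hy]
    rw [integral_congr_ae hone]
    simp
  rw [Finset.sum_congr rfl (fun i' _ => heq i'), Finset.sum_const, Finset.card_univ,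
    Fintype.card_fin, nsmul_eq_mul] at hsum
  have hp0 : (p : ℝ) ≠ 0 := Nat.cast_ne_zero.2 (by omega)
  field_simp at hsum ⊢
  linarith

lemma my_expand {n : ℕ} {Ω : Type*} [MeasurableSpace Ω] {μ : Measure Ω} (v : Fin n → ℝ)
    (w : Ω → Fin n → ℝ)
    (hint : ∀ i j, Integrable (fun ω => w ω i * w ω j / ∑ k, w ω k ^ 2) μ) :
    ∫ ω, (∑ i, v i * w ω i) ^ 2 / ∑ k, w ω k ^ 2 ∂μ =
      ∑ i, ∑ j, v i * v j * ∫ ω, w ω i * w ω j / ∑ k, w ω k ^ 2 ∂μ := by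
  have hpt : (fun ω => (∑ i, v i * w ω i) ^ 2 / ∑ k, w ω k ^ 2) =
      fun ω => ∑ i, ∑ j, v i * v j * (w ω i * w ω j / ∑ k, w ω k ^ 2) := by
    funext ω
    rw [sq, Finset.sum_mul_sum, Finset.sum_div]
    refine Finset.sum_congr rfl fun i _ => ?_
    rw [Finset.sum_div]
    refine Finset.sum_congr rfl fun j _ => ?_
    rw [show (v i * w ω i) * (v j * w ω j) = (v i * v j) * (w ω i * w ω j) from by ring,
      mul_div_assoc]
  rw [hpt, integral_finset_sum _
    (fun i _ => integrable_finset_sum _ (fun j _ => (hint i j).const_mul _))]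
  refine Finset.sum_congr rfl fun i _ => ?_
  rw [integral_finset_sum _ (fun j _ => (hint i j).const_mul _)]
  exact Finset.sum_congr rfl fun j _ => integral_const_mul _ _

lemma my_quad_int {p : ℕ} (hp : 1 ≤ p) (v : Fin p → ℝ) :
    ∫ y, (∑ i, v i * y i) ^ 2 / ∑ k, y k ^ 2 ∂(stdGaussian p) = (∑ i, v i ^ 2) / p := by
  rw [my_expand v (fun y => y) (fun i j => my_fij_int i j)]
  have hterm : ∀ i : Fin p,
      (∑ j, v i * v j * ∫ y : Fin p → ℝ, y i * y j / ∑ k, y k ^ 2 ∂(stdGaussian p))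
        = v i ^ 2 * (1 / p) := by
    intro i
    rw [Finset.sum_eq_single i
      (fun j _ hji => by rw [my_offdiag i j (Ne.symm hji), mul_zero])
      (fun h => absurd (Finset.mem_univ i) h)]
    rw [show (fun y : Fin p → ℝ => y i * y i / ∑ k, y k ^ 2)
        = fun y : Fin p → ℝ => y i ^ 2 / ∑ k, y k ^ 2 from funext fun y => by rw [← sq],
      my_diag hp i]
    ring
  rw [Finset.sum_congr rfl fun i _ => hterm i, ← Finset.sum_mul, mul_one_div]

/-- For `u = Σ^{1/2} g` a centered Gaussian vector with positive definite covariance `Σ`,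
the matrix `E[uuᵀ/‖u‖²]` is well defined (entrywise integrable) and satisfies the Loewner
bound `E[uuᵀ/‖u‖²] ≼ Σ/(p·λ_min(Σ))`. -/
theorem stmt17 (p : ℕ) (hp : 1 ≤ p)
    {Ω : Type*} [MeasurableSpace Ω] (μ : Measure Ω) [IsProbabilityMeasure μ]
    (g : Ω → Fin p → ℝ) (hg : Measure.map g μ = stdGaussian p)
    (S : Matrix (Fin p) (Fin p) ℝ) (hS : S.PosDef) :
    (∀ i j : Fin p, Integrable (fun ω =>
        hS.posSemidef.sqrt.mulVec (g ω) i * hS.posSemidef.sqrt.mulVec (g ω) j /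
          (∑ k, hS.posSemidef.sqrt.mulVec (g ω) k ^ 2)) μ) ∧
    (((p : ℝ) * ⨅ i, hS.1.eigenvalues i)⁻¹ • S -
      Matrix.of (fun i j => ∫ ω,
        hS.posSemidef.sqrt.mulVec (g ω) i * hS.posSemidef.sqrt.mulVec (g ω) j /
          (∑ k, hS.posSemidef.sqrt.mulVec (g ω) k ^ 2) ∂μ)).PosSemidef := by
  classical
  have hne : Nonempty (Fin p) := ⟨⟨0, hp⟩⟩
  set A := hS.posSemidef.sqrt with hA
  have hAherm : A.IsHermitian := my_sqrt_herm hS.posSemidef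
  have hA2 : A * A = S := my_sqrt_mul_self hS.posSemidef
  have hvm : ∀ z : Fin p → ℝ, z ᵥ* A = A *ᵥ z := by
    intro z
    have ht : Aᵀ = A := by
      rw [← Matrix.conjTranspose_eq_transpose_of_trivial]; exact hAherm
    rw [← Matrix.mulVec_transpose, ht]
  have hself : ∀ z : Fin p → ℝ, (∑ k, (A *ᵥ z) k ^ 2) = z ⬝ᵥ S *ᵥ z := by
    intro z
    have h1 : (∑ k, (A *ᵥ z) k ^ 2) = (A *ᵥ z) ⬝ᵥ (A *ᵥ z) := by
      rw [dotProduct]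
      exact Finset.sum_congr rfl fun k _ => by ring
    rw [h1, Matrix.dotProduct_mulVec, hvm, Matrix.mulVec_mulVec, hA2, dotProduct_comm]
  have hdot : ∀ x z : Fin p → ℝ, (∑ i, x i * (A *ᵥ z) i) = ∑ i, (A *ᵥ x) i * z i := by
    intro x z
    have : x ⬝ᵥ (A *ᵥ z) = (A *ᵥ x) ⬝ᵥ z := by
      rw [Matrix.dotProduct_mulVec, hvm]
    exact this
  have hgm : AEMeasurable g μ := aemeasurable_of_map_neZero (by rw [hg]; infer_instance)
  have hm : ∀ i, Measurable (fun y : Fin p → ℝ => (A *ᵥ y) i) := by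
    intro i
    simp only [Matrix.mulVec, dotProduct]
    exact Finset.measurable_sum _ fun k _ => (measurable_pi_apply k).const_mul _
  have hsum_meas : Measurable (fun y : Fin p → ℝ => ∑ k, (A *ᵥ y) k ^ 2) :=
    Finset.measurable_sum _ fun k _ => (hm k).pow_const 2
  have hint : ∀ i j : Fin p, Integrable (fun ω =>
      (A *ᵥ g ω) i * (A *ᵥ g ω) j / ∑ k, (A *ᵥ g ω) k ^ 2) μ := by
    intro i j
    refine my_int_of_bdd ((((hm i).mul (hm j)).div hsum_meas).comp_aemeasurable hgm).aestronglyMeasurable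
      (fun ω => my_key_bound (A *ᵥ g ω) i j)
  refine ⟨hint, ?_⟩
  set lam := ⨅ i, hS.1.eigenvalues i with hlam
  have hlam_pos : 0 < lam := by
    obtain ⟨i0, -, hi0⟩ := Finset.exists_min_image Finset.univ hS.1.eigenvalues
      ⟨⟨0, hp⟩, Finset.mem_univ _⟩
    exact lt_of_lt_of_le (hS.eigenvalues_pos i0) (le_ciInf fun i => hi0 i (Finset.mem_univ i))
  set M : Matrix (Fin p) (Fin p) ℝ := Matrix.of (fun i j => ∫ ω,
      (A *ᵥ g ω) i * (A *ᵥ g ω) j / ∑ k, (A *ᵥ g ω) k ^ 2 ∂μ) with hM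
  have hMh : M.IsHermitian := by
    show Mᴴ = M
    ext i j
    simp only [Matrix.conjTranspose_apply, hM, Matrix.of_apply, star_trivial]
    congr 1
    funext ω
    rw [mul_comm ((A *ᵥ g ω) j)]
  have hSc : (((p : ℝ) * lam)⁻¹ • S).IsHermitian := by
    show (((p : ℝ) * lam)⁻¹ • S)ᴴ = ((p : ℝ) * lam)⁻¹ • S
    rw [Matrix.conjTranspose_smul, hS.1.eq]
    simp
  refine posSemidef_iff_dotProduct_mulVec.mpr ⟨hSc.sub hMh, ?_⟩
  intro x
  have hstar : star x = x := funext fun i => star_trivial _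
  rw [hstar, Matrix.sub_mulVec, dotProduct_sub, Matrix.smul_mulVec,
    dotProduct_smul, smul_eq_mul, sub_nonneg]
  set v := A *ᵥ x with hv
  have hMx : x ⬝ᵥ M *ᵥ x = ∫ ω, (∑ i, x i * (A *ᵥ g ω) i) ^ 2 / ∑ k, (A *ᵥ g ω) k ^ 2 ∂μ := by
    rw [my_expand x (fun ω => A *ᵥ g ω) hint]
    rw [dotProduct]
    refine Finset.sum_congr rfl fun i _ => ?_
    rw [Matrix.mulVec, dotProduct, Finset.mul_sum]
    refine Finset.sum_congr rfl fun j _ => ?_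
    simp only [hM, Matrix.of_apply]
    ring
  have hbound : ∀ ω, (∑ i, x i * (A *ᵥ g ω) i) ^ 2 / ∑ k, (A *ᵥ g ω) k ^ 2
      ≤ lam⁻¹ * ((∑ i, v i * g ω i) ^ 2 / ∑ k, g ω k ^ 2) := by
    intro ω
    rw [hdot x (g ω)]
    have hqge : lam * (∑ k, g ω k ^ 2) ≤ ∑ k, (A *ᵥ g ω) k ^ 2 := by
      rw [hself (g ω)]
      have h := my_eig_bound hS.1 (g ω)
      have h2 : g ω ⬝ᵥ g ω = ∑ k, g ω k ^ 2 := by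
        rw [dotProduct]
        exact Finset.sum_congr rfl fun k _ => by ring
      rw [h2] at h
      exact h
    have hs0 : (0:ℝ) ≤ ∑ k, g ω k ^ 2 := Finset.sum_nonneg fun k _ => sq_nonneg _
    rcases eq_or_lt_of_le hs0 with h0 | h0
    · have hw0 : g ω = 0 := by
        funext k
        have := (Finset.sum_eq_zero_iff_of_nonneg (fun m _ => sq_nonneg (g ω m))).1 h0.symm k
          (Finset.mem_univ k)
        exact pow_eq_zero_iff two_ne_zero |>.1 this
      simp [hw0, Matrix.mulVec_zero]
    · have hqpos : (0:ℝ) < ∑ k, (A *ᵥ g ω) k ^ 2 :=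
        lt_of_lt_of_le (mul_pos hlam_pos h0) hqge
      have hle := div_le_div_of_nonneg_left (sq_nonneg (∑ i, v i * g ω i))
        (mul_pos hlam_pos h0) hqge
      refine hle.trans (le_of_eq ?_)
      rw [mul_comm lam, ← div_div, div_eq_inv_mul]
  have hvmeas : Measurable (fun y : Fin p → ℝ => (∑ i, v i * y i) ^ 2 / ∑ k, y k ^ 2) := by
    refine Measurable.div ?_ ?_
    · exact (Finset.measurable_sum _ fun i _ => (measurable_pi_apply i).const_mul _).pow_const 2
    · exact Finset.measurable_sum _ fun k _ => (measurable_pi_apply k).pow_const 2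
  have hLint : Integrable (fun ω => (∑ i, x i * (A *ᵥ g ω) i) ^ 2 / ∑ k, (A *ᵥ g ω) k ^ 2) μ := by
    have hmeas : Measurable (fun y : Fin p → ℝ =>
        (∑ i, x i * (A *ᵥ y) i) ^ 2 / ∑ k, (A *ᵥ y) k ^ 2) := by
      refine Measurable.div ?_ hsum_meas
      exact (Finset.measurable_sum _ fun i _ => (hm i).const_mul _).pow_const 2
    refine my_int_of_bdd (hmeas.comp_aemeasurable hgm).aestronglyMeasurable
      (C := ∑ i, x i ^ 2) fun ω => ?_
    rw [abs_of_nonneg (div_nonneg (sq_nonneg _) (Finset.sum_nonneg fun k _ => sq_nonneg _))]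
    exact my_cs_bound x (A *ᵥ g ω)
  have hRint : Integrable (fun ω => lam⁻¹ * ((∑ i, v i * g ω i) ^ 2 / ∑ k, g ω k ^ 2)) μ := by
    refine my_int_of_bdd ((hvmeas.comp_aemeasurable hgm).const_mul _).aestronglyMeasurable
      (C := lam⁻¹ * ∑ i, v i ^ 2) fun ω => ?_
    rw [abs_mul, abs_of_pos (inv_pos.2 hlam_pos),
      abs_of_nonneg (div_nonneg (sq_nonneg _) (Finset.sum_nonneg fun k _ => sq_nonneg _))]
    exact mul_le_mul_of_nonneg_left (my_cs_bound v (g ω)) (inv_nonneg.2 hlam_pos.le)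
  have hmono := integral_mono hLint hRint hbound
  have hR : ∫ ω, lam⁻¹ * ((∑ i, v i * g ω i) ^ 2 / ∑ k, g ω k ^ 2) ∂μ
      = lam⁻¹ * ((∑ i, v i ^ 2) / p) := by
    rw [integral_const_mul]
    congr 1
    have hcv : ∫ ω, ((∑ i, v i * g ω i) ^ 2 / ∑ k, g ω k ^ 2) ∂μ
        = ∫ y, (∑ i, v i * y i) ^ 2 / ∑ k, y k ^ 2 ∂(stdGaussian p) := by
      rw [← hg, integral_map hgm hvmeas.aestronglyMeasurable]
    rw [hcv, my_quad_int hp v]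
  rw [hMx]
  refine le_trans hmono (le_of_eq ?_)
  rw [hR]
  have hvv : (∑ i, v i ^ 2) = x ⬝ᵥ S *ᵥ x := by
    rw [← hself x, hv]
  rw [hvv, mul_inv, div_eq_mul_inv]
  ring
end

section
/- Let m ≥ 1 be fixed and let V ∈ ℝ^{m×m} be symmetric positive definite. For each integer p ≥ m, let L_p, L̂_p ∈ ℝ^{p×m} and Ĥ_p ∈ ℝ^{m×m} satisfy: (i) (1/p) L̂_pᵀ L̂_p = I_m for all p; (ii) (1/p) L_pᵀ L_p → V as p → ∞; and (iii) (1/p) ‖L̂_p − L_p Ĥ_p‖_F² → 0 as p → ∞. Then Ĥ_pᵀ V Ĥ_p → I_m as p → ∞. -/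
open Matrix Filter Topology

lemma frobSq_nonneg' {a b : ℕ} (M : Matrix (Fin a) (Fin b) ℝ) : 0 ≤ frobSq M :=
  Finset.sum_nonneg fun _ _ => Finset.sum_nonneg fun _ _ => sq_nonneg _

lemma abs_sum_mul_le' {n : ℕ} (f g : Fin n → ℝ) :
    |∑ k, f k * g k| ≤ Real.sqrt (∑ k, f k ^ 2) * Real.sqrt (∑ k, g k ^ 2) := by
  rw [← Real.sqrt_sq_eq_abs, ← Real.sqrt_mul (by positivity)]
  exact Real.sqrt_le_sqrt (Finset.sum_mul_sq_le_sq_mul_sq _ _ _)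

lemma entry_sum' {m : ℕ} (X Hp : Matrix (Fin m) (Fin m) ℝ) (i j : Fin m) :
    (Hpᵀ * X * Hp) i j = ∑ k, ∑ l, Hp k i * X k l * Hp l j := by
  rw [Matrix.mul_apply]
  simp only [Matrix.mul_apply, Matrix.transpose_apply, Finset.sum_mul]
  rw [Finset.sum_comm]

lemma entry_eq' {m p : ℕ} (Lp : Matrix (Fin p) (Fin m) ℝ) (Hp : Matrix (Fin m) (Fin m) ℝ)
    (q : ℝ) (i j : Fin m) :
    (Hpᵀ * (q • (Lpᵀ * Lp)) * Hp) i j = q * ∑ k, (Lp * Hp) k i * (Lp * Hp) k j := by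
  have h : Hpᵀ * (q • (Lpᵀ * Lp)) * Hp = q • ((Lp * Hp)ᵀ * (Lp * Hp)) := by
    rw [Matrix.mul_smul, Matrix.smul_mul]
    congr 1
    rw [Matrix.transpose_mul, Matrix.mul_assoc Hpᵀ Lpᵀ (Lp * Hp),
      ← Matrix.mul_assoc Lpᵀ Lp Hp, ← Matrix.mul_assoc Hpᵀ (Lpᵀ * Lp) Hp]
  rw [h, Matrix.smul_apply, Matrix.mul_apply, smul_eq_mul]
  congr 1

lemma pert_bound' {m : ℕ} (x y : Fin m → ℝ) (Dm : Fin m → Fin m → ℝ) (dp : ℝ)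
    (hD : ∀ k l, |Dm k l| ≤ dp) :
    |∑ k, ∑ l, x k * Dm k l * y l| ≤ dp * (∑ k, |x k|) * (∑ l, |y l|) := by
  calc |∑ k, ∑ l, x k * Dm k l * y l|
      ≤ ∑ k, |∑ l, x k * Dm k l * y l| := Finset.abs_sum_le_sum_abs _ _
    _ ≤ ∑ k, ∑ l, |x k * Dm k l * y l| :=
        Finset.sum_le_sum fun k _ => Finset.abs_sum_le_sum_abs _ _
    _ ≤ ∑ k, ∑ l, |x k| * dp * |y l| := by
        refine Finset.sum_le_sum fun k _ => Finset.sum_le_sum fun l _ => ?_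
        rw [abs_mul, abs_mul]
        have h0 : 0 ≤ dp := le_trans (abs_nonneg _) (hD k l)
        have h1 := hD k l
        exact mul_le_mul_of_nonneg_right
          (mul_le_mul_of_nonneg_left h1 (abs_nonneg _)) (abs_nonneg _)
    _ = dp * (∑ k, |x k|) * (∑ l, |y l|) := by
        have hin : ∀ k : Fin m, ∑ l, |x k| * dp * |y l| = |x k| * dp * ∑ l, |y l| :=
          fun k => by rw [← Finset.mul_sum]
        simp only [hin]
        rw [← Finset.sum_mul, ← Finset.sum_mul]
        ring

lemma coercive' {m : ℕ} (hm : 1 ≤ m) (V : Matrix (Fin m) (Fin m) ℝ) (hV : V.PosDef) :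
    ∃ c : ℝ, 0 < c ∧ ∀ x : Fin m → ℝ, c * (∑ k, x k ^ 2) ≤ ∑ k, ∑ l, x k * V k l * x l := by
  classical
  set f : EuclideanSpace ℝ (Fin m) → ℝ := fun x => ∑ k, ∑ l, x k * V k l * x l with hf_def
  have hf : Continuous f := by
    apply continuous_finset_sum; intro k _
    apply continuous_finset_sum; intro l _
    exact ((EuclideanSpace.proj k).continuous.mul continuous_const).mul
      (EuclideanSpace.proj l).continuous
  have hpos : ∀ x : EuclideanSpace ℝ (Fin m), x ≠ 0 → 0 < f x := by
    intro x hx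
    have h := hV.dotProduct_mulVec_pos (x := WithLp.ofLp x) (by simpa using hx)
    have heq : (star (WithLp.ofLp x)) ⬝ᵥ (V *ᵥ WithLp.ofLp x) = f x := by
      simp only [hf_def, dotProduct, Matrix.mulVec, star_trivial, Finset.mul_sum]
      exact Finset.sum_congr rfl fun k _ => Finset.sum_congr rfl fun l _ => by ring
    rw [heq] at h
    simpa using h
  have hne : (Metric.sphere (0 : EuclideanSpace ℝ (Fin m)) 1).Nonempty := by
    refine ⟨EuclideanSpace.single ⟨0, hm⟩ 1, ?_⟩
    simp [EuclideanSpace.norm_single]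
  obtain ⟨x₀, hx₀mem, hx₀min⟩ :=
    (isCompact_sphere (0 : EuclideanSpace ℝ (Fin m)) 1).exists_isMinOn hne hf.continuousOn
  have hx₀norm : ‖x₀‖ = 1 := by simpa using hx₀mem
  have hx₀ne : x₀ ≠ 0 := by
    intro h; rw [h] at hx₀norm; simp at hx₀norm
  refine ⟨f x₀, hpos x₀ hx₀ne, ?_⟩
  intro x
  by_cases hx : x = 0
  · subst hx; simp
  set y : EuclideanSpace ℝ (Fin m) := (EuclideanSpace.equiv (Fin m) ℝ).symm x with hy_def
  have hyx : ∀ k, y k = x k := fun k => rfl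
  have hxE : y ≠ 0 := by
    intro h
    apply hx
    funext k
    rw [← hyx k, h]; rfl
  set r : ℝ := ‖y‖ with hr_def
  have hr : 0 < r := norm_pos_iff.mpr hxE
  have hr2 : r ^ 2 = ∑ k, x k ^ 2 := by
    rw [hr_def, EuclideanSpace.norm_eq, Real.sq_sqrt (by positivity)]
    simp [hyx, Real.norm_eq_abs, sq_abs]
  set z : EuclideanSpace ℝ (Fin m) := r⁻¹ • y with hz_def
  have hzmem : z ∈ Metric.sphere (0 : EuclideanSpace ℝ (Fin m)) 1 := by
    rw [mem_sphere_zero_iff_norm, hz_def, norm_smul, Real.norm_eq_abs,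
      abs_of_pos (inv_pos.mpr hr)]
    field_simp
    exact hr_def.symm
  have hmin : f x₀ ≤ f z := hx₀min hzmem
  have hfz : f z = r⁻¹ ^ 2 * (∑ k, ∑ l, x k * V k l * x l) := by
    simp only [hf_def, Finset.mul_sum]
    refine Finset.sum_congr rfl fun k _ => Finset.sum_congr rfl fun l _ => ?_
    have hzk : z k = r⁻¹ * x k := rfl
    have hzl : z l = r⁻¹ * x l := rfl
    rw [hzk, hzl]; ring
  have h1 : f x₀ * r ^ 2 ≤ f z * r ^ 2 :=
    mul_le_mul_of_nonneg_right hmin (sq_nonneg r)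
  rw [hfz] at h1
  have : r⁻¹ ^ 2 * (∑ k, ∑ l, x k * V k l * x l) * r ^ 2 = ∑ k, ∑ l, x k * V k l * x l := by
    field_simp
  rw [this, hr2] at h1
  exact h1


lemma claim1' {m p : ℕ} (hq : 0 < (p : ℝ))
    (N Mx : Matrix (Fin p) (Fin m) ℝ)
    (hN : ((p : ℝ))⁻¹ • (Nᵀ * N) = (1 : Matrix (Fin m) (Fin m) ℝ)) (i j : Fin m) :
    |((p : ℝ))⁻¹ * ∑ k, Mx k i * Mx k j - (1 : Matrix (Fin m) (Fin m) ℝ) i j|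
      ≤ 2 * Real.sqrt (((p : ℝ))⁻¹ * frobSq (N - Mx))
        + ((p : ℝ))⁻¹ * frobSq (N - Mx) := by
  set q : ℝ := (p : ℝ) with hq_def
  set W : Matrix (Fin p) (Fin m) ℝ := N - Mx with hW_def
  set ε : ℝ := q⁻¹ * frobSq W with hε_def
  have hε0 : 0 ≤ ε := mul_nonneg (by positivity) (frobSq_nonneg' _)
  have hqne : q ≠ 0 := ne_of_gt hq
  have hn : ∀ a b : Fin m, ∑ k, N k a * N k b = q * (1 : Matrix (Fin m) (Fin m) ℝ) a b := by
    intro a b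
    have h := congrFun (congrFun hN a) b
    simp only [Matrix.smul_apply, Matrix.mul_apply, Matrix.transpose_apply,
      smul_eq_mul] at h
    rw [← h]
    field_simp
  have hni : ∀ a : Fin m, ∑ k, N k a ^ 2 = q := by
    intro a
    have := hn a a
    simp only [Matrix.one_apply_eq, mul_one] at this
    rw [← this]
    exact Finset.sum_congr rfl fun k _ => (sq (N k a)).symm ▸ by ring
  have hw : ∀ a : Fin m, ∑ k, W k a ^ 2 ≤ q * ε := by
    intro a
    have h1 : q * ε = frobSq W := by rw [hε_def]; field_simp
    rw [h1]
    unfold frobSq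
    exact Finset.sum_le_sum fun k _ =>
      Finset.single_le_sum (f := fun b => W k b ^ 2) (fun b _ => sq_nonneg _)
        (Finset.mem_univ a)
  have hMx : ∀ (k : Fin p) (a : Fin m), Mx k a = N k a - W k a := by
    intro k a; simp [hW_def]
  have hexp : ∑ k, Mx k i * Mx k j
      = (∑ k, N k i * N k j) - (∑ k, N k i * W k j) - (∑ k, W k i * N k j)
        + ∑ k, W k i * W k j := by
    have h : ∀ k, Mx k i * Mx k j
        = (N k i * N k j - N k i * W k j) - (W k i * N k j - W k i * W k j) := by
      intro k; rw [hMx k i, hMx k j]; ring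
    simp only [h, Finset.sum_sub_distrib]
    ring
  -- bounds
  have hb1 : |∑ k, N k i * W k j| ≤ q * Real.sqrt ε := by
    calc |∑ k, N k i * W k j|
        ≤ Real.sqrt (∑ k, N k i ^ 2) * Real.sqrt (∑ k, W k j ^ 2) := abs_sum_mul_le' _ _
      _ ≤ Real.sqrt q * Real.sqrt (q * ε) := by
          gcongr
          · exact le_of_eq (hni i)
          · exact hw j
      _ = q * Real.sqrt ε := by
          rw [Real.sqrt_mul hq.le, ← mul_assoc, Real.mul_self_sqrt hq.le]
  have hb2 : |∑ k, W k i * N k j| ≤ q * Real.sqrt ε := by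
    calc |∑ k, W k i * N k j|
        ≤ Real.sqrt (∑ k, W k i ^ 2) * Real.sqrt (∑ k, N k j ^ 2) := abs_sum_mul_le' _ _
      _ ≤ Real.sqrt (q * ε) * Real.sqrt q := by
          gcongr
          · exact hw i
          · exact le_of_eq (hni j)
      _ = q * Real.sqrt ε := by
          rw [Real.sqrt_mul hq.le, mul_comm, ← mul_assoc, Real.mul_self_sqrt hq.le]
  have hb3 : |∑ k, W k i * W k j| ≤ q * ε := by
    calc |∑ k, W k i * W k j|
        ≤ Real.sqrt (∑ k, W k i ^ 2) * Real.sqrt (∑ k, W k j ^ 2) := abs_sum_mul_le' _ _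
      _ ≤ Real.sqrt (q * ε) * Real.sqrt (q * ε) := by
          gcongr
          · exact hw i
          · exact hw j
      _ = q * ε := Real.mul_self_sqrt (by positivity)
  -- combine
  have hkey : |(∑ k, Mx k i * Mx k j) - q * (1 : Matrix (Fin m) (Fin m) ℝ) i j|
      ≤ 2 * (q * Real.sqrt ε) + q * ε := by
    rw [hexp, hn i j]
    have : q * (1 : Matrix (Fin m) (Fin m) ℝ) i j - (∑ k, N k i * W k j)
        - (∑ k, W k i * N k j) + (∑ k, W k i * W k j)
        - q * (1 : Matrix (Fin m) (Fin m) ℝ) i j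
        = -(∑ k, N k i * W k j) - (∑ k, W k i * N k j) + (∑ k, W k i * W k j) := by ring
    rw [this]
    have t1 := abs_le.mp hb1
    have t2 := abs_le.mp hb2
    have t3 := abs_le.mp hb3
    rw [abs_le]
    constructor <;> nlinarith [t1.1, t1.2, t2.1, t2.2, t3.1, t3.2]
  have hfinal : |q⁻¹ * (∑ k, Mx k i * Mx k j) - (1 : Matrix (Fin m) (Fin m) ℝ) i j|
      ≤ 2 * Real.sqrt ε + ε := by
    have h1 : q⁻¹ * (∑ k, Mx k i * Mx k j) - (1 : Matrix (Fin m) (Fin m) ℝ) i j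
        = q⁻¹ * ((∑ k, Mx k i * Mx k j) - q * (1 : Matrix (Fin m) (Fin m) ℝ) i j) := by
      field_simp
    rw [h1, abs_mul, abs_of_pos (inv_pos.mpr hq)]
    calc q⁻¹ * |(∑ k, Mx k i * Mx k j) - q * (1 : Matrix (Fin m) (Fin m) ℝ) i j|
        ≤ q⁻¹ * (2 * (q * Real.sqrt ε) + q * ε) := by
          exact mul_le_mul_of_nonneg_left hkey (by positivity)
      _ = 2 * Real.sqrt ε + ε := by field_simp
  exact hfinal


/-- If `(1/p)L̂ᵀL̂ = I_m`, `(1/p)LᵀL → V`, and `(1/p)‖L̂ − LĤ‖_F² → 0`, then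
`ĤᵀVĤ → I_m` (entrywise). -/
theorem stmt19 (m : ℕ) (hm : 1 ≤ m)
    (V : Matrix (Fin m) (Fin m) ℝ) (hV : V.PosDef)
    (L Lhat : ∀ p : ℕ, Matrix (Fin p) (Fin m) ℝ)
    (H : ℕ → Matrix (Fin m) (Fin m) ℝ)
    (h1 : ∀ p : ℕ, m ≤ p → ((p : ℝ))⁻¹ • ((Lhat p)ᵀ * Lhat p) = (1 : Matrix (Fin m) (Fin m) ℝ))
    (h2 : ∀ i j, Tendsto (fun p : ℕ => ((p : ℝ))⁻¹ * ((L p)ᵀ * L p) i j) atTop (𝓝 (V i j)))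
    (h3 : Tendsto (fun p : ℕ => ((p : ℝ))⁻¹ * frobSq (Lhat p - L p * H p)) atTop (𝓝 0)) :
    ∀ i j, Tendsto (fun p : ℕ => ((H p)ᵀ * V * H p) i j) atTop
      (𝓝 ((1 : Matrix (Fin m) (Fin m) ℝ) i j)) := by
  intro i j
  obtain ⟨c, hc, hcoer⟩ := coercive' hm V hV
  set e : ℕ → ℝ := fun p => ((p : ℝ))⁻¹ * frobSq (Lhat p - L p * H p) with he_def
  have he0 : ∀ p : ℕ, 0 ≤ e p :=
    fun p => mul_nonneg (by positivity) (frobSq_nonneg' _)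
  have hsq : Tendsto (fun p => Real.sqrt (e p)) atTop (𝓝 0) := by
    have h := (Real.continuous_sqrt.tendsto 0).comp h3
    simpa [Function.comp_def, Real.sqrt_zero] using h
  set d : ℕ → ℝ := fun p => ∑ k : Fin m, ∑ l : Fin m,
      |((p : ℝ))⁻¹ * ((L p)ᵀ * L p) k l - V k l| with hd_def
  have hd : Tendsto d atTop (𝓝 0) := by
    have h : ∀ k l : Fin m, Tendsto
        (fun p : ℕ => |((p : ℝ))⁻¹ * ((L p)ᵀ * L p) k l - V k l|) atTop (𝓝 0) := by
      intro k l
      have := ((h2 k l).sub (tendsto_const_nhds (x := V k l))).abs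
      simpa using this
    have := tendsto_finset_sum (Finset.univ : Finset (Fin m))
      (fun k _ => tendsto_finset_sum (Finset.univ : Finset (Fin m)) (fun l _ => h k l))
    simpa using this
  have hd0 : ∀ p, 0 ≤ d p := fun p =>
    Finset.sum_nonneg fun _ _ => Finset.sum_nonneg fun _ _ => abs_nonneg _
  have hdentry : ∀ (p : ℕ) (k l : Fin m),
      |((p : ℝ))⁻¹ * ((L p)ᵀ * L p) k l - V k l| ≤ d p := by
    intro p k l
    calc |((p : ℝ))⁻¹ * ((L p)ᵀ * L p) k l - V k l|
        ≤ ∑ l' : Fin m, |((p : ℝ))⁻¹ * ((L p)ᵀ * L p) k l' - V k l'| :=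
          Finset.single_le_sum (f := fun l' => |((p : ℝ))⁻¹ * ((L p)ᵀ * L p) k l' - V k l'|)
            (fun _ _ => abs_nonneg _) (Finset.mem_univ l)
      _ ≤ d p :=
          Finset.single_le_sum
            (f := fun k' => ∑ l' : Fin m, |((p : ℝ))⁻¹ * ((L p)ᵀ * L p) k' l' - V k' l'|)
            (fun _ _ => Finset.sum_nonneg fun _ _ => abs_nonneg _) (Finset.mem_univ k)
  have h0 : Tendsto (fun p => 2 * Real.sqrt (e p) + e p) atTop (𝓝 0) := by
    have := (hsq.const_mul 2).add h3
    simpa using this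
  have hEe : ∀ᶠ p in atTop, 2 * Real.sqrt (e p) + e p ≤ 1 :=
    (h0.eventually_lt_const one_pos).mono fun p hp => hp.le
  have hEd : ∀ᶠ p in atTop, (m : ℝ) * d p ≤ c / 2 := by
    have hmd : Tendsto (fun p => (m : ℝ) * d p) atTop (𝓝 0) := by
      have := hd.const_mul (m : ℝ); simpa using this
    exact (hmd.eventually_lt_const (by positivity)).mono fun p hp => hp.le
  have key : ∀ᶠ p in atTop,
      |((H p)ᵀ * V * H p) i j - (1 : Matrix (Fin m) (Fin m) ℝ) i j|
        ≤ d p * ((m : ℝ) * Real.sqrt (4 / c)) * ((m : ℝ) * Real.sqrt (4 / c))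
          + (2 * Real.sqrt (e p) + e p) := by
    filter_upwards [eventually_ge_atTop m, eventually_ge_atTop 1, hEe, hEd]
      with p hpm hp1 hee hed
    have hq : 0 < (p : ℝ) := by exact_mod_cast Nat.lt_of_lt_of_le Nat.zero_lt_one hp1
    -- claim 1
    have hΦ : ∀ a b : Fin m,
        |((p : ℝ))⁻¹ * (∑ k, (L p * H p) k a * (L p * H p) k b)
          - (1 : Matrix (Fin m) (Fin m) ℝ) a b| ≤ 2 * Real.sqrt (e p) + e p := by
      intro a b
      have := claim1' hq (Lhat p) (L p * H p) (h1 p hpm) a b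
      have heq : ((p : ℝ))⁻¹ * frobSq (Lhat p - L p * H p) = e p := rfl
      rwa [heq] at this
    -- conversion between sum forms
    have hconv : ∀ a b : Fin m,
        ∑ k, ∑ l, H p k a * (((p : ℝ))⁻¹ * ((L p)ᵀ * L p) k l) * H p l b
          = ((p : ℝ))⁻¹ * ∑ k, (L p * H p) k a * (L p * H p) k b := by
      intro a b
      have t1 := entry_sum' (((p : ℝ))⁻¹ • ((L p)ᵀ * L p)) (H p) a b
      simp only [Matrix.smul_apply, smul_eq_mul] at t1
      have t2 := entry_eq' (L p) (H p) ((p : ℝ))⁻¹ a b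
      rw [← t1, t2]
    -- splitting V
    have hsplitV : ∀ a b : Fin m,
        ∑ k, ∑ l, H p k a * V k l * H p l b
          = (∑ k, ∑ l, H p k a * (((p : ℝ))⁻¹ * ((L p)ᵀ * L p) k l) * H p l b)
            + ∑ k, ∑ l, H p k a * (V k l - ((p : ℝ))⁻¹ * ((L p)ᵀ * L p) k l) * H p l b := by
      intro a b
      rw [← Finset.sum_add_distrib]
      refine Finset.sum_congr rfl fun k _ => ?_
      rw [← Finset.sum_add_distrib]
      exact Finset.sum_congr rfl fun l _ => by ring
    have hDabs : ∀ k l : Fin m,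
        |V k l - ((p : ℝ))⁻¹ * ((L p)ᵀ * L p) k l| ≤ d p := by
      intro k l
      rw [abs_sub_comm]
      exact hdentry p k l
    -- column norm bound
    have hcol : ∀ a : Fin m, ∑ k, H p k a ^ 2 ≤ 4 / c := by
      intro a
      set x : Fin m → ℝ := fun k => H p k a with hx_def
      have hco : c * ∑ k, x k ^ 2 ≤ ∑ k, ∑ l, x k * V k l * x l := hcoer x
      have hxe : ∀ k, x k = H p k a := fun k => rfl
      have hP : |∑ k, ∑ l, H p k a * (V k l - ((p : ℝ))⁻¹ * ((L p)ᵀ * L p) k l) * H p l a|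
          ≤ d p * (∑ k, |H p k a|) * (∑ l, |H p l a|) :=
        pert_bound' _ _ _ _ hDabs
      have hcs : (∑ k, |H p k a|) * (∑ l, |H p l a|) ≤ (m : ℝ) * ∑ k, H p k a ^ 2 := by
        have h := Finset.sum_mul_sq_le_sq_mul_sq Finset.univ (fun k => |H p k a|)
          (fun _ => (1 : ℝ))
        simp only [mul_one, one_pow, sq_abs, Finset.sum_const, Finset.card_univ,
          Fintype.card_fin, nsmul_eq_mul] at h
        calc (∑ k, |H p k a|) * (∑ l, |H p l a|) = (∑ k, |H p k a|) ^ 2 := by ring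
          _ ≤ (∑ k, H p k a ^ 2) * (m : ℝ) := h
          _ = (m : ℝ) * ∑ k, H p k a ^ 2 := by ring
      have hPhaa : |((p : ℝ))⁻¹ * (∑ k, (L p * H p) k a * (L p * H p) k a)
          - (1 : Matrix (Fin m) (Fin m) ℝ) a a| ≤ 2 * Real.sqrt (e p) + e p := hΦ a a
      rw [Matrix.one_apply_eq] at hPhaa
      -- assemble
      have hsum : ∑ k, ∑ l, x k * V k l * x l
          = ((p : ℝ))⁻¹ * (∑ k, (L p * H p) k a * (L p * H p) k a)
            + ∑ k, ∑ l, H p k a * (V k l - ((p : ℝ))⁻¹ * ((L p)ᵀ * L p) k l) * H p l a := by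
        rw [show (∑ k, ∑ l, x k * V k l * x l) = ∑ k, ∑ l, H p k a * V k l * H p l a from rfl,
          hsplitV a a, hconv a a]
      have habs1 := abs_le.mp hPhaa
      have habs2 := abs_le.mp hP
      have hdp0 : 0 ≤ d p := hd0 p
      have hS0 : 0 ≤ ∑ k, x k ^ 2 := Finset.sum_nonneg fun _ _ => sq_nonneg _
      have hxS : (∑ k, x k ^ 2) = ∑ k, H p k a ^ 2 := rfl
      rw [le_div_iff₀ hc]
      have hmd' : d p * ((∑ k, |H p k a|) * (∑ l, |H p l a|))
          ≤ d p * ((m : ℝ) * ∑ k, H p k a ^ 2) := by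
        exact mul_le_mul_of_nonneg_left hcs hdp0
      nlinarith [habs1.1, habs1.2, habs2.1, habs2.2, hco, hsum, hee, hed, hS0, hmd']
    -- entrywise bound on H
    have hHbd : ∀ (k a : Fin m), |H p k a| ≤ Real.sqrt (4 / c) := by
      intro k a
      apply Real.abs_le_sqrt
      calc H p k a ^ 2 ≤ ∑ k', H p k' a ^ 2 :=
            Finset.single_le_sum (f := fun k' => H p k' a ^ 2)
              (fun _ _ => sq_nonneg _) (Finset.mem_univ k)
        _ ≤ 4 / c := hcol a
    have hsumHbd : ∀ a : Fin m, (∑ k, |H p k a|) ≤ (m : ℝ) * Real.sqrt (4 / c) := by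
      intro a
      calc (∑ k, |H p k a|) ≤ ∑ _k : Fin m, Real.sqrt (4 / c) :=
            Finset.sum_le_sum fun k _ => hHbd k a
        _ = (m : ℝ) * Real.sqrt (4 / c) := by
            simp [Finset.sum_const, Finset.card_univ, mul_comm]
    -- final assembly
    have hVij : ((H p)ᵀ * V * H p) i j = ∑ k, ∑ l, H p k i * V k l * H p l j :=
      entry_sum' V (H p) i j
    have hPij : |∑ k, ∑ l, H p k i * (V k l - ((p : ℝ))⁻¹ * ((L p)ᵀ * L p) k l) * H p l j|
        ≤ d p * ((m : ℝ) * Real.sqrt (4 / c)) * ((m : ℝ) * Real.sqrt (4 / c)) := by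
      calc |∑ k, ∑ l, H p k i * (V k l - ((p : ℝ))⁻¹ * ((L p)ᵀ * L p) k l) * H p l j|
          ≤ d p * (∑ k, |H p k i|) * (∑ l, |H p l j|) := pert_bound' _ _ _ _ hDabs
        _ ≤ d p * ((m : ℝ) * Real.sqrt (4 / c)) * ((m : ℝ) * Real.sqrt (4 / c)) := by
            have h1' := hsumHbd i
            have h2' := hsumHbd j
            have hb0 : 0 ≤ ∑ k, |H p k i| := Finset.sum_nonneg fun _ _ => abs_nonneg _
            have hb0' : 0 ≤ ∑ l, |H p l j| := Finset.sum_nonneg fun _ _ => abs_nonneg _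
            have hd0' := hd0 p
            have hM0 : (0:ℝ) ≤ (m : ℝ) * Real.sqrt (4 / c) := by positivity
            have t := mul_le_mul h1' h2' hb0' hM0
            calc d p * (∑ k, |H p k i|) * (∑ l, |H p l j|)
                = d p * ((∑ k, |H p k i|) * (∑ l, |H p l j|)) := by ring
              _ ≤ d p * (((m : ℝ) * Real.sqrt (4 / c)) * ((m : ℝ) * Real.sqrt (4 / c))) :=
                  mul_le_mul_of_nonneg_left t hd0'
              _ = d p * ((m : ℝ) * Real.sqrt (4 / c)) * ((m : ℝ) * Real.sqrt (4 / c)) := by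
                  ring
    have hgoal : ((H p)ᵀ * V * H p) i j - (1 : Matrix (Fin m) (Fin m) ℝ) i j
        = (∑ k, ∑ l, H p k i * (V k l - ((p : ℝ))⁻¹ * ((L p)ᵀ * L p) k l) * H p l j)
          + (((p : ℝ))⁻¹ * (∑ k, (L p * H p) k i * (L p * H p) k j)
              - (1 : Matrix (Fin m) (Fin m) ℝ) i j) := by
      rw [hVij, hsplitV i j, hconv i j]; ring
    rw [hgoal]
    calc |_ + _| ≤ _ + _ := abs_add_le _ _
      _ ≤ d p * ((m : ℝ) * Real.sqrt (4 / c)) * ((m : ℝ) * Real.sqrt (4 / c))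
          + (2 * Real.sqrt (e p) + e p) := add_le_add hPij (hΦ i j)
  -- conclude
  have hg : Tendsto (fun p : ℕ =>
      d p * ((m : ℝ) * Real.sqrt (4 / c)) * ((m : ℝ) * Real.sqrt (4 / c))
        + (2 * Real.sqrt (e p) + e p)) atTop (𝓝 0) := by
    have hterm : Tendsto (fun p : ℕ =>
        d p * ((m : ℝ) * Real.sqrt (4 / c)) * ((m : ℝ) * Real.sqrt (4 / c))) atTop (𝓝 0) := by
      have := (hd.mul_const ((m : ℝ) * Real.sqrt (4 / c))).mul_const
        ((m : ℝ) * Real.sqrt (4 / c))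
      simpa using this
    have := hterm.add h0
    simpa using this
  have hz := squeeze_zero_norm'
    (f := fun p : ℕ => ((H p)ᵀ * V * H p) i j - (1 : Matrix (Fin m) (Fin m) ℝ) i j)
    (by filter_upwards [key] with p hp; simpa [Real.norm_eq_abs] using hp) hg
  exact tendsto_sub_nhds_zero_iff.mp hz
end
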